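/- arXiv:2605.01103 — 11 statements merged into one kernel-verified Lean document; each statement's English description precedes it below -/
import Mathlib

section
/- Let ħ > 0, R > 0, and let A be a real symmetric positive definite n×n matrix. The ħ-polar dual of the ellipsoid {x ∈ ℝⁿ : Ax·x ≤ R²} is the ellipsoid {p ∈ ℝⁿ : A⁻¹p·p ≤ (ħ/R)²}. In particular, {x : Ax·x ≤ ħ}^ħ = {p : A⁻¹p·p ≤ ħ}. -/
open Matrix

noncomputable section

/-- The `ℏ`-polar dual of a set `X ⊆ ℝⁿ`:
`X^ℏ = {p : p ⬝ x ≤ ℏ for all x ∈ X}`. -/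
def polarDual (ℏ : ℝ) {n : ℕ} (X : Set (Fin n → ℝ)) : Set (Fin n → ℝ) :=
  {p | ∀ x ∈ X, p ⬝ᵥ x ≤ ℏ}

lemma cs_aux {n : ℕ} {M : Matrix (Fin n) (Fin n) ℝ} (hM : M.PosSemidef)
    (x y : Fin n → ℝ) :
    (M.mulVec x ⬝ᵥ y) ^ 2 ≤ (M.mulVec x ⬝ᵥ x) * (M.mulVec y ⬝ᵥ y) := by
  have hsym : ∀ u v : Fin n → ℝ, M.mulVec u ⬝ᵥ v = M.mulVec v ⬝ᵥ u := by
    intro u v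
    rw [dotProduct_comm, dotProduct_mulVec, ← Matrix.mulVec_transpose]
    have h : Mᵀ = M := by simpa [Matrix.IsHermitian] using hM.isHermitian
    rw [h]
  have key : ∀ t : ℝ, 0 ≤ (M.mulVec y ⬝ᵥ y) * (t * t)
      + (2 * (M.mulVec x ⬝ᵥ y)) * t + (M.mulVec x ⬝ᵥ x) := by
    intro t
    have h0 := hM.dotProduct_mulVec_nonneg (x + t • y)
    have : star (x + t • y) ⬝ᵥ M.mulVec (x + t • y) =
        (M.mulVec y ⬝ᵥ y) * (t * t) + (2 * (M.mulVec x ⬝ᵥ y)) * t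
          + (M.mulVec x ⬝ᵥ x) := by
      have h1 : M.mulVec y ⬝ᵥ x = M.mulVec x ⬝ᵥ y := hsym y x
      simp only [star_trivial, mulVec_add, mulVec_smul, add_dotProduct,
        dotProduct_add, smul_dotProduct, dotProduct_smul, smul_eq_mul]
      rw [dotProduct_comm x (M.mulVec x), dotProduct_comm x (M.mulVec y),
        dotProduct_comm y (M.mulVec x), dotProduct_comm y (M.mulVec y), h1]
      ring
    rw [this] at h0
    exact h0
  have hd := discrim_le_zero key
  rw [discrim] at hd
  nlinarith [hd]

lemma polar_ellipsoid {n : ℕ} (ℏ r : ℝ) (hℏ : 0 < ℏ) (hr : 0 < r)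
    (A : Matrix (Fin n) (Fin n) ℝ) (hA : A.PosDef) :
    polarDual ℏ {x : Fin n → ℝ | A.mulVec x ⬝ᵥ x ≤ r ^ 2}
      = {p : Fin n → ℝ | A⁻¹.mulVec p ⬝ᵥ p ≤ (ℏ / r) ^ 2} := by
  have hinv : A⁻¹.PosDef := hA.inv
  have hAinv : A * A⁻¹ = 1 := Matrix.mul_nonsing_inv A hA.det_pos.ne'.isUnit
  have hmain : ∀ p : Fin n → ℝ, A.mulVec (A⁻¹.mulVec p) = p := by
    intro p; rw [Matrix.mulVec_mulVec, hAinv, Matrix.one_mulVec]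
  ext p
  simp only [polarDual, Set.mem_setOf_eq]
  constructor
  · intro hp
    by_cases hp0 : p = 0
    · subst hp0
      simp only [Matrix.mulVec_zero, dotProduct_zero]
      positivity
    · set q : ℝ := A⁻¹.mulVec p ⬝ᵥ p with hq
      have hq0 : 0 < q := by
        have h := hinv.dotProduct_mulVec_pos hp0
        rw [hq, dotProduct_comm]
        simpa using h
      set c : ℝ := r / Real.sqrt q with hc
      have hsq : Real.sqrt q > 0 := Real.sqrt_pos.mpr hq0
      have hcq : c ^ 2 * q = r ^ 2 := by
        rw [hc, div_pow, Real.sq_sqrt hq0.le]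
        field_simp
      have hx : A.mulVec (c • A⁻¹.mulVec p) ⬝ᵥ (c • A⁻¹.mulVec p) ≤ r ^ 2 := by
        rw [Matrix.mulVec_smul, smul_dotProduct, dotProduct_smul, hmain,
          dotProduct_comm]
        rw [show c • (c • q) = c ^ 2 * q by simp [smul_eq_mul]; ring, hcq]
      have hle := hp _ hx
      have : p ⬝ᵥ (c • A⁻¹.mulVec p) = c * q := by
        rw [dotProduct_smul, smul_eq_mul, dotProduct_comm]
      rw [this] at hle
      have hcal : c * q = r * Real.sqrt q := by
        rw [hc, div_mul_eq_mul_div, div_eq_iff hsq.ne']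
        nlinarith [Real.sq_sqrt hq0.le]
      rw [hcal] at hle
      have hsle : Real.sqrt q ≤ ℏ / r := by
        rw [le_div_iff₀ hr]; linarith [hle]
      calc q = Real.sqrt q ^ 2 := (Real.sq_sqrt hq0.le).symm
        _ ≤ (ℏ / r) ^ 2 := by
            have h0 : (0:ℝ) ≤ Real.sqrt q := Real.sqrt_nonneg _
            nlinarith
  · intro hq x hx
    have hcs := cs_aux hA.posSemidef (A⁻¹.mulVec p) x
    rw [hmain] at hcs
    rw [dotProduct_comm p (A⁻¹.mulVec p)] at hcs
    have hq0 : 0 ≤ A⁻¹.mulVec p ⬝ᵥ p := by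
      by_cases hp0 : p = 0
      · simp [hp0]
      · exact le_of_lt (by simpa [dotProduct_comm] using hinv.dotProduct_mulVec_pos hp0)
    have hax0 : 0 ≤ A.mulVec x ⬝ᵥ x := by
      by_cases hx0 : x = 0
      · simp [hx0]
      · exact le_of_lt (by simpa [dotProduct_comm] using hA.dotProduct_mulVec_pos hx0)
    have hbound : (p ⬝ᵥ x) ^ 2 ≤ ℏ ^ 2 := by
      calc (p ⬝ᵥ x) ^ 2 ≤ (A⁻¹.mulVec p ⬝ᵥ p) * (A.mulVec x ⬝ᵥ x) := hcs
        _ ≤ (ℏ / r) ^ 2 * r ^ 2 := by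
            apply mul_le_mul hq hx hax0 (by positivity)
        _ = ℏ ^ 2 := by field_simp
    nlinarith [hbound, hℏ.le]

/-- The ℏ-polar dual of the ellipsoid `{x : Ax·x ≤ R²}` (with `A` symmetric positive
definite) is the ellipsoid `{p : A⁻¹p·p ≤ (ℏ/R)²}`; in particular
`{x : Ax·x ≤ ℏ}^ℏ = {p : A⁻¹p·p ≤ ℏ}`. -/
theorem statement1 (n : ℕ) (ℏ R : ℝ) (hℏ : 0 < ℏ) (hR : 0 < R)
    (A : Matrix (Fin n) (Fin n) ℝ) (hA : A.PosDef) :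
    polarDual ℏ {x : Fin n → ℝ | A.mulVec x ⬝ᵥ x ≤ R ^ 2}
        = {p : Fin n → ℝ | A⁻¹.mulVec p ⬝ᵥ p ≤ (ℏ / R) ^ 2} ∧
      polarDual ℏ {x : Fin n → ℝ | A.mulVec x ⬝ᵥ x ≤ ℏ}
        = {p : Fin n → ℝ | A⁻¹.mulVec p ⬝ᵥ p ≤ ℏ} := by
  constructor
  · exact polar_ellipsoid ℏ R hℏ hR A hA
  · have hs : (0:ℝ) < Real.sqrt ℏ := Real.sqrt_pos.mpr hℏ
    have h1 : Real.sqrt ℏ ^ 2 = ℏ := Real.sq_sqrt hℏ.le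
    have := polar_ellipsoid ℏ (Real.sqrt ℏ) hℏ hs A hA
    rw [h1] at this
    rw [this]
    have : (ℏ / Real.sqrt ℏ) ^ 2 = ℏ := by
      rw [div_pow, h1, sq, mul_div_assoc, div_self hℏ.ne', mul_one]
    rw [this]
end
end

section
/- Let ħ > 0 and let A, B be real symmetric positive definite n×n matrices. Set X_A = {x ∈ ℝⁿ : Ax·x ≤ ħ} and P_B = {p ∈ ℝⁿ : Bp·p ≤ ħ}. Then the following are equivalent: (1) X_A^ħ ⊆ P_B; (2) A⁻¹ − B is positive semidefinite (B ≤ A⁻¹ in the Löwner order); (3) every eigenvalue of the matrix AB is at most 1. -/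
open Matrix

noncomputable section

section aux
variable {n : ℕ}

lemma herm_dot_symm {A : Matrix (Fin n) (Fin n) ℝ} (hA : A.IsHermitian) (x y : Fin n → ℝ) :
    A.mulVec x ⬝ᵥ y = x ⬝ᵥ A.mulVec y := by
  rw [dotProduct_mulVec x A y, ← mulVec_transpose]
  have : Aᵀ = A := by rw [← conjTranspose_eq_transpose_of_trivial]; exact hA
  rw [this, dotProduct_comm]

lemma psd_quad_nonneg {A : Matrix (Fin n) (Fin n) ℝ} (hA : A.PosSemidef) (x : Fin n → ℝ) :
    0 ≤ A.mulVec x ⬝ᵥ x := by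
  have := hA.dotProduct_mulVec_nonneg x
  rwa [star_trivial, dotProduct_comm] at this

lemma pd_quad_pos {A : Matrix (Fin n) (Fin n) ℝ} (hA : A.PosDef) {x : Fin n → ℝ} (hx : x ≠ 0) :
    0 < A.mulVec x ⬝ᵥ x := by
  have := hA.dotProduct_mulVec_pos hx
  rwa [star_trivial, dotProduct_comm] at this

/-- Cauchy–Schwarz inequality for the bilinear form of a PSD matrix. -/
lemma psd_cauchy_schwarz {A : Matrix (Fin n) (Fin n) ℝ} (hA : A.PosSemidef)
    (u v : Fin n → ℝ) :
    (A.mulVec u ⬝ᵥ v) ^ 2 ≤ (A.mulVec u ⬝ᵥ u) * (A.mulVec v ⬝ᵥ v) := by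
  set a := A.mulVec v ⬝ᵥ v
  set b := A.mulVec u ⬝ᵥ v
  set c := A.mulVec u ⬝ᵥ u
  have key : ∀ t : ℝ, 0 ≤ a * (t * t) + (2 * b) * t + c := by
    intro t
    have h0 := psd_quad_nonneg hA (u + t • v)
    have hsymm : A.mulVec v ⬝ᵥ u = b := by
      rw [herm_dot_symm hA.1, dotProduct_comm]
    simp only [mulVec_add, mulVec_smul, dotProduct_add, add_dotProduct,
      dotProduct_smul, smul_dotProduct, smul_eq_mul] at h0
    rw [hsymm] at h0
    ring_nf
    ring_nf at h0
    linarith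
  have := discrim_le_zero (a := a) (b := 2*b) (c := c) key
  rw [discrim] at this
  nlinarith

/-- The `ℏ`-polar dual of the ellipsoid of `A` is the ellipsoid of `A⁻¹`. -/
lemma polar_eq {ℏ : ℝ} (hℏ : 0 < ℏ) {A : Matrix (Fin n) (Fin n) ℝ} (hA : A.PosDef) :
    polarDual ℏ {x : Fin n → ℝ | A.mulVec x ⬝ᵥ x ≤ ℏ}
      = {p : Fin n → ℝ | A⁻¹.mulVec p ⬝ᵥ p ≤ ℏ} := by
  have hdet : IsUnit A.det := (Matrix.isUnit_iff_isUnit_det A).mp hA.isUnit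
  have hAinv : ∀ p : Fin n → ℝ, A.mulVec (A⁻¹.mulVec p) = p := by
    intro p
    rw [mulVec_mulVec, Matrix.mul_nonsing_inv A hdet, one_mulVec]
  ext p
  simp only [polarDual, Set.mem_setOf_eq]
  constructor
  · intro hp
    by_cases hp0 : p = 0
    · simp [hp0]; positivity
    set t := A⁻¹.mulVec p ⬝ᵥ p with ht
    have htpos : 0 < t := pd_quad_pos hA.inv hp0
    set c := Real.sqrt (ℏ / t) with hc
    have hc2 : c ^ 2 = ℏ / t := Real.sq_sqrt (by positivity)
    have hcpos : 0 < c := Real.sqrt_pos.mpr (by positivity)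
    have hx : A.mulVec (c • A⁻¹.mulVec p) ⬝ᵥ (c • A⁻¹.mulVec p) ≤ ℏ := by
      rw [mulVec_smul, smul_dotProduct, dotProduct_smul, hAinv, smul_eq_mul, smul_eq_mul]
      have : p ⬝ᵥ A⁻¹.mulVec p = t := by rw [dotProduct_comm]
      rw [this]
      have : c * (c * t) = ℏ := by
        field_simp at hc2 ⊢
        nlinarith [hc2]
      linarith [this.le]
    have hpx := hp _ hx
    rw [dotProduct_smul, smul_eq_mul, dotProduct_comm] at hpx
    -- hpx : c * t ≤ ℏ
    have hct2 : (c*t)^2 = ℏ * t := by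
      have h' : c^2 * t = ℏ := by rw [hc2]; field_simp
      nlinarith [h']
    nlinarith [hct2, hpx, mul_pos hcpos htpos]
  · intro hp x hx
    have hcs := psd_cauchy_schwarz hA.posSemidef (A⁻¹.mulVec p) x
    rw [hAinv] at hcs
    have h1 : 0 ≤ p ⬝ᵥ A⁻¹.mulVec p := by
      rw [← dotProduct_comm]; exact psd_quad_nonneg hA.inv.posSemidef p
    have h2 : p ⬝ᵥ A⁻¹.mulVec p ≤ ℏ := by rw [← dotProduct_comm]; exact hp
    have h3 : 0 ≤ A.mulVec x ⬝ᵥ x := psd_quad_nonneg hA.posSemidef x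
    nlinarith [hcs]

open scoped MatrixOrder in
/-- If every eigenvalue of `A * B` is at most `1`, then `A⁻¹ - B` is PSD. -/
lemma psd_of_eig_le_one {A B : Matrix (Fin n) (Fin n) ℝ} (hA : A.PosDef) (hB : B.PosDef)
    (h : ∀ (μ : ℝ) (v : Fin n → ℝ), v ≠ 0 → (A * B).mulVec v = μ • v → μ ≤ 1) :
    (A⁻¹ - B).PosSemidef := by
  set R := CFC.sqrt A with hRdef
  have hR : R.PosSemidef := (CFC.sqrt_nonneg A).posSemidef
  have hRR : R * R = A := CFC.sqrt_mul_sqrt_self A hA.posSemidef.nonneg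
  have hdetR : IsUnit R.det := by
    have hd : R.det * R.det = A.det := by rw [← det_mul, hRR]
    have hAdet := hA.det_pos
    refine isUnit_iff_ne_zero.mpr fun h0 => ?_
    rw [h0, mul_zero] at hd
    linarith [hd ▸ hAdet]
  have hRinv1 : R * R⁻¹ = 1 := mul_nonsing_inv R hdetR
  have hRinv2 : R⁻¹ * R = 1 := nonsing_inv_mul R hdetR
  set S := R * B * R with hSdef
  have hS : S.IsHermitian := by
    show Sᴴ = S
    rw [hSdef, conjTranspose_mul, conjTranspose_mul, hR.1.eq, hB.1.eq, mul_assoc]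
  have heval : ∀ i, hS.eigenvalues i ≤ 1 := by
    intro i
    set w : Fin n → ℝ := ⇑(hS.eigenvectorBasis i) with hw
    have hw0 : w ≠ 0 := by
      intro h0
      exact hS.eigenvectorBasis.orthonormal.ne_zero i (by ext j; exact congrFun h0 j)
    have hSw : S.mulVec w = hS.eigenvalues i • w := hS.mulVec_eigenvectorBasis i
    have hv0 : R.mulVec w ≠ 0 := by
      intro h0
      apply hw0
      have := congrArg (R⁻¹.mulVec) h0
      rwa [mulVec_mulVec, hRinv2, one_mulVec, mulVec_zero] at this
    refine h _ (R.mulVec w) hv0 ?_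
    calc (A * B).mulVec (R.mulVec w) = (A * B * R).mulVec w := by rw [mulVec_mulVec]
      _ = (R * S).mulVec w := by rw [hSdef, ← hRR]; rw [mul_assoc, mul_assoc, mul_assoc]
      _ = R.mulVec (S.mulVec w) := by rw [← mulVec_mulVec]
      _ = R.mulVec (hS.eigenvalues i • w) := by rw [hSw]
      _ = hS.eigenvalues i • R.mulVec w := mulVec_smul _ _ _
  have h1S : (1 - S).PosSemidef := by
    have hdiag : Matrix.PosSemidef (diagonal (fun i => 1 - hS.eigenvalues i)) :=
      Matrix.posSemidef_diagonal_iff.mpr fun i => by linarith [heval i]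
    have hpsd := hdiag.mul_mul_conjTranspose_same
      (hS.eigenvectorUnitary : Matrix (Fin n) (Fin n) ℝ)
    have hUU : (hS.eigenvectorUnitary : Matrix (Fin n) (Fin n) ℝ)
        * star (hS.eigenvectorUnitary : Matrix (Fin n) (Fin n) ℝ) = 1 :=
      mem_unitaryGroup_iff.mp hS.eigenvectorUnitary.2
    have hspec := hS.spectral_theorem
    have hofReal : (RCLike.ofReal ∘ hS.eigenvalues : Fin n → ℝ) = hS.eigenvalues := by
      ext i; simp
    have key : 1 - S = (hS.eigenvectorUnitary : Matrix (Fin n) (Fin n) ℝ)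
        * diagonal (fun i => 1 - hS.eigenvalues i)
        * (hS.eigenvectorUnitary : Matrix (Fin n) (Fin n) ℝ)ᴴ := by
      have hdsub : (diagonal (fun i => 1 - hS.eigenvalues i) : Matrix (Fin n) (Fin n) ℝ)
          = 1 - diagonal hS.eigenvalues := by
        rw [← diagonal_one, diagonal_sub]
      rw [hdsub, mul_sub, sub_mul, mul_one, ← Matrix.star_eq_conjTranspose, hUU]
      rw [hofReal] at hspec
      rw [Unitary.conjStarAlgAut_apply] at hspec
      rw [← hspec]
    rw [key]; exact hpsd
  have hRinvH : R⁻¹ᴴ = R⁻¹ := by rw [conjTranspose_nonsing_inv, hR.1.eq]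
  have hfinal : A⁻¹ - B = R⁻¹ * (1 - S) * R⁻¹ᴴ := by
    rw [hRinvH]
    have hAinv : A⁻¹ = R⁻¹ * R⁻¹ := by rw [← hRR, Matrix.mul_inv_rev]
    rw [hAinv, hSdef, mul_sub, sub_mul, mul_one]
    congr 1
    have : R⁻¹ * (R * B * R) = B * R := by
      rw [← mul_assoc, ← mul_assoc, hRinv2, one_mul]
    rw [this, mul_assoc, hRinv1, mul_one]
  rw [hfinal]
  exact h1S.mul_mul_conjTranspose_same R⁻¹

end aux

/-- For symmetric positive definite `A`, `B` and the ellipsoids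
`X_A = {x : Ax·x ≤ ℏ}`, `P_B = {p : Bp·p ≤ ℏ}`, the following are equivalent:
(1) `X_A^ℏ ⊆ P_B`; (2) `A⁻¹ - B` is positive semidefinite (`B ≤ A⁻¹` in Löwner order);
(3) every (real) eigenvalue of `AB` is at most `1`. -/
theorem statement5 (n : ℕ) (ℏ : ℝ) (hℏ : 0 < ℏ)
    (A B : Matrix (Fin n) (Fin n) ℝ) (hA : A.PosDef) (hB : B.PosDef) :
    ((polarDual ℏ {x : Fin n → ℝ | A.mulVec x ⬝ᵥ x ≤ ℏ}
        ⊆ {p : Fin n → ℝ | B.mulVec p ⬝ᵥ p ≤ ℏ}) ↔ (A⁻¹ - B).PosSemidef) ∧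
    ((A⁻¹ - B).PosSemidef ↔
      ∀ (μ : ℝ) (v : Fin n → ℝ), v ≠ 0 → (A * B).mulVec v = μ • v → μ ≤ 1) := by
  constructor
  · rw [polar_eq hℏ hA]
    constructor
    · intro hsub
      refine PosSemidef.of_dotProduct_mulVec_nonneg (hA.inv.1.sub hB.1) fun p => ?_
      rw [star_trivial]
      have key : B.mulVec p ⬝ᵥ p ≤ A⁻¹.mulVec p ⬝ᵥ p := by
        by_cases hp0 : p = 0
        · simp [hp0]
        set t := A⁻¹.mulVec p ⬝ᵥ p with ht
        have htpos : 0 < t := pd_quad_pos hA.inv hp0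
        set c := Real.sqrt (ℏ / t) with hc
        have hc2 : c ^ 2 = ℏ / t := Real.sq_sqrt (by positivity)
        have hcpos : 0 < c := Real.sqrt_pos.mpr (by positivity)
        have hq : (c • p) ∈ {p : Fin n → ℝ | A⁻¹.mulVec p ⬝ᵥ p ≤ ℏ} := by
          simp only [Set.mem_setOf_eq]
          rw [mulVec_smul, smul_dotProduct, dotProduct_smul, smul_eq_mul, smul_eq_mul, ← ht]
          have hct : c * (c * t) = ℏ := by
            field_simp at hc2 ⊢
            nlinarith [hc2]
          linarith [hct.le]
        have hBq := hsub hq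
        simp only [Set.mem_setOf_eq] at hBq
        rw [mulVec_smul, smul_dotProduct, dotProduct_smul, smul_eq_mul, smul_eq_mul] at hBq
        -- hBq : c * (c * (B p ⬝ᵥ p)) ≤ ℏ,  c^2 = ℏ/t
        have h' : c^2 * t = ℏ := by rw [hc2]; field_simp
        nlinarith [hBq, h', htpos]
      rw [sub_mulVec, dotProduct_sub]
      have e1 : p ⬝ᵥ A⁻¹.mulVec p = A⁻¹.mulVec p ⬝ᵥ p := dotProduct_comm _ _
      have e2 : p ⬝ᵥ B.mulVec p = B.mulVec p ⬝ᵥ p := dotProduct_comm _ _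
      linarith
    · intro hpsd p hp
      simp only [Set.mem_setOf_eq] at hp ⊢
      have := psd_quad_nonneg hpsd p
      rw [sub_mulVec, sub_dotProduct] at this
      linarith
  · constructor
    · intro hpsd μ v hv0 heig
      have hdet : IsUnit A.det := (Matrix.isUnit_iff_isUnit_det A).mp hA.isUnit
      have hBv : B.mulVec v = μ • A⁻¹.mulVec v := by
        have h1 := congrArg (A⁻¹.mulVec) heig
        rwa [mulVec_mulVec, ← Matrix.mul_assoc, nonsing_inv_mul A hdet, one_mul,
          mulVec_smul] at h1
      have htpos : 0 < A⁻¹.mulVec v ⬝ᵥ v := pd_quad_pos hA.inv hv0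
      have hq := psd_quad_nonneg hpsd v
      rw [sub_mulVec, sub_dotProduct, hBv, smul_dotProduct, smul_eq_mul] at hq
      nlinarith
    · exact psd_of_eig_le_one hA hB
end
end

section
/- (Pre-Iwasawa decomposition.) Let S ∈ Sp(2n,ℝ) have n×n block form S = [[A, B],[C, D]]. Then there exist unique matrices P, L ∈ Sym(n,ℝ) with L positive definite, and a unique R ∈ Sp(2n,ℝ) ∩ O(2n,ℝ), such that S = V_{−P} M_L R. Explicitly, L = (AAᵀ + BBᵀ)^{−1/2}, P = (CAᵀ + DBᵀ)(AAᵀ + BBᵀ)⁻¹, and R = [[E, F],[−F, E]] with E = (AAᵀ + BBᵀ)^{−1/2}A and F = (AAᵀ + BBᵀ)^{−1/2}B. -/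
open Matrix

noncomputable section

lemma isSymm_of_herm' {m : Type*} [Fintype m] {M : Matrix m m ℝ} (h : M.IsHermitian) :
    M.IsSymm := by
  rw [Matrix.IsSymm, ← Matrix.conjTranspose_eq_transpose_of_trivial]; exact h

lemma posDef_of_psd_unit' {m : Type*} [Fintype m] [DecidableEq m] {M : Matrix m m ℝ}
    (h : M.PosSemidef) (hu : IsUnit M) : M.PosDef := by
  exact h.posDef_iff_isUnit.mpr hu

/-- The standard symplectic matrix `J = [[0, I],[-I, 0]]` on `ℝⁿ × ℝⁿ`. -/
def stdJ (n : ℕ) : Matrix (Fin n ⊕ Fin n) (Fin n ⊕ Fin n) ℝ :=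
  Matrix.fromBlocks 0 1 (-1) 0

/-- `S ∈ Sp(2n, ℝ)` iff `Sᵀ J S = J`. -/
def IsSymplectic {n : ℕ} (S : Matrix (Fin n ⊕ Fin n) (Fin n ⊕ Fin n) ℝ) : Prop :=
  Sᵀ * stdJ n * S = stdJ n

/-- `M_L = [[L⁻¹, 0],[0, Lᵀ]]` for `L ∈ GL(n, ℝ)`. -/
def ML {n : ℕ} (L : Matrix (Fin n) (Fin n) ℝ) :
    Matrix (Fin n ⊕ Fin n) (Fin n ⊕ Fin n) ℝ :=
  Matrix.fromBlocks L⁻¹ 0 0 Lᵀ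

/-- `V_{-P} = [[I, 0],[P, I]]` for symmetric `P`. -/
def VmP {n : ℕ} (P : Matrix (Fin n) (Fin n) ℝ) :
    Matrix (Fin n ⊕ Fin n) (Fin n ⊕ Fin n) ℝ :=
  Matrix.fromBlocks 1 0 P 1

/-- Pre-Iwasawa decomposition: every symplectic `S = [[A,B],[C,D]]` factors uniquely as
`S = V_{-P} M_L R` with `P`, `L` symmetric, `L` positive definite, and `R` a symplectic
rotation; moreover necessarily `L = (AAᵀ + BBᵀ)^{-1/2}` (i.e. `L² = (AAᵀ + BBᵀ)⁻¹`),
`P = (CAᵀ + DBᵀ)(AAᵀ + BBᵀ)⁻¹`, and `R = [[LA, LB],[-LB, LA]]`. -/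
theorem statement7 (n : ℕ) (A B C D : Matrix (Fin n) (Fin n) ℝ)
    (hS : IsSymplectic (Matrix.fromBlocks A B C D)) :
    (∃ (P L : Matrix (Fin n) (Fin n) ℝ)
        (R : Matrix (Fin n ⊕ Fin n) (Fin n ⊕ Fin n) ℝ),
      P.IsSymm ∧ L.IsSymm ∧ L.PosDef ∧ IsSymplectic R ∧ Rᵀ * R = 1 ∧
        Matrix.fromBlocks A B C D = VmP P * ML L * R) ∧
    (∀ (P L : Matrix (Fin n) (Fin n) ℝ)
        (R : Matrix (Fin n ⊕ Fin n) (Fin n ⊕ Fin n) ℝ),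
      P.IsSymm → L.IsSymm → L.PosDef → IsSymplectic R → Rᵀ * R = 1 →
      Matrix.fromBlocks A B C D = VmP P * ML L * R →
      L * L = (A * Aᵀ + B * Bᵀ)⁻¹ ∧
        P = (C * Aᵀ + D * Bᵀ) * (A * Aᵀ + B * Bᵀ)⁻¹ ∧
        R = Matrix.fromBlocks (L * A) (L * B) (-(L * B)) (L * A)) := by
  have hS' : (Matrix.fromBlocks A B C D)ᵀ * stdJ n * (Matrix.fromBlocks A B C D) = stdJ n := hS
  -- relations from SᵀJS = J
  have hJS : Matrix.fromBlocks (Aᵀ*C - Cᵀ*A) (Aᵀ*D - Cᵀ*B) (Bᵀ*C - Dᵀ*A) (Bᵀ*D - Dᵀ*B)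
      = Matrix.fromBlocks (0 : Matrix (Fin n) (Fin n) ℝ) 1 (-1) 0 := by
    rw [show (Matrix.fromBlocks (0 : Matrix (Fin n) (Fin n) ℝ) 1 (-1) 0 : _) = stdJ n from rfl,
      ← hS']
    simp only [stdJ, Matrix.fromBlocks_transpose, Matrix.fromBlocks_multiply, Matrix.mul_zero,
      Matrix.mul_one, Matrix.mul_neg, Matrix.zero_mul, Matrix.one_mul, Matrix.neg_mul,
      zero_add, add_zero, neg_zero]
    rw [Matrix.fromBlocks_inj]
    refine ⟨by abel, by abel, by abel, by abel⟩
  rw [Matrix.fromBlocks_inj] at hJS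
  obtain ⟨q1, q2, q3, q4⟩ := hJS
  have f1 : Cᵀ*A = Aᵀ*C := (sub_eq_zero.mp q1).symm
  have f2 : Cᵀ*B = Aᵀ*D - 1 := by rw [eq_sub_iff_add_eq, ← q2]; abel
  have f3 : Dᵀ*A = 1 + Bᵀ*C := by
    have h := q3; rw [sub_eq_iff_eq_add] at h; rw [h]; abel
  have f4 : Dᵀ*B = Bᵀ*D := (sub_eq_zero.mp q4).symm
  -- relations from SJSᵀ = J
  have hJJ : stdJ n * stdJ n = -1 := by
    simp only [stdJ, Matrix.fromBlocks_multiply]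
    rw [show (-1 : Matrix (Fin n ⊕ Fin n) (Fin n ⊕ Fin n) ℝ) = Matrix.fromBlocks (-1) 0 0 (-1) by
      rw [← Matrix.fromBlocks_one, Matrix.fromBlocks_neg]; simp]
    rw [Matrix.fromBlocks_inj]
    refine ⟨by simp, by simp, by simp, by simp⟩
  have hL1 : (-(stdJ n) * (Matrix.fromBlocks A B C D)ᵀ * stdJ n) * (Matrix.fromBlocks A B C D)
      = 1 := by
    calc (-(stdJ n) * (Matrix.fromBlocks A B C D)ᵀ * stdJ n) * (Matrix.fromBlocks A B C D)
        = -(stdJ n) * ((Matrix.fromBlocks A B C D)ᵀ * stdJ n * (Matrix.fromBlocks A B C D)) := by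
          noncomm_ring
      _ = -(stdJ n) * stdJ n := by rw [hS']
      _ = 1 := by rw [Matrix.neg_mul, hJJ, neg_neg]
  have hR1 := mul_eq_one_comm.mp hL1
  have hSJt : (Matrix.fromBlocks A B C D) * stdJ n * (Matrix.fromBlocks A B C D)ᵀ = stdJ n := by
    have h2 : ((Matrix.fromBlocks A B C D) *
        (-(stdJ n) * (Matrix.fromBlocks A B C D)ᵀ * stdJ n)) * stdJ n = stdJ n := by
      rw [hR1, Matrix.one_mul]
    have h3 : (Matrix.fromBlocks A B C D) * (-(stdJ n)) * (Matrix.fromBlocks A B C D)ᵀ *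
        (stdJ n * stdJ n) = stdJ n := by
      calc (Matrix.fromBlocks A B C D) * (-(stdJ n)) * (Matrix.fromBlocks A B C D)ᵀ *
          (stdJ n * stdJ n)
          = ((Matrix.fromBlocks A B C D) *
            (-(stdJ n) * (Matrix.fromBlocks A B C D)ᵀ * stdJ n)) * stdJ n := by noncomm_ring
        _ = stdJ n := h2
    rw [hJJ] at h3
    calc (Matrix.fromBlocks A B C D) * stdJ n * (Matrix.fromBlocks A B C D)ᵀ
        = (Matrix.fromBlocks A B C D) * (-(stdJ n)) * (Matrix.fromBlocks A B C D)ᵀ * (-1) := by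
          noncomm_ring
      _ = stdJ n := h3
  have hJS2 : Matrix.fromBlocks (A*Bᵀ - B*Aᵀ) (A*Dᵀ - B*Cᵀ) (C*Bᵀ - D*Aᵀ) (C*Dᵀ - D*Cᵀ)
      = Matrix.fromBlocks (0 : Matrix (Fin n) (Fin n) ℝ) 1 (-1) 0 := by
    rw [show (Matrix.fromBlocks (0 : Matrix (Fin n) (Fin n) ℝ) 1 (-1) 0 : _) = stdJ n from rfl,
      ← hSJt]
    simp only [stdJ, Matrix.fromBlocks_transpose, Matrix.fromBlocks_multiply, Matrix.mul_zero,
      Matrix.mul_one, Matrix.mul_neg, Matrix.zero_mul, Matrix.one_mul, Matrix.neg_mul,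
      zero_add, add_zero, neg_zero]
    rw [Matrix.fromBlocks_inj]
    refine ⟨by abel, by abel, by abel, by abel⟩
  rw [Matrix.fromBlocks_inj] at hJS2
  obtain ⟨p1, p2, p3, _⟩ := hJS2
  have g1 : A*Bᵀ = B*Aᵀ := sub_eq_zero.mp p1
  have g3 : D*Aᵀ = 1 + C*Bᵀ := by
    have h := p3; rw [sub_eq_iff_eq_add] at h; rw [h]; abel
  -- G = AAᵀ + BBᵀ is positive definite
  have hGsym : (A*Aᵀ + B*Bᵀ)ᵀ = A*Aᵀ + B*Bᵀ := by
    simp [Matrix.transpose_add, Matrix.transpose_mul]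
  have hGherm : (A*Aᵀ + B*Bᵀ).IsHermitian := by
    rw [Matrix.IsHermitian, Matrix.conjTranspose_eq_transpose_of_trivial]; exact hGsym
  have hGpd : (A*Aᵀ + B*Bᵀ).PosDef := by
    refine posDef_iff_dotProduct_mulVec.mpr ⟨hGherm, fun x hx => ?_⟩
    have hx' : Aᵀ *ᵥ x ≠ 0 ∨ Bᵀ *ᵥ x ≠ 0 := by
      by_contra hcon
      push_neg at hcon
      apply hx
      have hDA : (D*Aᵀ - C*Bᵀ) *ᵥ x = x := by
        rw [show D*Aᵀ - C*Bᵀ = 1 by rw [g3]; abel, Matrix.one_mulVec]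
      rw [← hDA, Matrix.sub_mulVec, ← Matrix.mulVec_mulVec, ← Matrix.mulVec_mulVec,
        hcon.1, hcon.2, Matrix.mulVec_zero, Matrix.mulVec_zero, sub_zero]
    have dot_aux : ∀ M : Matrix (Fin n) (Fin n) ℝ,
        x ⬝ᵥ ((M * Mᵀ) *ᵥ x) = (Mᵀ *ᵥ x) ⬝ᵥ (Mᵀ *ᵥ x) := by
      intro M
      rw [← Matrix.mulVec_mulVec, Matrix.dotProduct_mulVec, ← Matrix.mulVec_transpose]
    have hval : star x ⬝ᵥ ((A*Aᵀ + B*Bᵀ) *ᵥ x)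
        = (Aᵀ *ᵥ x) ⬝ᵥ (Aᵀ *ᵥ x) + (Bᵀ *ᵥ x) ⬝ᵥ (Bᵀ *ᵥ x) := by
      rw [star_trivial, Matrix.add_mulVec, dotProduct_add, dot_aux A, dot_aux B]
    rw [hval]
    have nn : ∀ v : Fin n → ℝ, 0 ≤ v ⬝ᵥ v :=
      fun v => Finset.sum_nonneg fun i _ => mul_self_nonneg _
    have pos : ∀ v : Fin n → ℝ, v ≠ 0 → 0 < v ⬝ᵥ v := fun v hv =>
      lt_of_le_of_ne (nn v) fun h => hv (dotProduct_self_eq_zero.mp h.symm)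
    rcases hx' with h | h
    · exact add_pos_of_pos_of_nonneg (pos _ h) (nn _)
    · exact add_pos_of_nonneg_of_pos (nn _) (pos _ h)
  have hGdet : IsUnit (A*Aᵀ + B*Bᵀ).det := hGpd.det_pos.ne'.isUnit
  constructor
  · -- existence
    have hGi : ((A*Aᵀ + B*Bᵀ)⁻¹).PosDef := hGpd.inv
    open scoped MatrixOrder in
    set L : Matrix (Fin n) (Fin n) ℝ := CFC.sqrt ((A*Aᵀ + B*Bᵀ)⁻¹) with hLdef
    open scoped MatrixOrder in
    have hLL : L * L = (A*Aᵀ + B*Bᵀ)⁻¹ := CFC.sqrt_mul_sqrt_self _ hGi.posSemidef.nonneg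
    open scoped MatrixOrder in
    have hLpsd : L.PosSemidef := (CFC.sqrt_nonneg _).posSemidef
    have hLt : Lᵀ = L := isSymm_of_herm' hLpsd.1
    have hLdet : IsUnit L.det := by
      have hd : L.det * L.det = ((A*Aᵀ + B*Bᵀ)⁻¹).det := by rw [← Matrix.det_mul, hLL]
      have hpos : 0 < ((A*Aᵀ + B*Bᵀ)⁻¹).det := hGi.det_pos
      have : L.det ≠ 0 := by
        intro h0; rw [h0, mul_zero] at hd; exact hpos.ne hd
      exact this.isUnit
    have hLunit : IsUnit L := (Matrix.isUnit_iff_isUnit_det _).mpr hLdet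
    have hLpd : L.PosDef := posDef_of_psd_unit' hLpsd hLunit
    have hGLL : (A*Aᵀ + B*Bᵀ) = L⁻¹ * L⁻¹ := by
      rw [← Matrix.mul_inv_rev, hLL, Matrix.nonsing_inv_nonsing_inv _ hGdet]
    have hLGL : L * (A*Aᵀ + B*Bᵀ) * L = 1 := by
      rw [hGLL, ← Matrix.mul_assoc, Matrix.mul_nonsing_inv _ hLdet, Matrix.one_mul,
        Matrix.nonsing_inv_mul _ hLdet]
    -- key commutation identity
    have keyc : (A*Cᵀ + B*Dᵀ) * (A*Aᵀ + B*Bᵀ) = (A*Aᵀ + B*Bᵀ) * (C*Aᵀ + D*Bᵀ) := by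
      calc (A*Cᵀ + B*Dᵀ) * (A*Aᵀ + B*Bᵀ)
          = A*(Cᵀ*A)*Aᵀ + A*(Cᵀ*B)*Bᵀ + B*(Dᵀ*A)*Aᵀ + B*(Dᵀ*B)*Bᵀ := by noncomm_ring
        _ = A*(Aᵀ*C)*Aᵀ + A*(Aᵀ*D - 1)*Bᵀ + B*((1 : Matrix (Fin n) (Fin n) ℝ) + Bᵀ*C)*Aᵀ
            + B*(Bᵀ*D)*Bᵀ := by rw [f1, f2, f3, f4]
        _ = (A*Aᵀ + B*Bᵀ) * (C*Aᵀ + D*Bᵀ) + (B*Aᵀ - A*Bᵀ) := by noncomm_ring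
        _ = (A*Aᵀ + B*Bᵀ) * (C*Aᵀ + D*Bᵀ) := by rw [← g1, sub_self, add_zero]
    have keyci : (A*Aᵀ + B*Bᵀ)⁻¹ * (A*Cᵀ + B*Dᵀ) = (C*Aᵀ + D*Bᵀ) * (A*Aᵀ + B*Bᵀ)⁻¹ := by
      have h5 := congrArg (fun X => (A*Aᵀ + B*Bᵀ)⁻¹ * X * (A*Aᵀ + B*Bᵀ)⁻¹) keyc
      simp only [Matrix.mul_assoc] at h5
      rw [Matrix.mul_nonsing_inv _ hGdet, Matrix.mul_one,
        ← Matrix.mul_assoc ((A*Aᵀ + B*Bᵀ)⁻¹) (A*Aᵀ + B*Bᵀ),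
        Matrix.nonsing_inv_mul _ hGdet, Matrix.one_mul] at h5
      exact h5
    have hPsym : ((C*Aᵀ + D*Bᵀ) * (A*Aᵀ + B*Bᵀ)⁻¹).IsSymm := by
      rw [Matrix.IsSymm, Matrix.transpose_mul, Matrix.transpose_nonsing_inv, hGsym,
        Matrix.transpose_add, Matrix.transpose_mul, Matrix.transpose_mul,
        Matrix.transpose_transpose, Matrix.transpose_transpose]
      exact keyci
    set R : Matrix (Fin n ⊕ Fin n) (Fin n ⊕ Fin n) ℝ :=
      Matrix.fromBlocks (L*A) (L*B) (-(L*B)) (L*A) with hRdef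
    have hEE : (L*A)*(L*A)ᵀ + (L*B)*(L*B)ᵀ = 1 := by
      rw [Matrix.transpose_mul, Matrix.transpose_mul, hLt]
      calc (L*A)*(Aᵀ*L) + (L*B)*(Bᵀ*L) = L*(A*Aᵀ + B*Bᵀ)*L := by noncomm_ring
        _ = 1 := hLGL
    have hEF : (L*A)*(L*B)ᵀ = (L*B)*(L*A)ᵀ := by
      rw [Matrix.transpose_mul, Matrix.transpose_mul, hLt]
      calc (L*A)*(Bᵀ*L) = L*(A*Bᵀ)*L := by noncomm_ring
        _ = L*(B*Aᵀ)*L := by rw [g1]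
        _ = (L*B)*(Aᵀ*L) := by noncomm_ring
    have hRRT : R * Rᵀ = 1 := by
      rw [hRdef, Matrix.fromBlocks_transpose, Matrix.fromBlocks_multiply,
        ← Matrix.fromBlocks_one, Matrix.fromBlocks_inj]
      refine ⟨hEE, ?_, ?_, ?_⟩
      · rw [Matrix.transpose_neg, Matrix.mul_neg, hEF]; abel
      · rw [Matrix.neg_mul, hEF]; abel
      · rw [Matrix.transpose_neg, Matrix.neg_mul, Matrix.mul_neg, neg_neg, ← hEE]; abel
    have hRTR : Rᵀ * R = 1 := mul_eq_one_comm.mp hRRT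
    have hRJ : stdJ n * R = R * stdJ n := by
      rw [hRdef]
      simp only [stdJ, Matrix.fromBlocks_multiply, Matrix.mul_zero, Matrix.mul_one,
        Matrix.mul_neg, Matrix.zero_mul, Matrix.one_mul, Matrix.neg_mul, zero_add, add_zero,
        neg_zero, neg_neg]
    have hRsymp : IsSymplectic R := by
      show Rᵀ * stdJ n * R = stdJ n
      rw [Matrix.mul_assoc, hRJ, ← Matrix.mul_assoc, hRTR, Matrix.one_mul]
    -- the factorization
    have hACA : (A*Cᵀ + B*Dᵀ)*A - B = (A*Aᵀ + B*Bᵀ)*C := by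
      calc (A*Cᵀ + B*Dᵀ)*A - B = A*(Cᵀ*A) + B*(Dᵀ*A) - B := by noncomm_ring
        _ = A*(Aᵀ*C) + B*((1 : Matrix (Fin n) (Fin n) ℝ) + Bᵀ*C) - B := by rw [f1, f3]
        _ = (A*Aᵀ + B*Bᵀ)*C := by noncomm_ring
    have hBDB : (A*Cᵀ + B*Dᵀ)*B + A = (A*Aᵀ + B*Bᵀ)*D := by
      calc (A*Cᵀ + B*Dᵀ)*B + A = A*(Cᵀ*B) + B*(Dᵀ*B) + A := by noncomm_ring
        _ = A*(Aᵀ*D - 1) + B*(Bᵀ*D) + A := by rw [f2, f4]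
        _ = (A*Aᵀ + B*Bᵀ)*D := by noncomm_ring
    have hC : (C*Aᵀ + D*Bᵀ) * (A*Aᵀ + B*Bᵀ)⁻¹*A - (A*Aᵀ + B*Bᵀ)⁻¹*B = C := by
      calc (C*Aᵀ + D*Bᵀ) * (A*Aᵀ + B*Bᵀ)⁻¹*A - (A*Aᵀ + B*Bᵀ)⁻¹*B
          = ((A*Aᵀ + B*Bᵀ)⁻¹*(A*Cᵀ + B*Dᵀ))*A - (A*Aᵀ + B*Bᵀ)⁻¹*B := by rw [← keyci]
        _ = (A*Aᵀ + B*Bᵀ)⁻¹*((A*Cᵀ + B*Dᵀ)*A - B) := by noncomm_ring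
        _ = (A*Aᵀ + B*Bᵀ)⁻¹*((A*Aᵀ + B*Bᵀ)*C) := by rw [hACA]
        _ = ((A*Aᵀ + B*Bᵀ)⁻¹*(A*Aᵀ + B*Bᵀ))*C := by noncomm_ring
        _ = C := by rw [Matrix.nonsing_inv_mul _ hGdet, Matrix.one_mul]
    have hD : (C*Aᵀ + D*Bᵀ) * (A*Aᵀ + B*Bᵀ)⁻¹*B + (A*Aᵀ + B*Bᵀ)⁻¹*A = D := by
      calc (C*Aᵀ + D*Bᵀ) * (A*Aᵀ + B*Bᵀ)⁻¹*B + (A*Aᵀ + B*Bᵀ)⁻¹*A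
          = ((A*Aᵀ + B*Bᵀ)⁻¹*(A*Cᵀ + B*Dᵀ))*B + (A*Aᵀ + B*Bᵀ)⁻¹*A := by rw [← keyci]
        _ = (A*Aᵀ + B*Bᵀ)⁻¹*((A*Cᵀ + B*Dᵀ)*B + A) := by noncomm_ring
        _ = (A*Aᵀ + B*Bᵀ)⁻¹*((A*Aᵀ + B*Bᵀ)*D) := by rw [hBDB]
        _ = ((A*Aᵀ + B*Bᵀ)⁻¹*(A*Aᵀ + B*Bᵀ))*D := by noncomm_ring
        _ = D := by rw [Matrix.nonsing_inv_mul _ hGdet, Matrix.one_mul]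
    have hfac : Matrix.fromBlocks A B C D
        = VmP ((C*Aᵀ + D*Bᵀ) * (A*Aᵀ + B*Bᵀ)⁻¹) * ML L * R := by
      rw [VmP, ML, hRdef, Matrix.fromBlocks_multiply, Matrix.fromBlocks_multiply]
      simp only [Matrix.one_mul, Matrix.zero_mul, Matrix.mul_zero, Matrix.mul_one,
        add_zero, zero_add, hLt]
      rw [Matrix.fromBlocks_inj]
      have hinvL : ∀ X : Matrix (Fin n) (Fin n) ℝ, L⁻¹ * (L * X) = X := fun X => by
        rw [← Matrix.mul_assoc, Matrix.nonsing_inv_mul _ hLdet, Matrix.one_mul]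
      refine ⟨(hinvL A).symm, (hinvL B).symm, ?_, ?_⟩
      · rw [Matrix.mul_assoc ((C*Aᵀ + D*Bᵀ) * (A*Aᵀ + B*Bᵀ)⁻¹), hinvL A, Matrix.mul_neg,
          ← Matrix.mul_assoc L L, hLL]
        exact hC.symm.trans (by abel)
      · rw [Matrix.mul_assoc ((C*Aᵀ + D*Bᵀ) * (A*Aᵀ + B*Bᵀ)⁻¹), hinvL B,
          ← Matrix.mul_assoc L L, hLL]
        exact hD.symm.trans (by abel)
    exact ⟨(C*Aᵀ + D*Bᵀ) * (A*Aᵀ + B*Bᵀ)⁻¹, L, R, hPsym, isSymm_of_herm' hLpsd.1, hLpd,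
      hRsymp, hRTR, hfac⟩
  · -- uniqueness
    intro P L R hP hL hLpd hRs hRo hfac
    have hLt : Lᵀ = L := hL
    have hPt : Pᵀ = P := hP
    have hLdet : IsUnit L.det := hLpd.det_pos.ne'.isUnit
    have hRRT : R * Rᵀ = 1 := mul_eq_one_comm.mp hRo
    have hRs' : Rᵀ * stdJ n * R = stdJ n := hRs
    -- compute VmP P * ML L as blocks
    have hVM : VmP P * ML L = Matrix.fromBlocks L⁻¹ 0 (P * L⁻¹) L := by
      rw [VmP, ML, Matrix.fromBlocks_multiply]
      simp [hLt]
    -- S Sᵀ equation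
    have hSSt : Matrix.fromBlocks (A*Aᵀ + B*Bᵀ) (A*Cᵀ + B*Dᵀ) (C*Aᵀ + D*Bᵀ) (C*Cᵀ + D*Dᵀ)
        = Matrix.fromBlocks (L⁻¹*L⁻¹) (L⁻¹*(L⁻¹*P)) (P*L⁻¹*L⁻¹) (P*L⁻¹*(L⁻¹*P) + L*L) := by
      have h1 : (Matrix.fromBlocks A B C D) * (Matrix.fromBlocks A B C D)ᵀ
          = (VmP P * ML L) * (VmP P * ML L)ᵀ := by
        rw [hfac]
        calc (VmP P * ML L * R) * (VmP P * ML L * R)ᵀ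
            = (VmP P * ML L) * (R * Rᵀ) * (VmP P * ML L)ᵀ := by
              rw [Matrix.transpose_mul]; noncomm_ring
          _ = (VmP P * ML L) * (VmP P * ML L)ᵀ := by rw [hRRT, Matrix.mul_one]
      rw [hVM] at h1
      have h2 : (Matrix.fromBlocks L⁻¹ 0 (P * L⁻¹) L)ᵀ
          = Matrix.fromBlocks L⁻¹ (L⁻¹*P) 0 L := by
        rw [Matrix.fromBlocks_transpose, Matrix.transpose_mul, Matrix.transpose_nonsing_inv,
          hLt, hPt, Matrix.transpose_zero]
      rw [h2, Matrix.fromBlocks_transpose, Matrix.fromBlocks_multiply,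
        Matrix.fromBlocks_multiply] at h1
      simp only [Matrix.mul_zero, Matrix.zero_mul, add_zero, zero_add] at h1
      exact h1
    rw [Matrix.fromBlocks_inj] at hSSt
    obtain ⟨h11, _, h21, _⟩ := hSSt
    have claim1 : L * L = (A*Aᵀ + B*Bᵀ)⁻¹ := by
      rw [show A*Aᵀ + B*Bᵀ = L⁻¹ * L⁻¹ from h11, Matrix.mul_inv_rev,
        Matrix.nonsing_inv_nonsing_inv _ hLdet]
    have claim2 : P = (C*Aᵀ + D*Bᵀ) * (A*Aᵀ + B*Bᵀ)⁻¹ := by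
      have haux : P*L⁻¹*L⁻¹*(L*L) = P := by
        calc P*L⁻¹*L⁻¹*(L*L) = P*L⁻¹*(L⁻¹*L)*L := by noncomm_ring
          _ = P*L⁻¹*L := by rw [Matrix.nonsing_inv_mul _ hLdet, Matrix.mul_one]
          _ = P*(L⁻¹*L) := by rw [Matrix.mul_assoc]
          _ = P := by rw [Matrix.nonsing_inv_mul _ hLdet, Matrix.mul_one]
      rw [h21, ← claim1, haux]
    -- now determine R
    have hRblocks : R = Matrix.fromBlocks R.toBlocks₁₁ R.toBlocks₁₂ R.toBlocks₂₁ R.toBlocks₂₂ :=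
      (Matrix.fromBlocks_toBlocks R).symm
    set E := R.toBlocks₁₁
    set F := R.toBlocks₁₂
    set G2 := R.toBlocks₂₁
    set H2 := R.toBlocks₂₂
    have hfac2 : Matrix.fromBlocks A B C D
        = Matrix.fromBlocks (L⁻¹*E) (L⁻¹*F) (P*L⁻¹*E + L*G2) (P*L⁻¹*F + L*H2) := by
      rw [hfac, hVM, hRblocks, Matrix.fromBlocks_multiply]
      simp only [Matrix.zero_mul, add_zero]
    rw [Matrix.fromBlocks_inj] at hfac2
    obtain ⟨hA2, hB2, _, _⟩ := hfac2
    have hE : E = L * A := by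
      rw [hA2, ← Matrix.mul_assoc, Matrix.mul_nonsing_inv _ hLdet, Matrix.one_mul]
    have hF : F = L * B := by
      rw [hB2, ← Matrix.mul_assoc, Matrix.mul_nonsing_inv _ hLdet, Matrix.one_mul]
    have hcomm : stdJ n * R = R * stdJ n := by
      calc stdJ n * R = (R * Rᵀ) * stdJ n * R := by rw [hRRT, Matrix.one_mul]
        _ = R * (Rᵀ * stdJ n * R) := by noncomm_ring
        _ = R * stdJ n := by rw [hRs']
    rw [hRblocks] at hcomm
    simp only [stdJ, Matrix.fromBlocks_multiply, Matrix.mul_zero, Matrix.mul_one,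
      Matrix.mul_neg, Matrix.zero_mul, Matrix.one_mul, Matrix.neg_mul, zero_add, add_zero,
      neg_zero] at hcomm
    rw [Matrix.fromBlocks_inj] at hcomm
    obtain ⟨hc11, hc12, _, _⟩ := hcomm
    -- hc11 : G2 = -F, hc12 : H2 = E  (up to sign normal forms)
    refine ⟨claim1, claim2, ?_⟩
    rw [hRblocks]
    rw [Matrix.fromBlocks_inj]
    refine ⟨hE, hF, ?_, ?_⟩
    · rw [← hF]; rw [← hc11]
    · rw [← hE, ← hc12]
end
end

section
/- Let ħ > 0 and S ∈ Sp(2n,ℝ) with block form [[A, B],[C, D]]. Then the quantum blob QB(S) = S(B^{2n}(√ħ)) can be written as QB(S) = V_{−P} M_L (B^{2n}(√ħ)) where L = (AAᵀ + BBᵀ)^{−1/2} and P = (CAᵀ + DBᵀ)(AAᵀ + BBᵀ)⁻¹, and this representation is unique: if V_{−P} M_L = V_{−P'} M_{L'} for symmetric P, P' and invertible L, L', then P = P' and L = L'. -/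
open Matrix

noncomputable section

/-- The closed ball of radius `r` centered at `0` in phase space `ℝⁿ × ℝⁿ`. -/
def ballPhase (n : ℕ) (r : ℝ) : Set ((Fin n ⊕ Fin n) → ℝ) :=
  {z | ∑ i, z i ^ 2 ≤ r ^ 2}

section Aux

variable {n : ℕ}

lemma sum_sq_eq_dot (z : (Fin n ⊕ Fin n) → ℝ) : ∑ i, z i ^ 2 = z ⬝ᵥ z := by
  simp [dotProduct, sq]

lemma mem_ballPhase {r : ℝ} {z : (Fin n ⊕ Fin n) → ℝ} :
    z ∈ ballPhase n r ↔ z ⬝ᵥ z ≤ r ^ 2 := by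
  rw [ballPhase, Set.mem_setOf_eq, sum_sq_eq_dot]

lemma orth_dot (U : Matrix (Fin n ⊕ Fin n) (Fin n ⊕ Fin n) ℝ) (hU : Uᵀ * U = 1)
    (z : (Fin n ⊕ Fin n) → ℝ) : U.mulVec z ⬝ᵥ U.mulVec z = z ⬝ᵥ z := by
  rw [Matrix.dotProduct_mulVec, ← Matrix.mulVec_transpose, Matrix.mulVec_mulVec, hU,
    Matrix.one_mulVec]

lemma img_subset (S S' : Matrix (Fin n ⊕ Fin n) (Fin n ⊕ Fin n) ℝ)
    (hS : IsUnit S.det) (hS' : IsUnit S'.det) (h : S * Sᵀ = S' * S'ᵀ) (r : ℝ) :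
    S.mulVec '' ballPhase n r ⊆ S'.mulVec '' ballPhase n r := by
  rintro w ⟨z, hz, rfl⟩
  have hSdetT : IsUnit Sᵀ.det := by rwa [Matrix.det_transpose]
  have hU : (S'⁻¹ * S)ᵀ * (S'⁻¹ * S) = 1 := by
    have h1 : (S'ᵀ)⁻¹ * S'⁻¹ = (Sᵀ)⁻¹ * S⁻¹ := by
      rw [← Matrix.mul_inv_rev, ← Matrix.mul_inv_rev, h]
    calc (S'⁻¹ * S)ᵀ * (S'⁻¹ * S)
        = Sᵀ * (((S'ᵀ)⁻¹ * S'⁻¹) * S) := by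
          rw [Matrix.transpose_mul, Matrix.transpose_nonsing_inv]
          simp only [mul_assoc]
      _ = Sᵀ * ((Sᵀ)⁻¹ * (S⁻¹ * S)) := by rw [h1]; simp only [mul_assoc]
      _ = Sᵀ * (Sᵀ)⁻¹ := by rw [Matrix.nonsing_inv_mul _ hS, mul_one]
      _ = 1 := Matrix.mul_nonsing_inv _ hSdetT
  refine ⟨(S'⁻¹ * S).mulVec z, ?_, ?_⟩
  · rw [mem_ballPhase, orth_dot _ hU z]
    exact mem_ballPhase.mp hz
  · rw [Matrix.mulVec_mulVec, ← mul_assoc, Matrix.mul_nonsing_inv _ hS', one_mul]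

end Aux

/-- The quantum blob `QB(S) = S(B^{2n}(√ℏ))` of a symplectic matrix `S = [[A,B],[C,D]]`
equals `V_{-P} M_L (B^{2n}(√ℏ))` with `L = (AAᵀ + BBᵀ)^{-1/2}` and
`P = (CAᵀ + DBᵀ)(AAᵀ + BBᵀ)⁻¹`; moreover this representation is unique:
`V_{-P} M_L = V_{-P'} M_{L'}` with `P, P'` symmetric and `L, L'` invertible forces
`P = P'` and `L = L'`. -/
theorem statement8 (n : ℕ) (ℏ : ℝ) (hℏ : 0 < ℏ) (A B C D : Matrix (Fin n) (Fin n) ℝ)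
    (hS : IsSymplectic (Matrix.fromBlocks A B C D)) :
    (∀ L : Matrix (Fin n) (Fin n) ℝ, L.PosDef → L * L = (A * Aᵀ + B * Bᵀ)⁻¹ →
      (Matrix.fromBlocks A B C D).mulVec '' ballPhase n (Real.sqrt ℏ)
        = (VmP ((C * Aᵀ + D * Bᵀ) * (A * Aᵀ + B * Bᵀ)⁻¹) * ML L).mulVec ''
            ballPhase n (Real.sqrt ℏ)) ∧
    (∀ P P' L L' : Matrix (Fin n) (Fin n) ℝ, P.IsSymm → P'.IsSymm →
      IsUnit L → IsUnit L' → VmP P * ML L = VmP P' * ML L' → P = P' ∧ L = L') := by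
  constructor
  · intro L hLpd hL
    set S := Matrix.fromBlocks A B C D with hSdef
    set G := A * Aᵀ + B * Bᵀ with hGdef
    set X := C * Aᵀ + D * Bᵀ with hXdef
    set H := C * Cᵀ + D * Dᵀ with hHdef
    have hS' : Sᵀ * stdJ n * S = stdJ n := hS
    -- basic facts about J
    have hJ2 : stdJ n * stdJ n = -1 := by
      rw [stdJ, Matrix.fromBlocks_multiply, ← Matrix.fromBlocks_one, Matrix.fromBlocks_neg]
      simp
    have hJmul : stdJ n * -stdJ n = 1 := by rw [mul_neg, hJ2, neg_neg]
    have hJmul' : -stdJ n * stdJ n = 1 := by rw [neg_mul, hJ2, neg_neg]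
    have hJunit : IsUnit (stdJ n) := ⟨⟨stdJ n, -stdJ n, hJmul, hJmul'⟩, rfl⟩
    have hJdet : IsUnit (stdJ n).det := (Matrix.isUnit_iff_isUnit_det _).mp hJunit
    have hJinv : (stdJ n)⁻¹ = -stdJ n := Matrix.inv_eq_right_inv hJmul
    -- S is invertible
    have hSdet : IsUnit S.det := by
      have hd := congrArg Matrix.det hS'
      rw [Matrix.det_mul, Matrix.det_mul, Matrix.det_transpose] at hd
      rw [isUnit_iff_ne_zero]
      intro h0
      rw [h0] at hd
      simp at hd
      exact hJdet.ne_zero hd.symm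
    have hSdetT : IsUnit Sᵀ.det := by rwa [Matrix.det_transpose]
    -- Sᵀ is symplectic: S J Sᵀ = J
    have h2 : Sᵀ = stdJ n * S⁻¹ * (stdJ n)⁻¹ := by
      have h1 : Sᵀ * stdJ n = stdJ n * S⁻¹ := by
        calc Sᵀ * stdJ n = Sᵀ * stdJ n * (S * S⁻¹) := by
              rw [Matrix.mul_nonsing_inv _ hSdet, mul_one]
          _ = (Sᵀ * stdJ n * S) * S⁻¹ := by simp only [mul_assoc]
          _ = stdJ n * S⁻¹ := by rw [hS']
      calc Sᵀ = Sᵀ * (stdJ n * (stdJ n)⁻¹) := by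
            rw [Matrix.mul_nonsing_inv _ hJdet, mul_one]
        _ = (Sᵀ * stdJ n) * (stdJ n)⁻¹ := by simp only [mul_assoc]
        _ = stdJ n * S⁻¹ * (stdJ n)⁻¹ := by rw [h1]
    have hJ2' : ∀ M : Matrix (Fin n ⊕ Fin n) (Fin n ⊕ Fin n) ℝ,
        stdJ n * (stdJ n * M) = -M := by
      intro M
      rw [← mul_assoc, hJ2, neg_one_mul]
    have hST : S * stdJ n * Sᵀ = stdJ n := by
      rw [h2, hJinv]
      simp only [mul_assoc]
      rw [hJ2' (S⁻¹ * -stdJ n)]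
      simp only [mul_neg, neg_neg]
      rw [← mul_assoc, Matrix.mul_nonsing_inv _ hSdet, one_mul]
    -- S Sᵀ is symplectic
    have hM : (S * Sᵀ) * stdJ n * (S * Sᵀ) = stdJ n := by
      calc (S * Sᵀ) * stdJ n * (S * Sᵀ) = S * (Sᵀ * stdJ n * S) * Sᵀ := by
            simp only [mul_assoc]
        _ = S * stdJ n * Sᵀ := by rw [hS']
        _ = stdJ n := hST
    -- blocks of S Sᵀ
    have hSS : S * Sᵀ = Matrix.fromBlocks G Xᵀ X H := by
      rw [hSdef, Matrix.fromBlocks_transpose, Matrix.fromBlocks_multiply]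
      congr 1 <;> simp [hGdef, hXdef, hHdef, Matrix.transpose_add, Matrix.transpose_mul]
    -- extract block identities
    rw [hSS] at hM
    rw [show stdJ n = Matrix.fromBlocks 0 1 (-1) 0 from rfl, Matrix.fromBlocks_multiply,
      Matrix.fromBlocks_multiply] at hM
    have h11 := congrArg Matrix.toBlocks₁₁ hM
    have h21 := congrArg Matrix.toBlocks₂₁ hM
    simp only [Matrix.toBlocks_fromBlocks₁₁, Matrix.toBlocks_fromBlocks₂₁,
      mul_zero, zero_mul, mul_one, one_mul, mul_neg, neg_mul, neg_neg,
      zero_add, add_zero] at h11 h21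
    have hGX : G * X = Xᵀ * G := (neg_add_eq_zero.mp h11).symm
    have hHG : H * G = X * X + 1 := by
      have h' : -(H * G) + (X * X + 1) = 0 := by
        rw [← add_assoc, h21]
        simp
      exact neg_add_eq_zero.mp h'
    -- facts about L and G
    have hLsymm : Lᵀ = L := by
      have h := hLpd.1
      ext i j
      have := congrFun (congrFun h i) j
      simpa [Matrix.conjTranspose_apply] using this
    have hLdet : IsUnit L.det := isUnit_iff_ne_zero.mpr hLpd.det_pos.ne'
    have hGdet : IsUnit G.det := by
      by_contra hG
      have h0 : G⁻¹.det = 0 := by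
        rw [Matrix.det_nonsing_inv, Ring.inverse_non_unit _ hG]
      rw [← hL, Matrix.det_mul] at h0
      exact hLdet.ne_zero (by nlinarith [h0])
    have hGsymm : Gᵀ = G := by
      simp [hGdef, Matrix.transpose_add, Matrix.transpose_mul]
    have hGinvT : (G⁻¹)ᵀ = G⁻¹ := by rw [Matrix.transpose_nonsing_inv, hGsymm]
    have hLinvT : (L⁻¹)ᵀ = L⁻¹ := by rw [Matrix.transpose_nonsing_inv, hLsymm]
    have hLLG : L⁻¹ * L⁻¹ = G := by
      calc L⁻¹ * L⁻¹ = (L * L)⁻¹ := (Matrix.mul_inv_rev L L).symm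
        _ = (G⁻¹)⁻¹ := by rw [hL]
        _ = G := Matrix.nonsing_inv_nonsing_inv G hGdet
    have hXG : X * G⁻¹ = G⁻¹ * Xᵀ := by
      calc X * G⁻¹ = (G⁻¹ * G) * (X * G⁻¹) := by
            rw [Matrix.nonsing_inv_mul _ hGdet, one_mul]
        _ = G⁻¹ * (G * X) * G⁻¹ := by simp only [mul_assoc]
        _ = G⁻¹ * (Xᵀ * G) * G⁻¹ := by rw [hGX]
        _ = G⁻¹ * Xᵀ * (G * G⁻¹) := by simp only [mul_assoc]
        _ = G⁻¹ * Xᵀ := by rw [Matrix.mul_nonsing_inv _ hGdet, mul_one]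
    have hH : H = X * G⁻¹ * Xᵀ + G⁻¹ := by
      calc H = H * (G * G⁻¹) := by rw [Matrix.mul_nonsing_inv _ hGdet, mul_one]
        _ = (X * X + 1) * G⁻¹ := by rw [← mul_assoc, hHG]
        _ = X * (X * G⁻¹) + G⁻¹ := by rw [add_mul, one_mul, mul_assoc]
        _ = X * (G⁻¹ * Xᵀ) + G⁻¹ := by rw [hXG]
        _ = X * G⁻¹ * Xᵀ + G⁻¹ := by rw [mul_assoc]
    -- the normal form S'
    have hT : VmP (X * G⁻¹) * ML L = Matrix.fromBlocks L⁻¹ 0 (X * G⁻¹ * L⁻¹) Lᵀ := by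
      rw [VmP, ML, Matrix.fromBlocks_multiply]
      congr 1 <;> simp
    rw [hT]
    set T := Matrix.fromBlocks L⁻¹ 0 (X * G⁻¹ * L⁻¹) Lᵀ with hTdef
    have htr : (X * G⁻¹ * L⁻¹)ᵀ = L⁻¹ * (G⁻¹ * Xᵀ) := by
      rw [Matrix.transpose_mul, Matrix.transpose_mul, hLinvT, hGinvT]
    have key : T * Tᵀ = Matrix.fromBlocks G Xᵀ X H := by
      rw [hTdef, Matrix.fromBlocks_transpose, Matrix.fromBlocks_multiply]
      have b11 : L⁻¹ * (L⁻¹)ᵀ + 0 * (0 : Matrix (Fin n) (Fin n) ℝ)ᵀ = G := by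
        rw [hLinvT, hLLG]; simp
      have b12 : L⁻¹ * (X * G⁻¹ * L⁻¹)ᵀ + 0 * (Lᵀ)ᵀ = Xᵀ := by
        rw [htr, zero_mul, add_zero, ← mul_assoc, hLLG, ← mul_assoc,
          Matrix.mul_nonsing_inv _ hGdet, one_mul]
      have b21 : X * G⁻¹ * L⁻¹ * (L⁻¹)ᵀ + Lᵀ * (0 : Matrix (Fin n) (Fin n) ℝ)ᵀ = X := by
        rw [hLinvT, Matrix.transpose_zero, mul_zero, add_zero,
          mul_assoc (X * G⁻¹) L⁻¹ L⁻¹, hLLG, mul_assoc X G⁻¹ G,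
          Matrix.nonsing_inv_mul _ hGdet, mul_one]
      have b22 : X * G⁻¹ * L⁻¹ * (X * G⁻¹ * L⁻¹)ᵀ + Lᵀ * (Lᵀ)ᵀ = H := by
        rw [htr, Matrix.transpose_transpose, hLsymm, hL, hH]
        congr 1
        calc X * G⁻¹ * L⁻¹ * (L⁻¹ * (G⁻¹ * Xᵀ))
            = X * G⁻¹ * (L⁻¹ * L⁻¹) * (G⁻¹ * Xᵀ) := by simp only [mul_assoc]
          _ = X * (G⁻¹ * G) * (G⁻¹ * Xᵀ) := by rw [hLLG, mul_assoc X G⁻¹ G]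
          _ = X * (G⁻¹ * Xᵀ) := by rw [Matrix.nonsing_inv_mul _ hGdet, mul_one]
          _ = X * G⁻¹ * Xᵀ := by rw [mul_assoc]
      rw [b11, b12, b21, b22]
    have hMain : T * Tᵀ = S * Sᵀ := by rw [key, hSS]
    have hTdet : IsUnit T.det := by
      have hd := congrArg Matrix.det hMain
      rw [Matrix.det_mul, Matrix.det_mul, Matrix.det_transpose, Matrix.det_transpose] at hd
      rw [isUnit_iff_ne_zero]
      intro h0
      rw [h0] at hd
      simp at hd
      exact hSdet.ne_zero (by nlinarith [hd.symm])
    exact Set.Subset.antisymm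
      (img_subset S T hSdet hTdet hMain.symm _)
      (img_subset T S hTdet hSdet hMain _)
  · intro P P' L L' hP hP' hLu hLu' heq
    have h : Matrix.fromBlocks L⁻¹ 0 (P * L⁻¹) Lᵀ
        = Matrix.fromBlocks L'⁻¹ 0 (P' * L'⁻¹) L'ᵀ := by
      have e1 : VmP P * ML L = Matrix.fromBlocks L⁻¹ 0 (P * L⁻¹) Lᵀ := by
        rw [VmP, ML, Matrix.fromBlocks_multiply]; congr 1 <;> simp
      have e2 : VmP P' * ML L' = Matrix.fromBlocks L'⁻¹ 0 (P' * L'⁻¹) L'ᵀ := by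
        rw [VmP, ML, Matrix.fromBlocks_multiply]; congr 1 <;> simp
      rw [← e1, ← e2, heq]
    have h22 := congrArg Matrix.toBlocks₂₂ h
    have h21 := congrArg Matrix.toBlocks₂₁ h
    simp only [Matrix.toBlocks_fromBlocks₂₂, Matrix.toBlocks_fromBlocks₂₁] at h22 h21
    have hLL : L = L' := by
      have := congrArg Matrix.transpose h22
      simpa using this
    subst hLL
    refine ⟨?_, rfl⟩
    have hLdet : IsUnit L.det := (Matrix.isUnit_iff_isUnit_det L).mp hLu
    calc P = P * (L⁻¹ * L) := by rw [Matrix.nonsing_inv_mul _ hLdet, mul_one]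
      _ = (P * L⁻¹) * L := by rw [mul_assoc]
      _ = (P' * L⁻¹) * L := by rw [h21]
      _ = P' * (L⁻¹ * L) := by rw [mul_assoc]
      _ = P' := by rw [Matrix.nonsing_inv_mul _ hLdet, mul_one]
end
end

section
/- Let ħ > 0. The map which sends a pair (W, Y) of real symmetric n×n matrices with W positive definite to the set V_Y M_{W^{−1/2}} (B^{2n}(√ħ)) ⊆ ℝ^{2n} is injective, and its range is exactly the collection of all quantum blobs, i.e. all sets S(B^{2n}(√ħ)) with S ∈ Sp(2n,ℝ). (Consequently, quantum blobs are in bijective correspondence with the generalized centered Gaussians ψ_{W,Y}(x) = (det W/(πħ)ⁿ)^{1/4} e^{−(W+iY)x·x/(2ħ)}.) -/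
open Matrix

noncomputable section

/-- `V_Y = [[I, 0],[-Y, I]]` for symmetric `Y`. -/
def VY {n : ℕ} (Y : Matrix (Fin n) (Fin n) ℝ) :
    Matrix (Fin n ⊕ Fin n) (Fin n ⊕ Fin n) ℝ :=
  Matrix.fromBlocks 1 0 (-Y) 1

set_option linter.unusedSectionVars false
set_option linter.unusedVariables false

namespace BlobAux

open scoped MatrixOrder

variable {m : Type*} [Fintype m] [DecidableEq m]

lemma quad_mulVec (O : Matrix m m ℝ) (z : m → ℝ) :
    (O *ᵥ z) ⬝ᵥ (O *ᵥ z) = z ⬝ᵥ ((Oᵀ * O) *ᵥ z) := by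
  rw [dotProduct_mulVec, dotProduct_mulVec, ← vecMul_transpose, vecMul_vecMul]

lemma quad_nonneg (z : m → ℝ) : 0 ≤ z ⬝ᵥ z :=
  Finset.sum_nonneg fun i _ => mul_self_nonneg _

lemma quad_pos {z : m → ℝ} (hz : z ≠ 0) : 0 < z ⬝ᵥ z :=
  lt_of_le_of_ne (quad_nonneg z) fun h => hz (dotProduct_self_eq_zero.mp h.symm)

lemma herm_real {M : Matrix m m ℝ} (h : M.IsHermitian) : Mᵀ = M := by
  rw [← Matrix.conjTranspose_eq_transpose_of_trivial]; exact h

lemma posDef_of_posSemidef_isUnit {M : Matrix m m ℝ} (h : M.PosSemidef)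
    (hdet : IsUnit M.det) : M.PosDef := by
  refine Matrix.PosDef.of_dotProduct_mulVec_pos h.1 fun x hx => ?_
  have hKK := CFC.sqrt_mul_sqrt_self M h.nonneg
  have hKT : (CFC.sqrt M)ᵀ = CFC.sqrt M := herm_real (CFC.sqrt_nonneg M).posSemidef.1
  have hq : star x ⬝ᵥ (M *ᵥ x) = (CFC.sqrt M *ᵥ x) ⬝ᵥ (CFC.sqrt M *ᵥ x) := by
    rw [quad_mulVec, hKT, hKK, star_trivial]
  rw [hq]
  refine quad_pos fun h0 => hx ?_
  have : M *ᵥ x = 0 := by rw [← hKK, ← Matrix.mulVec_mulVec, h0, Matrix.mulVec_zero]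
  have := congrArg (fun v => M⁻¹ *ᵥ v) this
  simpa [Matrix.mulVec_mulVec, Matrix.nonsing_inv_mul _ hdet] using this

lemma posDef_mul_transpose {A : Matrix m m ℝ} (hA : IsUnit A.det) : (A * Aᵀ).PosDef := by
  refine Matrix.PosDef.of_dotProduct_mulVec_pos ?_ fun x hx => ?_
  · show (A * Aᵀ)ᴴ = A * Aᵀ
    rw [Matrix.conjTranspose_eq_transpose_of_trivial, Matrix.transpose_mul,
      Matrix.transpose_transpose]
  · have hq : star x ⬝ᵥ ((A * Aᵀ) *ᵥ x) = (Aᵀ *ᵥ x) ⬝ᵥ (Aᵀ *ᵥ x) := by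
      rw [quad_mulVec, Matrix.transpose_transpose, star_trivial]
    rw [hq]
    refine quad_pos fun h0 => hx ?_
    have hAt : IsUnit Aᵀ.det := by rwa [Matrix.det_transpose]
    have := congrArg (fun v => (Aᵀ)⁻¹ *ᵥ v) h0
    simpa [Matrix.mulVec_mulVec, Matrix.nonsing_inv_mul _ hAt] using this

lemma quad_eq_imp_eq_one {P : Matrix m m ℝ} (hsym : Pᵀ = P)
    (hq : ∀ z, z ⬝ᵥ (P *ᵥ z) = z ⬝ᵥ z) : P = 1 := by
  have hij : ∀ i j, P j i = P i j := fun i j => by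
    conv_lhs => rw [← hsym]
    rfl
  ext i j
  rcases eq_or_ne i j with rfl | hne
  · have := hq (Pi.single i 1)
    simpa [single_dotProduct, Matrix.mulVec_single, Pi.single_apply] using this
  · have h1 := hq (Pi.single i 1)
    have h2 := hq (Pi.single j 1)
    have h3 := hq (Pi.single i 1 + Pi.single j 1)
    simp [add_dotProduct, dotProduct_add, Matrix.mulVec_add,
      single_dotProduct, Matrix.mulVec_single, Pi.single_apply, hne, hne.symm] at h1 h2 h3
    rw [Matrix.one_apply_ne hne]
    have := hij i j
    linarith

-- ball lemmas
variable {n : ℕ}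

lemma mem_ball {r : ℝ} {z : (Fin n ⊕ Fin n) → ℝ} :
    z ∈ ballPhase n r ↔ z ⬝ᵥ z ≤ r ^ 2 := by
  simp [ballPhase, dotProduct, sq]

lemma quad_of_orth {O : Matrix (Fin n ⊕ Fin n) (Fin n ⊕ Fin n) ℝ} (hO : Oᵀ * O = 1)
    (z : (Fin n ⊕ Fin n) → ℝ) : (O *ᵥ z) ⬝ᵥ (O *ᵥ z) = z ⬝ᵥ z := by
  rw [quad_mulVec, hO, Matrix.one_mulVec]

lemma image_ball_of_orth {O : Matrix (Fin n ⊕ Fin n) (Fin n ⊕ Fin n) ℝ} (hO : Oᵀ * O = 1)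
    (r : ℝ) : O.mulVec '' ballPhase n r = ballPhase n r := by
  have hO' : O * Oᵀ = 1 := mul_eq_one_comm.mp hO
  apply Set.Subset.antisymm
  · rintro w ⟨z, hz, rfl⟩
    rw [mem_ball] at *
    rwa [quad_of_orth hO]
  · intro w hw
    refine ⟨Oᵀ *ᵥ w, ?_, ?_⟩
    · rw [mem_ball] at *
      have h2 : (Oᵀ)ᵀ * Oᵀ = 1 := by rwa [Matrix.transpose_transpose]
      rwa [quad_of_orth h2]
    · rw [Matrix.mulVec_mulVec, hO', Matrix.one_mulVec]

lemma image_ball_of_gram {A B : Matrix (Fin n ⊕ Fin n) (Fin n ⊕ Fin n) ℝ}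
    (hA : IsUnit A.det) (hB : IsUnit B.det) (h : A * Aᵀ = B * Bᵀ) (r : ℝ) :
    A.mulVec '' ballPhase n r = B.mulVec '' ballPhase n r := by
  have hBt : IsUnit Bᵀ.det := by rwa [Matrix.det_transpose]
  set O := B⁻¹ * A with hOdef
  have hO : Oᵀ * O = 1 := by
    have : O * Oᵀ = 1 := by
      rw [hOdef, Matrix.transpose_mul, Matrix.transpose_nonsing_inv, Matrix.mul_assoc,
        ← Matrix.mul_assoc A, h, ← Matrix.mul_assoc, ← Matrix.mul_assoc,
        Matrix.nonsing_inv_mul _ hB, Matrix.one_mul, Matrix.mul_nonsing_inv _ hBt]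
    exact mul_eq_one_comm.mp this
  have hBO : B * O = A := by
    rw [hOdef, ← Matrix.mul_assoc, Matrix.mul_nonsing_inv _ hB, Matrix.one_mul]
  calc A.mulVec '' ballPhase n r = (B * O).mulVec '' ballPhase n r := by rw [hBO]
    _ = B.mulVec '' (O.mulVec '' ballPhase n r) := by
        rw [Set.image_image]
        exact Set.image_congr fun z _ => by rw [← Matrix.mulVec_mulVec]
    _ = B.mulVec '' ballPhase n r := by rw [image_ball_of_orth hO]

lemma quad_le_of_mapsTo {O : Matrix (Fin n ⊕ Fin n) (Fin n ⊕ Fin n) ℝ} {r : ℝ} (hr : 0 < r)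
    (h : ∀ z ∈ ballPhase n r, O *ᵥ z ∈ ballPhase n r) (z : (Fin n ⊕ Fin n) → ℝ) :
    (O *ᵥ z) ⬝ᵥ (O *ᵥ z) ≤ z ⬝ᵥ z := by
  rcases eq_or_ne z 0 with rfl | hz
  · simp
  · have hq : 0 < z ⬝ᵥ z := quad_pos hz
    set c := r / Real.sqrt (z ⬝ᵥ z) with hcdef
    have hc : 0 < c := div_pos hr (Real.sqrt_pos.mpr hq)
    have hsq : ∀ v : (Fin n ⊕ Fin n) → ℝ, (c • v) ⬝ᵥ (c • v) = c ^ 2 * (v ⬝ᵥ v) := by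
      intro v
      rw [smul_dotProduct, dotProduct_smul, smul_eq_mul, smul_eq_mul]; ring
    have hc2 : c ^ 2 * (z ⬝ᵥ z) = r ^ 2 := by
      rw [hcdef, div_pow, Real.sq_sqrt hq.le, div_mul_cancel₀ _ hq.ne']
    have hmem : c • z ∈ ballPhase n r := by
      rw [mem_ball, hsq, hc2]
    have := h _ hmem
    rw [mem_ball, Matrix.mulVec_smul, hsq, ← hc2] at this
    exact le_of_mul_le_mul_left this (pow_pos hc 2)

lemma orth_of_image_ball {O : Matrix (Fin n ⊕ Fin n) (Fin n ⊕ Fin n) ℝ} (hO : IsUnit O.det)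
    {r : ℝ} (hr : 0 < r) (h : O.mulVec '' ballPhase n r = ballPhase n r) : Oᵀ * O = 1 := by
  have h1 : ∀ z ∈ ballPhase n r, O *ᵥ z ∈ ballPhase n r := fun z hz => h ▸ ⟨z, hz, rfl⟩
  have h2 : ∀ z ∈ ballPhase n r, O⁻¹ *ᵥ z ∈ ballPhase n r := by
    intro z hz
    rw [← h] at hz
    rcases hz with ⟨w, hw, rfl⟩
    rwa [Matrix.mulVec_mulVec, Matrix.nonsing_inv_mul _ hO, Matrix.one_mulVec]
  have key : ∀ z, (O *ᵥ z) ⬝ᵥ (O *ᵥ z) = z ⬝ᵥ z := by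
    intro z
    refine le_antisymm (quad_le_of_mapsTo hr h1 z) ?_
    have := quad_le_of_mapsTo hr h2 (O *ᵥ z)
    rwa [Matrix.mulVec_mulVec, Matrix.nonsing_inv_mul _ hO, Matrix.one_mulVec] at this
  refine quad_eq_imp_eq_one ?_ fun z => by rw [← quad_mulVec]; exact key z
  rw [Matrix.transpose_mul, Matrix.transpose_transpose]

lemma gram_of_image_ball {A B : Matrix (Fin n ⊕ Fin n) (Fin n ⊕ Fin n) ℝ}
    (hA : IsUnit A.det) (hB : IsUnit B.det) {r : ℝ} (hr : 0 < r)
    (h : A.mulVec '' ballPhase n r = B.mulVec '' ballPhase n r) : A * Aᵀ = B * Bᵀ := by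
  set O := B⁻¹ * A with hOdef
  have hOdet : IsUnit O.det := by
    rw [hOdef, Matrix.det_mul, Matrix.det_nonsing_inv]
    exact (isUnit_iff_ne_zero.mpr (by
      simp [Ring.inverse_eq_inv']
      exact hB.ne_zero)).mul hA
  have himg : O.mulVec '' ballPhase n r = ballPhase n r := by
    have := congrArg (fun s => (B⁻¹).mulVec '' s) h
    simp only [Set.image_image] at this
    calc O.mulVec '' ballPhase n r
        = (fun z => B⁻¹ *ᵥ A *ᵥ z) '' ballPhase n r := by
          exact Set.image_congr fun z _ => by rw [hOdef, ← Matrix.mulVec_mulVec]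
      _ = (fun z => B⁻¹ *ᵥ B *ᵥ z) '' ballPhase n r := this
      _ = ballPhase n r := by
          have : (fun z : (Fin n ⊕ Fin n) → ℝ => B⁻¹ *ᵥ B *ᵥ z) = id := by
            funext z
            rw [Matrix.mulVec_mulVec, Matrix.nonsing_inv_mul _ hB, Matrix.one_mulVec, id]
          rw [this, Set.image_id]
  have hOrth : Oᵀ * O = 1 := orth_of_image_ball hOdet hr himg
  have hOO : O * Oᵀ = 1 := mul_eq_one_comm.mp hOrth
  have hBO : B * O = A := by
    rw [hOdef, ← Matrix.mul_assoc, Matrix.mul_nonsing_inv _ hB, Matrix.one_mul]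
  calc A * Aᵀ = B * (O * Oᵀ) * Bᵀ := by
        rw [← hBO, Matrix.transpose_mul]
        simp only [Matrix.mul_assoc]
    _ = B * Bᵀ := by rw [hOO, Matrix.mul_one]

-- symplectic algebra
lemma stdJ_mul_stdJ : stdJ n * stdJ n = -1 := by
  have h1 : (-1 : Matrix (Fin n ⊕ Fin n) (Fin n ⊕ Fin n) ℝ)
      = Matrix.fromBlocks (-1) 0 0 (-1) := by
    rw [← Matrix.fromBlocks_one, Matrix.fromBlocks_neg, neg_zero]
  rw [h1]
  simp [stdJ, Matrix.fromBlocks_multiply]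

lemma isUnit_det_stdJ : IsUnit (stdJ n).det := by
  apply Matrix.isUnit_det_of_right_inverse (B := -(stdJ n))
  rw [Matrix.mul_neg, stdJ_mul_stdJ, neg_neg]

lemma isUnit_det_of_symplectic {S : Matrix (Fin n ⊕ Fin n) (Fin n ⊕ Fin n) ℝ}
    (hS : IsSymplectic S) : IsUnit S.det := by
  have h := congrArg Matrix.det hS
  rw [Matrix.det_mul, Matrix.det_mul, Matrix.det_transpose] at h
  have hJ : (stdJ n).det ≠ 0 := (isUnit_det_stdJ).ne_zero
  apply IsUnit.of_mul_eq_one (a := S.det) S.det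
  have h2 : S.det * S.det * (stdJ n).det = 1 * (stdJ n).det := by linear_combination h
  exact mul_right_cancel₀ hJ h2
lemma isSymplectic_mul {S T : Matrix (Fin n ⊕ Fin n) (Fin n ⊕ Fin n) ℝ}
    (hS : IsSymplectic S) (hT : IsSymplectic T) : IsSymplectic (S * T) := by
  unfold IsSymplectic at *
  rw [Matrix.transpose_mul]
  calc Tᵀ * Sᵀ * stdJ n * (S * T) = Tᵀ * (Sᵀ * stdJ n * S) * T := by
        simp only [Matrix.mul_assoc]
    _ = stdJ n := by rw [hS, hT]

lemma mul_stdJ_mul_transpose {S : Matrix (Fin n ⊕ Fin n) (Fin n ⊕ Fin n) ℝ}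
    (hS : IsSymplectic S) : S * stdJ n * Sᵀ = stdJ n := by
  have hKS : (-(stdJ n) * Sᵀ * stdJ n) * S = 1 := by
    calc (-(stdJ n) * Sᵀ * stdJ n) * S = -(stdJ n * (Sᵀ * stdJ n * S)) := by
          simp only [Matrix.neg_mul, Matrix.mul_assoc]
      _ = -(stdJ n * stdJ n) := by rw [hS]
      _ = 1 := by rw [stdJ_mul_stdJ, neg_neg]
  have hSK : S * (-(stdJ n) * Sᵀ * stdJ n) = 1 := mul_eq_one_comm.mp hKS
  have h3 := congrArg (fun M => M * -(stdJ n)) hSK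
  simp only [Matrix.one_mul] at h3
  have h4 : S * (-(stdJ n) * Sᵀ * stdJ n) * -(stdJ n) = -(S * stdJ n * Sᵀ) := by
    simp only [Matrix.mul_neg, Matrix.neg_mul, neg_neg, Matrix.mul_assoc, stdJ_mul_stdJ,
      Matrix.mul_one, mul_neg_one]
  rw [h4] at h3
  exact neg_inj.mp h3

lemma isSymplectic_VY {Y : Matrix (Fin n) (Fin n) ℝ} (hY : Y.IsSymm) :
    IsSymplectic (VY Y) := by
  unfold IsSymplectic VY stdJ
  rw [Matrix.fromBlocks_transpose]
  rw [Matrix.fromBlocks_multiply, Matrix.fromBlocks_multiply]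
  simp [hY.eq]

lemma isSymplectic_ML {L : Matrix (Fin n) (Fin n) ℝ} (hL : IsUnit L.det) :
    IsSymplectic (ML L) := by
  have h1 : (L⁻¹)ᵀ * Lᵀ = 1 := by
    rw [← Matrix.transpose_mul, Matrix.mul_nonsing_inv _ hL, Matrix.transpose_one]
  have h2 : L * L⁻¹ = 1 := Matrix.mul_nonsing_inv _ hL
  unfold IsSymplectic ML stdJ
  rw [Matrix.fromBlocks_transpose]
  rw [Matrix.fromBlocks_multiply, Matrix.fromBlocks_multiply]
  simp [h1, h2]

lemma gram_VY_ML {W Y L : Matrix (Fin n) (Fin n) ℝ} (hW : W.PosDef) (hY : Y.IsSymm)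
    (hL : L.PosDef) (hLW : L * L = W⁻¹) :
    (VY Y * ML L) * (VY Y * ML L)ᵀ
      = Matrix.fromBlocks W (-(W * Y)) (-(Y * W)) (Y * W * Y + W⁻¹) := by
  have hLsym : Lᵀ = L := herm_real hL.1
  have hLinv : L⁻¹ * L⁻¹ = W := by
    rw [← Matrix.mul_inv_rev, hLW, Matrix.nonsing_inv_nonsing_inv _ (isUnit_iff_ne_zero.mpr hW.det_pos.ne')]
  have hLinvsym : (L⁻¹)ᵀ = L⁻¹ := by rw [Matrix.transpose_nonsing_inv, hLsym]
  unfold VY ML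
  rw [Matrix.fromBlocks_multiply, Matrix.fromBlocks_transpose, Matrix.fromBlocks_multiply]
  refine Matrix.fromBlocks_inj.mpr ⟨?_, ?_, ?_, ?_⟩
  · simp only [Matrix.one_mul, Matrix.transpose_zero, Matrix.mul_zero, Matrix.zero_mul, Matrix.mul_one,
      add_zero, zero_add, hLinvsym]
    exact hLinv
  · simp only [Matrix.one_mul, Matrix.transpose_zero, Matrix.mul_zero, Matrix.zero_mul, Matrix.mul_one,
      add_zero, zero_add, Matrix.transpose_mul, Matrix.transpose_neg,
      hLinvsym, hY.eq, Matrix.mul_neg, Matrix.neg_mul, ← Matrix.mul_assoc, hLinv]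
  · simp only [Matrix.one_mul, Matrix.transpose_zero, Matrix.mul_zero, Matrix.zero_mul, Matrix.mul_one,
      add_zero, zero_add, Matrix.transpose_mul, Matrix.transpose_neg,
      hLinvsym, hY.eq, Matrix.mul_neg, Matrix.neg_mul, Matrix.mul_assoc, hLinv]
  · simp only [Matrix.one_mul, Matrix.transpose_zero, Matrix.mul_zero, Matrix.zero_mul, Matrix.mul_one,
      add_zero, zero_add, Matrix.transpose_mul, Matrix.transpose_neg,
      Matrix.transpose_transpose, hLinvsym, hLsym, hY.eq, Matrix.mul_neg, Matrix.neg_mul,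
      neg_neg, hLW]
    rw [Matrix.mul_assoc, ← Matrix.mul_assoc L⁻¹, hLinv, ← Matrix.mul_assoc]

lemma posDef_toBlocks₁₁ {P : Matrix (Fin n ⊕ Fin n) (Fin n ⊕ Fin n) ℝ} (hP : P.PosDef) :
    (P.toBlocks₁₁).PosDef := by
  refine Matrix.PosDef.of_dotProduct_mulVec_pos ?_ ?_
  · show _ᴴ = _
    have hsym := herm_real hP.1
    rw [Matrix.conjTranspose_eq_transpose_of_trivial]
    ext i j
    exact congrFun (congrFun hsym (Sum.inl i)) (Sum.inl j)
  · intro x hx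
    have hz : (Sum.elim x 0 : (Fin n ⊕ Fin n) → ℝ) ≠ 0 := by
      intro h0
      apply hx
      funext i
      exact congrFun h0 (Sum.inl i)
    have h := hP.dotProduct_mulVec_pos hz
    rw [star_trivial] at h
    rw [star_trivial]
    calc (0 : ℝ) < Sum.elim x 0 ⬝ᵥ (P *ᵥ Sum.elim x 0) := h
      _ = x ⬝ᵥ (P.toBlocks₁₁ *ᵥ x) := by
        conv_lhs => rw [← Matrix.fromBlocks_toBlocks P]
        rw [Matrix.fromBlocks_mulVec, sumElim_dotProduct_sumElim]
        simp

lemma exists_WYL {S : Matrix (Fin n ⊕ Fin n) (Fin n ⊕ Fin n) ℝ} (hS : IsSymplectic S) :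
    ∃ W Y L : Matrix (Fin n) (Fin n) ℝ, W.PosDef ∧ Y.IsSymm ∧ L.PosDef ∧ L * L = W⁻¹ ∧
      S * Sᵀ = (VY Y * ML L) * (VY Y * ML L)ᵀ := by
  have hS' : Sᵀ * stdJ n * S = stdJ n := hS
  have hdet : IsUnit S.det := isUnit_det_of_symplectic hS
  set P := S * Sᵀ with hPdef
  have hP : P.PosDef := posDef_mul_transpose hdet
  have hPsym : Pᵀ = P := herm_real hP.1
  have hPJP : P * stdJ n * P = stdJ n := by
    calc P * stdJ n * P = S * (Sᵀ * stdJ n * S) * Sᵀ := by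
          rw [hPdef]; simp only [Matrix.mul_assoc]
      _ = stdJ n := by rw [hS']; exact mul_stdJ_mul_transpose hS
  set A := P.toBlocks₁₁ with hAdef
  set B := P.toBlocks₁₂ with hBdef
  set C := P.toBlocks₂₂ with hCdef
  have hA : A.PosDef := posDef_toBlocks₁₁ hP
  have hAdet : IsUnit A.det := isUnit_iff_ne_zero.mpr hA.det_pos.ne'
  have hAsym : Aᵀ = A := herm_real hA.1
  have hB21 : P.toBlocks₂₁ = Bᵀ := by
    ext i j
    show P (Sum.inr i) (Sum.inl j) = P (Sum.inl j) (Sum.inr i)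
    exact (congrFun (congrFun hPsym (Sum.inr i)) (Sum.inl j)).symm
  have hPfrom : P = Matrix.fromBlocks A B Bᵀ C := by
    rw [hAdef, hBdef, hCdef, ← hB21, Matrix.fromBlocks_toBlocks]
  rw [hPfrom] at hPJP
  rw [show stdJ n = Matrix.fromBlocks 0 1 (-1) 0 from rfl, Matrix.fromBlocks_multiply,
    Matrix.fromBlocks_multiply] at hPJP
  obtain ⟨e11, e12, e21, e22⟩ := Matrix.fromBlocks_inj.mp hPJP
  simp only [Matrix.mul_zero, Matrix.mul_one, Matrix.mul_neg, Matrix.neg_mul,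
    zero_add, add_zero] at e11 e12
  have hABt : B * A = A * Bᵀ := by rwa [neg_add_eq_zero] at e11
  have hAC : 1 + B * B = A * C := by rw [← e12]; abel
  set Y := -(A⁻¹ * B) with hYdef
  have hBt : Bᵀ = A⁻¹ * B * A := by
    rw [Matrix.mul_assoc, hABt, ← Matrix.mul_assoc, Matrix.nonsing_inv_mul _ hAdet,
      Matrix.one_mul]
  have hYsym : Y.IsSymm := by
    show Yᵀ = Y
    rw [hYdef, Matrix.transpose_neg, Matrix.transpose_mul, Matrix.transpose_nonsing_inv, hAsym]
    congr 1
    rw [hBt, Matrix.mul_assoc, Matrix.mul_nonsing_inv _ hAdet, Matrix.mul_one]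
  have hAinv : (A⁻¹).PosDef := hA.inv
  have hAinvdet : IsUnit (A⁻¹).det := isUnit_iff_ne_zero.mpr hAinv.det_pos.ne'
  set L := CFC.sqrt (A⁻¹) with hLdef
  have hLL : L * L = A⁻¹ := CFC.sqrt_mul_sqrt_self _ hAinv.posSemidef.nonneg
  have hLdet : IsUnit L.det := by
    have hd := congrArg Matrix.det hLL
    rw [Matrix.det_mul] at hd
    refine isUnit_iff_ne_zero.mpr fun h0 => ?_
    rw [h0, mul_zero] at hd
    exact hAinvdet.ne_zero hd.symm
  have hLpd : L.PosDef := posDef_of_posSemidef_isUnit (CFC.sqrt_nonneg (A⁻¹)).posSemidef hLdet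
  refine ⟨A, Y, L, hA, hYsym, hLpd, hLL, ?_⟩
  rw [gram_VY_ML hA hYsym hLpd hLL, hPfrom]
  refine Matrix.fromBlocks_inj.mpr ⟨rfl, ?_, ?_, ?_⟩
  · rw [hYdef, Matrix.mul_neg, neg_neg, ← Matrix.mul_assoc, Matrix.mul_nonsing_inv _ hAdet,
      Matrix.one_mul]
  · rw [hYdef, Matrix.neg_mul, neg_neg, hBt]
  · rw [hYdef]
    have h1 : -(A⁻¹ * B) * A * -(A⁻¹ * B) = A⁻¹ * (B * B) := by
      rw [Matrix.neg_mul, Matrix.mul_neg, Matrix.neg_mul, neg_neg,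
        Matrix.mul_assoc (A⁻¹ * B) A, ← Matrix.mul_assoc A A⁻¹,
        Matrix.mul_nonsing_inv _ hAdet, Matrix.one_mul, Matrix.mul_assoc]
    rw [h1]
    have h2 : A⁻¹ * (1 + B * B) = C := by
      rw [hAC, ← Matrix.mul_assoc, Matrix.nonsing_inv_mul _ hAdet, Matrix.one_mul]
    rw [← h2, Matrix.mul_add, Matrix.mul_one, add_comm]

end BlobAux

/-- The map `(W, Y) ↦ V_Y M_{W^{-1/2}}(B^{2n}(√ℏ))` (with `W` symmetric positive
definite, `Y` symmetric, and `W^{-1/2}` the positive definite square root `L` of `W⁻¹`)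
is injective, and its range is exactly the set of quantum blobs `S(B^{2n}(√ℏ))`,
`S ∈ Sp(2n,ℝ)`. -/
theorem statement9 (n : ℕ) (ℏ : ℝ) (hℏ : 0 < ℏ) :
    (∀ (W Y W' Y' L L' : Matrix (Fin n) (Fin n) ℝ),
      W.PosDef → Y.IsSymm → W'.PosDef → Y'.IsSymm →
      L.PosDef → L * L = W⁻¹ → L'.PosDef → L' * L' = W'⁻¹ →
      (VY Y * ML L).mulVec '' ballPhase n (Real.sqrt ℏ)
        = (VY Y' * ML L').mulVec '' ballPhase n (Real.sqrt ℏ) →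
      W = W' ∧ Y = Y') ∧
    (∀ (W Y L : Matrix (Fin n) (Fin n) ℝ),
      W.PosDef → Y.IsSymm → L.PosDef → L * L = W⁻¹ →
      ∃ S : Matrix (Fin n ⊕ Fin n) (Fin n ⊕ Fin n) ℝ, IsSymplectic S ∧
        (VY Y * ML L).mulVec '' ballPhase n (Real.sqrt ℏ)
          = S.mulVec '' ballPhase n (Real.sqrt ℏ)) ∧
    (∀ S : Matrix (Fin n ⊕ Fin n) (Fin n ⊕ Fin n) ℝ, IsSymplectic S →
      ∃ W Y L : Matrix (Fin n) (Fin n) ℝ,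
        W.PosDef ∧ Y.IsSymm ∧ L.PosDef ∧ L * L = W⁻¹ ∧
        S.mulVec '' ballPhase n (Real.sqrt ℏ)
          = (VY Y * ML L).mulVec '' ballPhase n (Real.sqrt ℏ)) := by
  have hr : 0 < Real.sqrt ℏ := Real.sqrt_pos.mpr hℏ
  refine ⟨?_, ?_, ?_⟩
  · intro W Y W' Y' L L' hW hY hW' hY' hL hLW hL' hLW' himg
    have hT : IsSymplectic (VY Y * ML L) :=
      BlobAux.isSymplectic_mul (BlobAux.isSymplectic_VY hY)
        (BlobAux.isSymplectic_ML (isUnit_iff_ne_zero.mpr hL.det_pos.ne'))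
    have hT' : IsSymplectic (VY Y' * ML L') :=
      BlobAux.isSymplectic_mul (BlobAux.isSymplectic_VY hY')
        (BlobAux.isSymplectic_ML (isUnit_iff_ne_zero.mpr hL'.det_pos.ne'))
    have hgram := BlobAux.gram_of_image_ball (BlobAux.isUnit_det_of_symplectic hT)
      (BlobAux.isUnit_det_of_symplectic hT') hr himg
    rw [BlobAux.gram_VY_ML hW hY hL hLW, BlobAux.gram_VY_ML hW' hY' hL' hLW'] at hgram
    obtain ⟨e1, e2, -, -⟩ := Matrix.fromBlocks_inj.mp hgram
    refine ⟨e1, ?_⟩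
    have hWdet : IsUnit W.det := isUnit_iff_ne_zero.mpr hW.det_pos.ne'
    have e2' : W * Y = W * Y' := by
      have h := neg_inj.mp e2
      rwa [← e1] at h
    calc Y = W⁻¹ * (W * Y) := by
          rw [← Matrix.mul_assoc, Matrix.nonsing_inv_mul _ hWdet, Matrix.one_mul]
      _ = W⁻¹ * (W * Y') := by rw [e2']
      _ = Y' := by rw [← Matrix.mul_assoc, Matrix.nonsing_inv_mul _ hWdet, Matrix.one_mul]
  · intro W Y L hW hY hL hLW
    exact ⟨VY Y * ML L, BlobAux.isSymplectic_mul (BlobAux.isSymplectic_VY hY)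
      (BlobAux.isSymplectic_ML (isUnit_iff_ne_zero.mpr hL.det_pos.ne')), rfl⟩
  · intro S hS
    obtain ⟨W, Y, L, hW, hY, hL, hLW, hgram⟩ := BlobAux.exists_WYL hS
    have hT : IsSymplectic (VY Y * ML L) :=
      BlobAux.isSymplectic_mul (BlobAux.isSymplectic_VY hY)
        (BlobAux.isSymplectic_ML (isUnit_iff_ne_zero.mpr hL.det_pos.ne'))
    exact ⟨W, Y, L, hW, hY, hL, hLW,
      BlobAux.image_ball_of_gram (BlobAux.isUnit_det_of_symplectic hS)
        (BlobAux.isUnit_det_of_symplectic hT)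
        hgram _⟩
end
end

section
/- (Projection theorem, part (i).) Let ħ > 0 and S ∈ Sp(2n,ℝ), and let X = Π_X(S(B^{2n}(√ħ))) ⊆ ℝⁿ_x and P = Π_P(S(B^{2n}(√ħ))) ⊆ ℝⁿ_p be the orthogonal projections of the quantum blob S(B^{2n}(√ħ)) onto the x-space and the p-space. Then (X, P) is a quantum polar pair: X^ħ ⊆ P. -/
open Matrix

noncomputable section

lemma stdJ_mul_stdJ (n : ℕ) : stdJ n * stdJ n = -1 := by
  rw [stdJ, Matrix.fromBlocks_multiply]
  ext (i|i) (j|j) <;>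
    simp [Matrix.fromBlocks_apply₁₁, Matrix.fromBlocks_apply₁₂,
      Matrix.fromBlocks_apply₂₁, Matrix.fromBlocks_apply₂₂, Matrix.one_apply]

lemma symp_transpose (n : ℕ) (S : Matrix (Fin n ⊕ Fin n) (Fin n ⊕ Fin n) ℝ)
    (hS : Sᵀ * stdJ n * S = stdJ n) : S * stdJ n * Sᵀ = stdJ n := by
  have hL : (-(stdJ n * Sᵀ * stdJ n)) * S = 1 := by
    have h1 : stdJ n * (Sᵀ * stdJ n * S) = stdJ n * stdJ n := by rw [hS]
    rw [stdJ_mul_stdJ] at h1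
    calc (-(stdJ n * Sᵀ * stdJ n)) * S = -(stdJ n * (Sᵀ * stdJ n * S)) := by
          noncomm_ring
      _ = 1 := by rw [h1]; simp
  have hR : S * (-(stdJ n * Sᵀ * stdJ n)) = 1 := mul_eq_one_comm.mp hL
  have h3 : S * stdJ n * Sᵀ * stdJ n = -1 := by
    calc S * stdJ n * Sᵀ * stdJ n = -(S * -(stdJ n * Sᵀ * stdJ n)) := by noncomm_ring
      _ = -1 := by rw [hR]
  have h4 := congrArg (· * stdJ n) h3
  rw [mul_assoc (S * stdJ n * Sᵀ), stdJ_mul_stdJ, mul_neg_one, neg_one_mul,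
    neg_inj] at h4
  exact h4

/-- Projection theorem, part (i): the orthogonal projections `X` and `P` of a quantum
blob `S(B^{2n}(√ℏ))` on the `x`- and `p`-spaces form a quantum polar pair: `X^ℏ ⊆ P`. -/
theorem statement10 (n : ℕ) (ℏ : ℝ) (hℏ : 0 < ℏ)
    (S : Matrix (Fin n ⊕ Fin n) (Fin n ⊕ Fin n) ℝ) (hS : IsSymplectic S) :
    polarDual ℏ ((fun z => z ∘ Sum.inl) '' (S.mulVec '' ballPhase n (Real.sqrt ℏ)))
      ⊆ (fun z => z ∘ Sum.inr) '' (S.mulVec '' ballPhase n (Real.sqrt ℏ)) := by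
  intro p hp
  set phat : (Fin n ⊕ Fin n) → ℝ := Sum.elim p 0 with hphat
  set q : (Fin n ⊕ Fin n) → ℝ := Sᵀ.mulVec phat with hq
  set w : (Fin n ⊕ Fin n) → ℝ := (-(stdJ n)).mulVec q with hwdef
  set t : ℝ := ∑ i, q i ^ 2 with ht
  have ht0 : 0 ≤ t := Finset.sum_nonneg (fun i _ => sq_nonneg _)
  -- the key norm bound: t ≤ ℏ
  have htℏ : t ≤ ℏ := by
    rcases eq_or_lt_of_le ht0 with h0 | h0
    · linarith
    · -- use the test point w₀ = (√ℏ/√t) • q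
      set s : ℝ := Real.sqrt ℏ / Real.sqrt t with hs
      have hst : 0 < Real.sqrt t := Real.sqrt_pos.mpr h0
      set w₀ : (Fin n ⊕ Fin n) → ℝ := fun i => s * q i with hw₀
      have hw₀ball : w₀ ∈ ballPhase n (Real.sqrt ℏ) := by
        show ∑ i, w₀ i ^ 2 ≤ (Real.sqrt ℏ) ^ 2
        have : ∑ i, w₀ i ^ 2 = s ^ 2 * t := by
          rw [ht, Finset.mul_sum]
          exact Finset.sum_congr rfl (fun i _ => by rw [hw₀]; ring)
        have hseq : s ^ 2 * t = ℏ := by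
          rw [hs, div_pow, Real.sq_sqrt hℏ.le, Real.sq_sqrt ht0,
            div_mul_cancel₀ _ h0.ne']
        rw [this, hseq, Real.sq_sqrt hℏ.le]
      have hmem : (S.mulVec w₀) ∘ Sum.inl ∈
          (fun z => z ∘ Sum.inl) '' (S.mulVec '' ballPhase n (Real.sqrt ℏ)) :=
        ⟨S.mulVec w₀, ⟨w₀, hw₀ball, rfl⟩, rfl⟩
      have hb := hp _ hmem
      have hdot : p ⬝ᵥ ((S.mulVec w₀) ∘ Sum.inl) = s * t := by
        have h1 : p ⬝ᵥ ((S.mulVec w₀) ∘ Sum.inl) = phat ⬝ᵥ S.mulVec w₀ := by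
          rw [dotProduct, dotProduct, Fintype.sum_sum_type]
          simp [hphat]
        rw [h1, Matrix.dotProduct_mulVec, ← Matrix.mulVec_transpose, ← hq,
          dotProduct, ht, Finset.mul_sum]
        exact Finset.sum_congr rfl (fun i _ => by rw [hw₀]; ring)
      rw [hdot] at hb
      -- hb : s * t ≤ ℏ, i.e. √ℏ * √t ≤ ℏ
      have hst' : s * t = Real.sqrt ℏ * Real.sqrt t := by
        rw [hs, div_mul_eq_mul_div, mul_div_assoc, Real.div_sqrt]
      rw [hst'] at hb
      have hsq : Real.sqrt t ≤ Real.sqrt ℏ := by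
        have hsℏ : 0 < Real.sqrt ℏ := Real.sqrt_pos.mpr hℏ
        nlinarith [Real.sq_sqrt hℏ.le]
      calc t = Real.sqrt t ^ 2 := (Real.sq_sqrt ht0).symm
        _ ≤ Real.sqrt ℏ ^ 2 := by nlinarith
        _ = ℏ := Real.sq_sqrt hℏ.le
  -- w is in the ball
  have hwq : w = Sum.elim (fun i => -(q (Sum.inr i))) (fun i => q (Sum.inl i)) := by
    have hrep : q = Sum.elim (q ∘ Sum.inl) (q ∘ Sum.inr) := (Sum.elim_comp_inl_inr q).symm
    rw [hwdef]
    nth_rewrite 1 [hrep]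
    rw [stdJ, Matrix.fromBlocks_neg, Matrix.fromBlocks_mulVec]
    simp [Matrix.neg_mulVec]
    ext (i|i) <;> simp
  have hwball : w ∈ ballPhase n (Real.sqrt ℏ) := by
    show ∑ i, w i ^ 2 ≤ (Real.sqrt ℏ) ^ 2
    have : ∑ i, w i ^ 2 = t := by
      rw [hwq, ht, Fintype.sum_sum_type, Fintype.sum_sum_type]
      simp [add_comm]
    rw [this, Real.sq_sqrt hℏ.le]
    exact htℏ
  -- S.mulVec w projects to p
  refine ⟨S.mulVec w, ⟨w, hwball, rfl⟩, ?_⟩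
  have hSJS : S * (-(stdJ n)) * Sᵀ = -(stdJ n) := by
    have := symp_transpose n S hS
    calc S * (-(stdJ n)) * Sᵀ = -(S * stdJ n * Sᵀ) := by noncomm_ring
      _ = -(stdJ n) := by rw [this]
  have hval : S.mulVec w = Sum.elim (0 : Fin n → ℝ) p := by
    rw [hwdef, hq, Matrix.mulVec_mulVec, Matrix.mulVec_mulVec, hSJS, hphat,
      stdJ, Matrix.fromBlocks_neg, Matrix.fromBlocks_mulVec]
    simp [Matrix.neg_mulVec]
  show (S.mulVec w) ∘ Sum.inr = p
  rw [hval]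
  funext i
  rfl
end
end

section
/- (Projection theorem, part (ii).) Let ħ > 0 and S ∈ Sp(2n,ℝ), and let X and P be the orthogonal projections of the quantum blob S(B^{2n}(√ħ)) onto ℝⁿ_x and ℝⁿ_p. Write M = (SSᵀ)⁻¹ in n×n block form [[M_XX, M_XP],[M_PX, M_PP]]. Then the equality X^ħ = P holds if and only if M_XP = 0, which is the case if and only if S(B^{2n}(√ħ)) = M_L(B^{2n}(√ħ)) for some L ∈ GL(n,ℝ). -/
open Matrix

noncomputable section

namespace Statement11Aux

set_option linter.unusedSectionVars false

variable {ι κ : Type*} [Fintype ι] [Fintype κ] [DecidableEq ι] [DecidableEq κ]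

lemma star_eq (z : ι → ℝ) : star z = z := by funext i; exact star_trivial _

lemma dot_sq_le (u w : ι → ℝ) : (u ⬝ᵥ w) ^ 2 ≤ (u ⬝ᵥ u) * (w ⬝ᵥ w) := by
  simpa [dotProduct, sq] using Finset.sum_mul_sq_le_sq_mul_sq Finset.univ u w

lemma dot_self_nonneg (u : ι → ℝ) : 0 ≤ u ⬝ᵥ u :=
  Finset.sum_nonneg fun i _ => mul_self_nonneg _

lemma sym_of_posDef {M : Matrix ι ι ℝ} (hM : M.PosDef) : Mᵀ = M := by
  rw [← conjTranspose_eq_transpose_of_trivial]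
  exact hM.1

lemma posDef_mul_transpose {T : Matrix ι ι ℝ} (hT : IsUnit T) : (T * Tᵀ).PosDef := by
  rw [posDef_iff_dotProduct_mulVec]
  constructor
  · show (T * Tᵀ)ᴴ = T * Tᵀ
    rw [conjTranspose_eq_transpose_of_trivial, transpose_mul, transpose_transpose]
  · intro x hx
    have hTu : IsUnit Tᵀ := by
      rw [isUnit_iff_isUnit_det, det_transpose, ← isUnit_iff_isUnit_det]; exact hT
    have hinj : Function.Injective (Tᵀ).mulVec := mulVec_injective_iff_isUnit.2 hTu
    have hy : Tᵀ *ᵥ x ≠ 0 := by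
      intro h0
      exact hx (hinj (by simpa [mulVec_zero] using h0))
    have hq : x ⬝ᵥ (T * Tᵀ) *ᵥ x = (Tᵀ *ᵥ x) ⬝ᵥ (Tᵀ *ᵥ x) := by
      rw [← mulVec_mulVec, dotProduct_mulVec, ← mulVec_transpose]
    rw [star_eq, hq]
    have : (Tᵀ *ᵥ x) ⬝ᵥ (Tᵀ *ᵥ x) ≠ 0 := fun h => hy (dotProduct_self_eq_zero.mp h)
    exact lt_of_le_of_ne (dot_self_nonneg _) (Ne.symm this)

lemma image_ball {ℏ : ℝ} (hℏ : 0 ≤ ℏ) (R : Matrix κ ι ℝ) (hR : IsUnit (R * Rᵀ)) :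
    R.mulVec '' {w | w ⬝ᵥ w ≤ ℏ} = {x | x ⬝ᵥ (R * Rᵀ)⁻¹ *ᵥ x ≤ ℏ} := by
  have hdet : IsUnit (R * Rᵀ).det := (isUnit_iff_isUnit_det _).mp hR
  have hmul : (R * Rᵀ) * (R * Rᵀ)⁻¹ = 1 := mul_nonsing_inv _ hdet
  have key : ∀ (v : κ → ℝ) (w' : ι → ℝ), (R *ᵥ w') ⬝ᵥ v = (Rᵀ *ᵥ v) ⬝ᵥ w' := by
    intro v w'
    have h : w' ⬝ᵥ (Rᵀ *ᵥ v) = (R *ᵥ w') ⬝ᵥ v := by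
      rw [dotProduct_mulVec, vecMul_transpose]
    rw [← h, dotProduct_comm]
  have hRu : ∀ x : κ → ℝ, R *ᵥ (Rᵀ *ᵥ ((R * Rᵀ)⁻¹ *ᵥ x)) = x := by
    intro x
    rw [mulVec_mulVec, mulVec_mulVec, hmul, one_mulVec]
  ext x
  simp only [Set.mem_image, Set.mem_setOf_eq]
  constructor
  · rintro ⟨w, hw, rfl⟩
    set v : κ → ℝ := (R * Rᵀ)⁻¹ *ᵥ (R *ᵥ w) with hv
    set u : ι → ℝ := Rᵀ *ᵥ v with hu
    have hs1 : (R *ᵥ w) ⬝ᵥ v = u ⬝ᵥ w := key v w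
    have hs2 : u ⬝ᵥ u = (R *ᵥ u) ⬝ᵥ v := (key v u).symm
    have hs3 : R *ᵥ u = R *ᵥ w := hRu (R *ᵥ w)
    have huu : u ⬝ᵥ u = u ⬝ᵥ w := by rw [hs2, hs3, hs1]
    have hs : (R *ᵥ w) ⬝ᵥ ((R * Rᵀ)⁻¹ *ᵥ (R *ᵥ w)) = u ⬝ᵥ u := by
      rw [hs2, hs3, hs1]
    have hCS : (u ⬝ᵥ w) ^ 2 ≤ (u ⬝ᵥ u) * (w ⬝ᵥ w) := dot_sq_le u w
    rw [huu] at hCS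
    have hnn : 0 ≤ u ⬝ᵥ w := huu ▸ dot_self_nonneg u
    show (R *ᵥ w) ⬝ᵥ ((R * Rᵀ)⁻¹ *ᵥ (R *ᵥ w)) ≤ ℏ
    rw [hs, huu]
    rcases eq_or_lt_of_le hnn with h0 | hpos
    · rw [← h0]; exact hℏ
    · nlinarith [hCS, hw, hpos]
  · intro hx
    set v : κ → ℝ := (R * Rᵀ)⁻¹ *ᵥ x with hv
    set u : ι → ℝ := Rᵀ *ᵥ v with hu
    refine ⟨u, ?_, hRu x⟩
    show u ⬝ᵥ u ≤ ℏ
    have hs2 : u ⬝ᵥ u = (R *ᵥ u) ⬝ᵥ v := (key v u).symm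
    rw [hs2, hRu x]
    exact hx

lemma polar_ellipsoid {n : ℕ} {ℏ : ℝ} (hℏ : 0 < ℏ) {M : Matrix (Fin n) (Fin n) ℝ}
    (hM : M.PosDef) :
    polarDual ℏ {x | x ⬝ᵥ M *ᵥ x ≤ ℏ} = {p | p ⬝ᵥ M⁻¹ *ᵥ p ≤ ℏ} := by
  have hdet : IsUnit M.det := hM.det_pos.ne'.isUnit
  have hMsym : Mᵀ = M := sym_of_posDef hM
  have hMM : M * M⁻¹ = 1 := mul_nonsing_inv _ hdet
  have hMM' : M⁻¹ * M = 1 := nonsing_inv_mul _ hdet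
  ext p
  simp only [polarDual, Set.mem_setOf_eq]
  constructor
  · intro hp
    set α := p ⬝ᵥ M⁻¹ *ᵥ p with hα
    have hαnn : 0 ≤ α := by
      have := hM.inv.posSemidef.dotProduct_mulVec_nonneg p
      rwa [star_eq] at this
    rcases eq_or_lt_of_le hαnn with h0 | hαpos
    · rw [← h0]; exact hℏ.le
    · set c := Real.sqrt (ℏ / α) with hc
      have hcnn : 0 ≤ c := Real.sqrt_nonneg _
      have hc2 : c ^ 2 = ℏ / α := Real.sq_sqrt (by positivity)
      set x := c • (M⁻¹ *ᵥ p) with hx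
      have hMx : M *ᵥ x = c • p := by
        rw [hx, mulVec_smul, mulVec_mulVec, hMM, one_mulVec]
      have hyp : (M⁻¹ *ᵥ p) ⬝ᵥ p = α := by rw [hα, dotProduct_comm]
      have hxq : x ⬝ᵥ M *ᵥ x = ℏ := by
        rw [hMx, hx, smul_dotProduct, dotProduct_smul, hyp, smul_eq_mul, smul_eq_mul,
          ← mul_assoc, ← sq, hc2, div_mul_cancel₀ _ hαpos.ne']
      have hle := hp x (le_of_eq hxq)
      have hpx : p ⬝ᵥ x = c * α := by
        rw [hx, dotProduct_smul, smul_eq_mul, ← hyp, dotProduct_comm]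
      rw [hpx] at hle
      have h4 : ℏ * α = (c * α) * (c * α) := by
        have : c * c = ℏ / α := by rw [← sq, hc2]
        field_simp at this ⊢
        nlinarith [this]
      nlinarith [mul_le_mul hle hle (by positivity) hℏ.le, h4, hαpos, hℏ]
  · intro hp x hx
    have hnn : 0 ≤ (p - M *ᵥ x) ⬝ᵥ M⁻¹ *ᵥ (p - M *ᵥ x) := by
      have := hM.inv.posSemidef.dotProduct_mulVec_nonneg (p - M *ᵥ x)
      rwa [star_eq] at this
    have e1 : M⁻¹ *ᵥ (M *ᵥ x) = x := by rw [mulVec_mulVec, hMM', one_mulVec]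
    have e2 : (M *ᵥ x) ⬝ᵥ (M⁻¹ *ᵥ p) = p ⬝ᵥ x := by
      rw [dotProduct_comm, dotProduct_mulVec, ← mulVec_transpose, hMsym, mulVec_mulVec,
        hMM, one_mulVec]
    have e3 : (M *ᵥ x) ⬝ᵥ x = x ⬝ᵥ M *ᵥ x := dotProduct_comm _ _
    have expand : (p - M *ᵥ x) ⬝ᵥ M⁻¹ *ᵥ (p - M *ᵥ x)
        = p ⬝ᵥ M⁻¹ *ᵥ p - 2 * (p ⬝ᵥ x) + x ⬝ᵥ M *ᵥ x := by
      rw [mulVec_sub, dotProduct_sub, sub_dotProduct, sub_dotProduct, e1, e2, e3]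
      have e4 : p ⬝ᵥ x = x ⬝ᵥ p := dotProduct_comm _ _
      rw [e4]; ring
    rw [expand] at hnn
    linarith [hp, hx, hnn]

lemma ellipsoid_inj {ℏ : ℝ} (hℏ : 0 < ℏ) {P Q : Matrix ι ι ℝ} (hP : P.PosDef) (hQ : Q.PosDef)
    (h : {z : ι → ℝ | z ⬝ᵥ P *ᵥ z ≤ ℏ} = {z : ι → ℝ | z ⬝ᵥ Q *ᵥ z ≤ ℏ}) : P = Q := by
  have hle : ∀ P' Q' : Matrix ι ι ℝ, P'.PosDef →
      ({z : ι → ℝ | z ⬝ᵥ P' *ᵥ z ≤ ℏ} ⊆ {z : ι → ℝ | z ⬝ᵥ Q' *ᵥ z ≤ ℏ}) →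
      ∀ z, z ⬝ᵥ Q' *ᵥ z ≤ z ⬝ᵥ P' *ᵥ z := by
    intro P' Q' hP' hsub z
    by_cases hz : z = 0
    · simp [hz]
    · have ha : 0 < z ⬝ᵥ P' *ᵥ z := by
        have := hP'.dotProduct_mulVec_pos hz; rwa [star_eq] at this
      set a := z ⬝ᵥ P' *ᵥ z with hadef
      set t := Real.sqrt (ℏ / a) with htdef
      have ht2 : t ^ 2 = ℏ / a := Real.sq_sqrt (by positivity)
      have hmem : (t • z) ⬝ᵥ P' *ᵥ (t • z) ≤ ℏ := by
        rw [mulVec_smul, dotProduct_smul, smul_dotProduct, smul_eq_mul, smul_eq_mul,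
          ← mul_assoc, ← sq, ht2, ← hadef, div_mul_cancel₀ _ ha.ne']
      have hthis := hsub hmem
      simp only [Set.mem_setOf_eq] at hthis
      rw [mulVec_smul, dotProduct_smul, smul_dotProduct, smul_eq_mul, smul_eq_mul,
        ← mul_assoc, ← sq, ht2] at hthis
      rw [div_mul_eq_mul_div, div_le_iff₀ ha] at hthis
      exact le_of_mul_le_mul_left (by linarith [hthis]) hℏ
  have hforms : ∀ z : ι → ℝ, z ⬝ᵥ P *ᵥ z = z ⬝ᵥ Q *ᵥ z := fun z =>
    le_antisymm (hle Q P hQ h.symm.le z) (hle P Q hP h.le z)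
  have hPsym : Pᵀ = P := sym_of_posDef hP
  have hQsym : Qᵀ = Q := sym_of_posDef hQ
  have key : ∀ (R : Matrix ι ι ℝ) (a b : ι),
      (Pi.single a 1 : ι → ℝ) ⬝ᵥ R *ᵥ (Pi.single b 1 : ι → ℝ) = R a b := by
    intro R a b
    rw [mulVec_single, single_dotProduct]
    simp
  ext i j
  have h1 := hforms (Pi.single i 1)
  have h2 := hforms (Pi.single j 1)
  have h3 := hforms (Pi.single i 1 + Pi.single j 1)
  rw [key, key] at h1
  rw [key, key] at h2
  simp only [mulVec_add, dotProduct_add, add_dotProduct, key] at h3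
  have hPij : P j i = P i j := by
    have := congrFun (congrFun hPsym i) j
    simpa [transpose_apply] using this
  have hQij : Q j i = Q i j := by
    have := congrFun (congrFun hQsym i) j
    simpa [transpose_apply] using this
  linarith

lemma quad_blocks₁₁ (G : Matrix (ι ⊕ κ) (ι ⊕ κ) ℝ) (x : ι → ℝ) :
    (Sum.elim x 0 : ι ⊕ κ → ℝ) ⬝ᵥ G *ᵥ (Sum.elim x 0) = x ⬝ᵥ G.toBlocks₁₁ *ᵥ x := by
  simp [dotProduct, mulVec, Fintype.sum_sum_type, toBlocks₁₁]

lemma quad_blocks₂₂ (G : Matrix (ι ⊕ κ) (ι ⊕ κ) ℝ) (x : κ → ℝ) :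
    (Sum.elim 0 x : ι ⊕ κ → ℝ) ⬝ᵥ G *ᵥ (Sum.elim 0 x) = x ⬝ᵥ G.toBlocks₂₂ *ᵥ x := by
  simp [dotProduct, mulVec, Fintype.sum_sum_type, toBlocks₂₂]

lemma posDef_toBlocks₁₁ {G : Matrix (ι ⊕ κ) (ι ⊕ κ) ℝ} (hG : G.PosDef) :
    G.toBlocks₁₁.PosDef := by
  rw [posDef_iff_dotProduct_mulVec]
  constructor
  · show _ᴴ = _
    rw [conjTranspose_eq_transpose_of_trivial]
    ext i j
    have := congrFun (congrFun (hG.1.eq) (Sum.inl i)) (Sum.inl j)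
    rw [conjTranspose_eq_transpose_of_trivial] at this
    simpa [toBlocks₁₁] using this
  · intro x hx
    have hz : (Sum.elim x 0 : ι ⊕ κ → ℝ) ≠ 0 := by
      intro h
      apply hx; funext i
      exact congrFun h (Sum.inl i)
    have := hG.dotProduct_mulVec_pos hz
    rw [star_eq, quad_blocks₁₁] at this
    rwa [star_eq]

lemma posDef_toBlocks₂₂ {G : Matrix (ι ⊕ κ) (ι ⊕ κ) ℝ} (hG : G.PosDef) :
    G.toBlocks₂₂.PosDef := by
  rw [posDef_iff_dotProduct_mulVec]
  constructor
  · show _ᴴ = _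
    rw [conjTranspose_eq_transpose_of_trivial]
    ext i j
    have := congrFun (congrFun (hG.1.eq) (Sum.inr i)) (Sum.inr j)
    rw [conjTranspose_eq_transpose_of_trivial] at this
    simpa [toBlocks₂₂] using this
  · intro x hx
    have hz : (Sum.elim 0 x : ι ⊕ κ → ℝ) ≠ 0 := by
      intro h
      apply hx; funext i
      exact congrFun h (Sum.inr i)
    have := hG.dotProduct_mulVec_pos hz
    rw [star_eq, quad_blocks₂₂] at this
    rwa [star_eq]

end Statement11Aux

open Statement11Aux
open scoped MatrixOrder

/-- Projection theorem, part (ii): with `X`, `P` the projections of the quantum blob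
`S(B^{2n}(√ℏ))` and `M = (SSᵀ)⁻¹` in block form, `X^ℏ = P` holds iff the off-diagonal
block `M_XP` vanishes, which is the case iff `S(B^{2n}(√ℏ)) = M_L(B^{2n}(√ℏ))` for some
`L ∈ GL(n, ℝ)`. -/
theorem statement11 (n : ℕ) (ℏ : ℝ) (hℏ : 0 < ℏ)
    (S : Matrix (Fin n ⊕ Fin n) (Fin n ⊕ Fin n) ℝ) (hS : IsSymplectic S) :
    (polarDual ℏ ((fun z => z ∘ Sum.inl) '' (S.mulVec '' ballPhase n (Real.sqrt ℏ)))
        = (fun z => z ∘ Sum.inr) '' (S.mulVec '' ballPhase n (Real.sqrt ℏ))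
      ↔ ((S * Sᵀ)⁻¹).toBlocks₁₂ = 0) ∧
    (((S * Sᵀ)⁻¹).toBlocks₁₂ = 0 ↔
      ∃ L : Matrix (Fin n) (Fin n) ℝ, IsUnit L ∧
        S.mulVec '' ballPhase n (Real.sqrt ℏ)
          = (ML L).mulVec '' ballPhase n (Real.sqrt ℏ)) := by
  classical
  -- the ball as a dot-product set
  have hBall : ballPhase n (Real.sqrt ℏ) = {w : (Fin n ⊕ Fin n) → ℝ | w ⬝ᵥ w ≤ ℏ} := by
    ext z
    simp only [ballPhase, Set.mem_setOf_eq, Real.sq_sqrt hℏ.le, dotProduct, sq]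
  -- J facts
  have hJblocks : stdJ n = fromBlocks 0 1 (-1) 0 := rfl
  have hJJ : stdJ n * (-(stdJ n)) = 1 := by
    rw [hJblocks]
    rw [fromBlocks_neg, fromBlocks_multiply]
    simp only [Matrix.mul_zero, Matrix.zero_mul, Matrix.mul_neg, Matrix.mul_one,
      Matrix.one_mul, neg_zero, neg_neg, add_zero, zero_add, Matrix.neg_mul]
    exact fromBlocks_one
  have hJdet : IsUnit (stdJ n).det := by
    have hd := congrArg det hJJ
    rw [det_mul, det_one] at hd
    exact IsUnit.of_mul_eq_one _ hd
  have hJinv : (stdJ n)⁻¹ = -(stdJ n) := inv_eq_right_inv hJJ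
  -- S is invertible
  have hSdet : IsUnit S.det := by
    have hd := congrArg det hS
    rw [det_mul, det_mul, det_transpose] at hd
    have hJne : (stdJ n).det ≠ 0 := hJdet.ne_zero
    have h1 : S.det * S.det = 1 := by
      apply mul_right_cancel₀ hJne
      rw [one_mul]
      linear_combination hd
    exact IsUnit.of_mul_eq_one _ h1
  have hSu : IsUnit S := (isUnit_iff_isUnit_det S).mpr hSdet
  have hSTdet : IsUnit Sᵀ.det := by rw [det_transpose]; exact hSdet
  -- S J Sᵀ = J
  have hSJS : S * stdJ n * Sᵀ = stdJ n := by
    have h1 : ((stdJ n)⁻¹ * Sᵀ * stdJ n) * S = 1 := by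
      calc ((stdJ n)⁻¹ * Sᵀ * stdJ n) * S = (stdJ n)⁻¹ * (Sᵀ * stdJ n * S) := by
            noncomm_ring
        _ = (stdJ n)⁻¹ * stdJ n := by rw [hS]
        _ = 1 := nonsing_inv_mul _ hJdet
    have h2 : S * ((stdJ n)⁻¹ * Sᵀ * stdJ n) = 1 := mul_eq_one_comm.mp h1
    have h4 : (S * (stdJ n)⁻¹ * Sᵀ) * stdJ n = 1 := by
      calc (S * (stdJ n)⁻¹ * Sᵀ) * stdJ n = S * ((stdJ n)⁻¹ * Sᵀ * stdJ n) := by noncomm_ring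
        _ = 1 := h2
    have h3 : S * (stdJ n)⁻¹ * Sᵀ = (stdJ n)⁻¹ := by
      calc S * (stdJ n)⁻¹ * Sᵀ
          = (S * (stdJ n)⁻¹ * Sᵀ) * (stdJ n * (stdJ n)⁻¹) := by
            rw [mul_nonsing_inv _ hJdet, mul_one]
        _ = ((S * (stdJ n)⁻¹ * Sᵀ) * stdJ n) * (stdJ n)⁻¹ := by noncomm_ring
        _ = (stdJ n)⁻¹ := by rw [h4, one_mul]
    rw [hJinv] at h3
    have h5 : -(S * stdJ n * Sᵀ) = -(stdJ n) := by
      rw [← h3]; noncomm_ring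
    exact neg_injective h5
  -- G = S Sᵀ
  set G := S * Sᵀ with hGdef
  have hGu : IsUnit G := by
    rw [isUnit_iff_isUnit_det, hGdef, det_mul]
    exact hSdet.mul hSTdet
  have hGdetu : IsUnit G.det := (isUnit_iff_isUnit_det _).mp hGu
  have hGsym : Gᵀ = G := by rw [hGdef, transpose_mul, transpose_transpose]
  have hGJG : G * stdJ n * G = stdJ n := by
    calc G * stdJ n * G = S * (Sᵀ * stdJ n * S) * Sᵀ := by rw [hGdef]; noncomm_ring
      _ = S * stdJ n * Sᵀ := by rw [hS]
      _ = stdJ n := hSJS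
  set A := G.toBlocks₁₁ with hAdef
  set B := G.toBlocks₁₂ with hBdef
  set C := G.toBlocks₂₂ with hCdef
  have hB21 : G.toBlocks₂₁ = Bᵀ := by
    ext i j
    have := congrFun (congrFun hGsym (Sum.inr i)) (Sum.inl j)
    simp only [transpose_apply] at this
    simpa [toBlocks₂₁, toBlocks₁₂, hBdef] using this.symm
  have hGblocks : G = fromBlocks A B Bᵀ C := by
    rw [hAdef, hBdef, hCdef, ← hB21, fromBlocks_toBlocks]
  -- relations
  have hrel := hGJG
  rw [hGblocks, hJblocks, fromBlocks_multiply, fromBlocks_multiply] at hrel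
  simp only [Matrix.mul_zero, Matrix.zero_mul, Matrix.mul_one, Matrix.one_mul,
    Matrix.mul_neg, Matrix.neg_mul, add_zero, zero_add, mul_neg_one,
    neg_mul_neg] at hrel
  rw [fromBlocks_inj] at hrel
  obtain ⟨r11, r12, r21, r22⟩ := hrel
  -- r11 : -(B*A) + A*Bᵀ = 0 (roughly); normalize
  have r11' : B * A = A * Bᵀ := by
    have h := r11
    rw [neg_add_eq_zero] at h
    exact h
  have r12' : A * C = 1 + B * B := by
    have h : A * C - B * B = 1 := by rw [sub_eq_add_neg, add_comm]; exact r12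
    rw [sub_eq_iff_eq_add'] at h
    rw [h]; abel
  have r22' : Bᵀ * C = C * B := by
    have h := r22
    rw [neg_add_eq_zero] at h
    exact h.symm
  have r21' : C * A = 1 + Bᵀ * Bᵀ := by
    have h : Bᵀ * Bᵀ - C * A = -1 := by rw [sub_eq_add_neg, add_comm]; exact r21
    rw [sub_eq_iff_eq_add] at h
    rw [h]; abel
  -- positivity
  have hGpos : G.PosDef := posDef_mul_transpose hSu
  have hApos : A.PosDef := posDef_toBlocks₁₁ hGpos
  have hCpos : C.PosDef := posDef_toBlocks₂₂ hGpos
  have hAdetu : IsUnit A.det := hApos.det_pos.ne'.isUnit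
  have hCdetu : IsUnit C.det := hCpos.det_pos.ne'.isUnit
  -- inverse blocks
  have hMinv : G⁻¹ = fromBlocks C (-Bᵀ) (-B) A := by
    apply inv_eq_right_inv
    rw [hGblocks, fromBlocks_multiply]
    have e11 : A * C + B * -B = 1 := by
      rw [Matrix.mul_neg, r12']; abel
    have e12 : A * -Bᵀ + B * A = 0 := by
      rw [Matrix.mul_neg, r11']; abel
    have e21 : Bᵀ * C + C * -B = 0 := by
      rw [Matrix.mul_neg, r22']; abel
    have e22 : Bᵀ * -Bᵀ + C * A = 1 := by
      rw [Matrix.mul_neg, r21']; abel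
    rw [e11, e12, e21, e22, fromBlocks_one]
  have hM12 : G⁻¹.toBlocks₁₂ = -Bᵀ := by rw [hMinv]; rfl
  -- square root of C
  have hCps := hCpos.posSemidef
  set T := CFC.sqrt C with hTdef
  have hTT : T * T = C := CFC.sqrt_mul_sqrt_self C hCps.nonneg
  have hTsym : Tᵀ = T := by
    rw [← conjTranspose_eq_transpose_of_trivial]
    exact (CFC.sqrt_nonneg C).posSemidef.1
  have hTdetu : IsUnit T.det := by
    have hdet2 : T.det * T.det = C.det := by rw [← det_mul, hTT]
    have hCdet : 0 < C.det := hCpos.det_pos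
    refine isUnit_iff_ne_zero.mpr fun h0 => ?_
    rw [h0, zero_mul] at hdet2
    exact hCdet.ne hdet2
  have hTu : IsUnit T := (isUnit_iff_isUnit_det T).mpr hTdetu
  have hTinv : T⁻¹ * T = 1 := nonsing_inv_mul _ hTdetu
  have hTinv' : T * T⁻¹ = 1 := mul_nonsing_inv _ hTdetu
  have hCinv : C⁻¹ = T⁻¹ * T⁻¹ := by rw [← hTT, Matrix.mul_inv_rev]
  -- key equivalence : B = 0 ↔ A * C = 1
  have hkey : B = 0 ↔ A * C = 1 := by
    constructor
    · intro hB0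
      rw [r12', hB0, Matrix.zero_mul, add_zero]
    · intro hAC
      have hBB : B * B = 0 := by
        have h := r12'
        rw [hAC] at h
        exact (left_eq_add.mp h)
      set B' := T * B * T⁻¹ with hB'
      have hB'B' : B' * B' = 0 := by
        calc B' * B' = T * B * (T⁻¹ * T) * B * T⁻¹ := by rw [hB']; noncomm_ring
          _ = T * (B * B) * T⁻¹ := by rw [hTinv]; noncomm_ring
          _ = 0 := by rw [hBB, Matrix.mul_zero, Matrix.zero_mul]
      have hBt : Bᵀ = C * B * C⁻¹ := by
        calc Bᵀ = Bᵀ * (C * C⁻¹) := by rw [mul_nonsing_inv _ hCdetu, mul_one]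
          _ = (Bᵀ * C) * C⁻¹ := by rw [Matrix.mul_assoc]
          _ = (C * B) * C⁻¹ := by rw [r22']
          _ = C * B * C⁻¹ := rfl
      have hB'sym : B'ᵀ = B' := by
        calc B'ᵀ = (T⁻¹)ᵀ * (Bᵀ * Tᵀ) := by
              rw [hB', transpose_mul, transpose_mul]
          _ = T⁻¹ * (Bᵀ * T) := by rw [transpose_nonsing_inv, hTsym]
          _ = T⁻¹ * (C * B * C⁻¹ * T) := by rw [hBt]
          _ = T⁻¹ * ((T * T) * B * (T⁻¹ * T⁻¹) * T) := by rw [hCinv, ← hTT]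
          _ = (T⁻¹ * T) * (T * B * T⁻¹) * (T⁻¹ * T) := by noncomm_ring
          _ = B' := by rw [hTinv, one_mul, mul_one, hB']
      have hB'H : B'ᴴ * B' = 0 := by
        rw [conjTranspose_eq_transpose_of_trivial, hB'sym, hB'B']
      have hB'0 : B' = 0 := conjTranspose_mul_self_eq_zero.mp hB'H
      have hBrec : B = T⁻¹ * B' * T := by
        calc B = (T⁻¹ * T) * B * (T⁻¹ * T) := by rw [hTinv, one_mul, mul_one]
          _ = T⁻¹ * (T * B * T⁻¹) * T := by noncomm_ring
          _ = T⁻¹ * B' * T := by rw [hB']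
      rw [hBrec, hB'0, Matrix.mul_zero, Matrix.zero_mul]
  -- blob as an ellipsoid
  have hIm : S.mulVec '' ballPhase n (Real.sqrt ℏ)
      = {z : (Fin n ⊕ Fin n) → ℝ | z ⬝ᵥ G⁻¹ *ᵥ z ≤ ℏ} := by
    rw [hBall, image_ball hℏ.le S (by rw [← hGdef]; exact hGu)]
  -- projections
  have hRt : (fun z : (Fin n ⊕ Fin n) → ℝ => z ∘ Sum.inl) '' (S.mulVec '' ballPhase n (Real.sqrt ℏ))
      = (S.submatrix Sum.inl id).mulVec '' {w : (Fin n ⊕ Fin n) → ℝ | w ⬝ᵥ w ≤ ℏ} := by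
    rw [hBall, Set.image_image]
    rfl
  have hRb : (fun z : (Fin n ⊕ Fin n) → ℝ => z ∘ Sum.inr) '' (S.mulVec '' ballPhase n (Real.sqrt ℏ))
      = (S.submatrix Sum.inr id).mulVec '' {w : (Fin n ⊕ Fin n) → ℝ | w ⬝ᵥ w ≤ ℏ} := by
    rw [hBall, Set.image_image]
    rfl
  have hRtA : (S.submatrix Sum.inl id) * (S.submatrix Sum.inl id)ᵀ = A := by
    ext i j
    simp [Matrix.mul_apply, hAdef, toBlocks₁₁, hGdef]
  have hRbC : (S.submatrix Sum.inr id) * (S.submatrix Sum.inr id)ᵀ = C := by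
    ext i j
    simp [Matrix.mul_apply, hCdef, toBlocks₂₂, hGdef]
  have hXset : (fun z : (Fin n ⊕ Fin n) → ℝ => z ∘ Sum.inl) '' (S.mulVec '' ballPhase n (Real.sqrt ℏ))
      = {x : Fin n → ℝ | x ⬝ᵥ A⁻¹ *ᵥ x ≤ ℏ} := by
    rw [hRt, image_ball hℏ.le _ (by rw [hRtA]; exact hApos.isUnit), hRtA]
  have hPset : (fun z : (Fin n ⊕ Fin n) → ℝ => z ∘ Sum.inr) '' (S.mulVec '' ballPhase n (Real.sqrt ℏ))
      = {p : Fin n → ℝ | p ⬝ᵥ C⁻¹ *ᵥ p ≤ ℏ} := by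
    rw [hRb, image_ball hℏ.le _ (by rw [hRbC]; exact hCpos.isUnit), hRbC]
  have hpolar : polarDual ℏ
      ((fun z : (Fin n ⊕ Fin n) → ℝ => z ∘ Sum.inl) '' (S.mulVec '' ballPhase n (Real.sqrt ℏ)))
      = {p : Fin n → ℝ | p ⬝ᵥ A *ᵥ p ≤ ℏ} := by
    rw [hXset, polar_ellipsoid hℏ hApos.inv, nonsing_inv_nonsing_inv _ hAdetu]
  constructor
  · -- part 1
    constructor
    · intro hXP
      have hACinv : A = C⁻¹ := by
        apply ellipsoid_inj hℏ hApos hCpos.inv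
        rw [← hpolar, ← hPset]
        exact hXP
      have hAC : A * C = 1 := by rw [hACinv]; exact nonsing_inv_mul _ hCdetu
      have hB0 : B = 0 := hkey.mpr hAC
      rw [hM12, hB0, transpose_zero, neg_zero]
    · intro hM0
      have hBt0 : -Bᵀ = 0 := hM12.symm.trans hM0
      have hB0 : B = 0 := by
        have h := neg_eq_zero.mp hBt0
        rw [← transpose_transpose B, h, transpose_zero]
      have hAC : A * C = 1 := hkey.mp hB0
      have hACinv : A = C⁻¹ := (inv_eq_left_inv hAC).symm
      rw [hpolar, hPset, hACinv]
  · -- part 2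
    constructor
    · intro hM0
      have hBt0 : -Bᵀ = 0 := hM12.symm.trans hM0
      have hB0 : B = 0 := by
        have h := neg_eq_zero.mp hBt0
        rw [← transpose_transpose B, h, transpose_zero]
      have hAC : A * C = 1 := hkey.mp hB0
      have hACinv : C⁻¹ = A := inv_eq_left_inv hAC
      refine ⟨T, hTu, ?_⟩
      have hMLT : ML T * (ML T)ᵀ = G := by
        rw [ML, fromBlocks_transpose, fromBlocks_multiply]
        simp only [Matrix.mul_zero, Matrix.zero_mul, add_zero, zero_add, transpose_zero]
        rw [hTsym, transpose_nonsing_inv, hTsym, ← hCinv, hACinv, hTT, hGblocks, hB0,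
          transpose_zero]
      have hMLu : IsUnit (ML T * (ML T)ᵀ) := by rw [hMLT]; exact hGu
      rw [hIm, hBall, image_ball hℏ.le (ML T) hMLu, hMLT]
    · rintro ⟨L, hLu, hEq⟩
      have hLdetu : IsUnit L.det := (isUnit_iff_isUnit_det L).mp hLu
      have hLinvu : IsUnit L⁻¹ := isUnit_nonsing_inv_iff.mpr hLu
      have hLinvdetu : IsUnit L⁻¹.det := (isUnit_iff_isUnit_det _).mp hLinvu
      have hLTdetu : IsUnit Lᵀ.det := by rw [det_transpose]; exact hLdetu
      have hMLu : IsUnit (ML L) := by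
        have hmul1 : ML L * (fromBlocks L 0 0 (Lᵀ)⁻¹) = 1 := by
          rw [ML, fromBlocks_multiply]
          simp only [Matrix.mul_zero, Matrix.zero_mul, add_zero, zero_add]
          rw [nonsing_inv_mul _ hLdetu, mul_nonsing_inv _ hLTdetu, fromBlocks_one]
        have hd := congrArg det hmul1
        rw [det_mul, det_one] at hd
        exact (isUnit_iff_isUnit_det _).mpr (IsUnit.of_mul_eq_one _ hd)
      have hMLdetu : IsUnit (ML L).det := (isUnit_iff_isUnit_det _).mp hMLu
      have hKu : IsUnit (ML L * (ML L)ᵀ) := by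
        rw [isUnit_iff_isUnit_det, det_mul, det_transpose]
        exact hMLdetu.mul hMLdetu
      have hImL : (ML L).mulVec '' ballPhase n (Real.sqrt ℏ)
          = {z : (Fin n ⊕ Fin n) → ℝ | z ⬝ᵥ (ML L * (ML L)ᵀ)⁻¹ *ᵥ z ≤ ℏ} := by
        rw [hBall, image_ball hℏ.le _ hKu]
      have hGK : G⁻¹ = (ML L * (ML L)ᵀ)⁻¹ := by
        apply ellipsoid_inj hℏ (posDef_mul_transpose hSu).inv (posDef_mul_transpose hMLu).inv
        rw [← hIm, ← hImL]
        exact hEq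
      -- compute the inverse of the block-diagonal K
      have hK : ML L * (ML L)ᵀ = fromBlocks (L⁻¹ * (L⁻¹)ᵀ) 0 0 (Lᵀ * L) := by
        rw [ML, fromBlocks_transpose, fromBlocks_multiply]
        simp only [Matrix.mul_zero, Matrix.zero_mul, add_zero, zero_add, transpose_zero,
          transpose_transpose]
      have hPdetu : IsUnit (L⁻¹ * (L⁻¹)ᵀ).det := by
        rw [det_mul, det_transpose]
        exact hLinvdetu.mul hLinvdetu
      have hQdetu : IsUnit (Lᵀ * L).det := by
        rw [det_mul]
        exact hLTdetu.mul hLdetu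
      have hKinv : (ML L * (ML L)ᵀ)⁻¹
          = fromBlocks (L⁻¹ * (L⁻¹)ᵀ)⁻¹ 0 0 ((Lᵀ * L)⁻¹) := by
        apply inv_eq_right_inv
        rw [hK, fromBlocks_multiply]
        simp only [Matrix.mul_zero, Matrix.zero_mul, add_zero, zero_add]
        rw [mul_nonsing_inv _ hPdetu, mul_nonsing_inv _ hQdetu, fromBlocks_one]
      rw [hGK, hKinv]
      rfl
end
end

section
/- Let ħ > 0 and let M be a real symmetric positive definite 2n×2n matrix with n×n block form M = [[M_XX, M_XP],[M_PX, M_PP]]. Then the orthogonal projection of the ellipsoid Ω = {z ∈ ℝ^{2n} : Mz·z ≤ ħ} onto the x-space ℝⁿ_x is the ellipsoid {x ∈ ℝⁿ : (M_XX − M_XP M_PP⁻¹ M_PX)x·x ≤ ħ}, and the projection onto the p-space ℝⁿ_p is {p ∈ ℝⁿ : (M_PP − M_PX M_XX⁻¹ M_XP)p·p ≤ ħ}, where M/M_PP = M_XX − M_XP M_PP⁻¹ M_PX and M/M_XX = M_PP − M_PX M_XX⁻¹ M_XP are the Schur complements (both positive definite). -/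
open Matrix

noncomputable section

namespace Statement12Aux

set_option linter.unusedSectionVars false

variable {m l : Type*} [Fintype m] [DecidableEq m] [Fintype l] [DecidableEq l]

lemma herm₁₁ {M : Matrix (m ⊕ l) (m ⊕ l) ℝ} (hM : M.IsHermitian) :
    M.toBlocks₁₁.IsHermitian := by
  ext i j
  simpa [toBlocks₁₁] using congrFun (congrFun hM (Sum.inl i)) (Sum.inl j)

lemma herm₂₂ {M : Matrix (m ⊕ l) (m ⊕ l) ℝ} (hM : M.IsHermitian) :
    M.toBlocks₂₂.IsHermitian := by
  ext i j
  simpa [toBlocks₂₂] using congrFun (congrFun hM (Sum.inr i)) (Sum.inr j)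

lemma blocks₂₁ {M : Matrix (m ⊕ l) (m ⊕ l) ℝ} (hM : M.IsHermitian) :
    M.toBlocks₂₁ = M.toBlocks₁₂ᴴ := by
  ext i j
  simpa [toBlocks₂₁, toBlocks₁₂] using (congrFun (congrFun hM (Sum.inr i)) (Sum.inl j)).symm

lemma posdef₁₁ {M : Matrix (m ⊕ l) (m ⊕ l) ℝ} (hM : M.PosDef) :
    M.toBlocks₁₁.PosDef := by
  refine PosDef.of_dotProduct_mulVec_pos (herm₁₁ hM.1) fun x hx => ?_
  have hz : Sum.elim x (0 : l → ℝ) ≠ 0 := by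
    intro h
    exact hx (funext fun i => congrFun h (Sum.inl i))
  have := hM.dotProduct_mulVec_pos hz
  rw [show M = fromBlocks M.toBlocks₁₁ M.toBlocks₁₂ M.toBlocks₂₁ M.toBlocks₂₂ from
      (fromBlocks_toBlocks M).symm, fromBlocks_mulVec, star_trivial,
    sumElim_dotProduct_sumElim] at this
  simpa using this

lemma posdef₂₂ {M : Matrix (m ⊕ l) (m ⊕ l) ℝ} (hM : M.PosDef) :
    M.toBlocks₂₂.PosDef := by
  refine PosDef.of_dotProduct_mulVec_pos (herm₂₂ hM.1) fun x hx => ?_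
  have hz : Sum.elim (0 : m → ℝ) x ≠ 0 := by
    intro h
    exact hx (funext fun i => congrFun h (Sum.inr i))
  have := hM.dotProduct_mulVec_pos hz
  rw [show M = fromBlocks M.toBlocks₁₁ M.toBlocks₁₂ M.toBlocks₂₁ M.toBlocks₂₂ from
      (fromBlocks_toBlocks M).symm, fromBlocks_mulVec, star_trivial,
    sumElim_dotProduct_sumElim] at this
  simpa using this

end Statement12Aux

namespace More
open Statement12Aux

variable {m l : Type*} [Fintype m] [DecidableEq m] [Fintype l] [DecidableEq l]
set_option linter.unusedSectionVars false

lemma quad_eq₂₂ (A : Matrix m m ℝ) (B : Matrix m l ℝ) {D : Matrix l l ℝ} [Invertible D]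
    (hD : D.IsHermitian) (x : m → ℝ) (y : l → ℝ) :
    (fromBlocks A B Bᴴ D) *ᵥ (Sum.elim x y) ⬝ᵥ (Sum.elim x y)
      = D *ᵥ ((D⁻¹ * Bᴴ) *ᵥ x + y) ⬝ᵥ ((D⁻¹ * Bᴴ) *ᵥ x + y)
        + (A - B * D⁻¹ * Bᴴ) *ᵥ x ⬝ᵥ x := by
  have h := Matrix.schur_complement_eq₂₂ (α := ℝ) A B x y hD
  simp only [star_trivial, ← dotProduct_mulVec] at h
  rw [dotProduct_comm, h, dotProduct_comm _ (D *ᵥ _),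
    dotProduct_comm _ ((A - B * D⁻¹ * Bᴴ) *ᵥ x)]

lemma quad_eq₁₁ {A : Matrix m m ℝ} (B : Matrix m l ℝ) (D : Matrix l l ℝ) [Invertible A]
    (hA : A.IsHermitian) (x : m → ℝ) (y : l → ℝ) :
    (fromBlocks A B Bᴴ D) *ᵥ (Sum.elim x y) ⬝ᵥ (Sum.elim x y)
      = A *ᵥ (x + (A⁻¹ * B) *ᵥ y) ⬝ᵥ (x + (A⁻¹ * B) *ᵥ y)
        + (D - Bᴴ * A⁻¹ * B) *ᵥ y ⬝ᵥ y := by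
  have h := Matrix.schur_complement_eq₁₁ (α := ℝ) B D x y hA
  simp only [star_trivial, ← dotProduct_mulVec] at h
  rw [dotProduct_comm, h, dotProduct_comm _ (A *ᵥ _),
    dotProduct_comm _ ((D - Bᴴ * A⁻¹ * B) *ᵥ y)]

variable {M : Matrix (m ⊕ l) (m ⊕ l) ℝ}

lemma blockform (hM : M.IsHermitian) :
    M = fromBlocks M.toBlocks₁₁ M.toBlocks₁₂ M.toBlocks₁₂ᴴ M.toBlocks₂₂ := by
  conv_lhs => rw [← fromBlocks_toBlocks M]
  rw [blocks₂₁ hM]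

lemma schur_posdef₁ (hM : M.PosDef) :
    (M.toBlocks₁₁ - M.toBlocks₁₂ * M.toBlocks₂₂⁻¹ * M.toBlocks₂₁).PosDef := by
  set A := M.toBlocks₁₁; set B := M.toBlocks₁₂; set D := M.toBlocks₂₂ with hDdef
  have hD : D.PosDef := posdef₂₂ hM
  haveI : Invertible D := D.invertibleOfIsUnitDet (isUnit_iff_ne_zero.mpr hD.det_pos.ne')
  rw [blocks₂₁ hM.1]
  refine PosDef.of_dotProduct_mulVec_pos ?_ ?_
  · exact ((IsHermitian.fromBlocks₂₂ A B hD.1).mp (blockform hM.1 ▸ hM.1))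
  · intro x hx
    have hz : Sum.elim x (-((D⁻¹ * Bᴴ) *ᵥ x)) ≠ 0 := by
      intro h; exact hx (funext fun i => congrFun h (Sum.inl i))
    have h := hM.dotProduct_mulVec_pos hz
    rw [star_trivial, dotProduct_comm, blockform hM.1, quad_eq₂₂ A B hD.1] at h
    simpa [dotProduct_comm] using h

lemma schur_posdef₂ (hM : M.PosDef) :
    (M.toBlocks₂₂ - M.toBlocks₂₁ * M.toBlocks₁₁⁻¹ * M.toBlocks₁₂).PosDef := by
  set A := M.toBlocks₁₁; set B := M.toBlocks₁₂; set D := M.toBlocks₂₂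
  have hA : A.PosDef := posdef₁₁ hM
  haveI : Invertible A := A.invertibleOfIsUnitDet (isUnit_iff_ne_zero.mpr hA.det_pos.ne')
  rw [blocks₂₁ hM.1]
  refine PosDef.of_dotProduct_mulVec_pos ?_ ?_
  · exact ((IsHermitian.fromBlocks₁₁ B D hA.1).mp (blockform hM.1 ▸ hM.1))
  · intro y hy
    have hz : Sum.elim (-((A⁻¹ * B) *ᵥ y)) y ≠ 0 := by
      intro h; exact hy (funext fun i => congrFun h (Sum.inr i))
    have h := hM.dotProduct_mulVec_pos hz
    rw [star_trivial, dotProduct_comm, blockform hM.1, quad_eq₁₁ B D hA.1] at h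
    simpa [dotProduct_comm] using h

lemma proj₁ (hM : M.PosDef) (ℏ : ℝ) :
    (fun z : (m ⊕ l) → ℝ => z ∘ Sum.inl) '' {z | M *ᵥ z ⬝ᵥ z ≤ ℏ}
      = {x | (M.toBlocks₁₁ - M.toBlocks₁₂ * M.toBlocks₂₂⁻¹ * M.toBlocks₂₁) *ᵥ x ⬝ᵥ x ≤ ℏ} := by
  set A := M.toBlocks₁₁; set B := M.toBlocks₁₂; set D := M.toBlocks₂₂
  have hD : D.PosDef := posdef₂₂ hM
  haveI : Invertible D := D.invertibleOfIsUnitDet (isUnit_iff_ne_zero.mpr hD.det_pos.ne')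
  rw [blocks₂₁ hM.1]
  ext x
  simp only [Set.mem_image, Set.mem_setOf_eq]
  constructor
  · rintro ⟨z, hz, rfl⟩
    rw [blockform hM.1, ← Sum.elim_comp_inl_inr z, quad_eq₂₂ A B hD.1] at hz
    have hnn : 0 ≤ D *ᵥ ((D⁻¹ * Bᴴ) *ᵥ (z ∘ Sum.inl) + z ∘ Sum.inr) ⬝ᵥ
        ((D⁻¹ * Bᴴ) *ᵥ (z ∘ Sum.inl) + z ∘ Sum.inr) := by
      rw [dotProduct_comm]
      simpa using hD.posSemidef.dotProduct_mulVec_nonneg ((D⁻¹ * Bᴴ) *ᵥ (z ∘ Sum.inl) + z ∘ Sum.inr)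
    linarith
  · intro hx
    refine ⟨Sum.elim x (-((D⁻¹ * Bᴴ) *ᵥ x)), ?_, rfl⟩
    show M *ᵥ _ ⬝ᵥ _ ≤ ℏ
    rw [blockform hM.1, quad_eq₂₂ A B hD.1]
    simpa using hx

lemma proj₂ (hM : M.PosDef) (ℏ : ℝ) :
    (fun z : (m ⊕ l) → ℝ => z ∘ Sum.inr) '' {z | M *ᵥ z ⬝ᵥ z ≤ ℏ}
      = {y | (M.toBlocks₂₂ - M.toBlocks₂₁ * M.toBlocks₁₁⁻¹ * M.toBlocks₁₂) *ᵥ y ⬝ᵥ y ≤ ℏ} := by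
  set A := M.toBlocks₁₁; set B := M.toBlocks₁₂; set D := M.toBlocks₂₂
  have hA : A.PosDef := posdef₁₁ hM
  haveI : Invertible A := A.invertibleOfIsUnitDet (isUnit_iff_ne_zero.mpr hA.det_pos.ne')
  rw [blocks₂₁ hM.1]
  ext y
  simp only [Set.mem_image, Set.mem_setOf_eq]
  constructor
  · rintro ⟨z, hz, rfl⟩
    rw [blockform hM.1, ← Sum.elim_comp_inl_inr z, quad_eq₁₁ B D hA.1] at hz
    have hnn : 0 ≤ A *ᵥ (z ∘ Sum.inl + (A⁻¹ * B) *ᵥ (z ∘ Sum.inr)) ⬝ᵥ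
        (z ∘ Sum.inl + (A⁻¹ * B) *ᵥ (z ∘ Sum.inr)) := by
      rw [dotProduct_comm]
      simpa using hA.posSemidef.dotProduct_mulVec_nonneg (z ∘ Sum.inl + (A⁻¹ * B) *ᵥ (z ∘ Sum.inr))
    linarith
  · intro hy
    refine ⟨Sum.elim (-((A⁻¹ * B) *ᵥ y)) y, ?_, rfl⟩
    show M *ᵥ _ ⬝ᵥ _ ≤ ℏ
    rw [blockform hM.1, quad_eq₁₁ B D hA.1]
    simpa using hy

end More

open Statement12Aux More in

/-- The orthogonal projections of the ellipsoid `Ω = {z : Mz·z ≤ ℏ}` (with `M` symmetric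
positive definite, in block form `[[M_XX, M_XP],[M_PX, M_PP]]`) onto the `x`- and
`p`-spaces are the ellipsoids defined by the Schur complements
`M/M_PP = M_XX - M_XP M_PP⁻¹ M_PX` and `M/M_XX = M_PP - M_PX M_XX⁻¹ M_XP`,
both of which are positive definite. -/
theorem statement12 (n : ℕ) (ℏ : ℝ) (hℏ : 0 < ℏ)
    (M : Matrix (Fin n ⊕ Fin n) (Fin n ⊕ Fin n) ℝ) (hM : M.PosDef) :
    (fun z : (Fin n ⊕ Fin n) → ℝ => z ∘ Sum.inl) '' {z | M.mulVec z ⬝ᵥ z ≤ ℏ}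
        = {x : Fin n → ℝ |
            (M.toBlocks₁₁ - M.toBlocks₁₂ * M.toBlocks₂₂⁻¹ * M.toBlocks₂₁).mulVec x ⬝ᵥ x
              ≤ ℏ} ∧
      (fun z : (Fin n ⊕ Fin n) → ℝ => z ∘ Sum.inr) '' {z | M.mulVec z ⬝ᵥ z ≤ ℏ}
        = {p : Fin n → ℝ |
            (M.toBlocks₂₂ - M.toBlocks₂₁ * M.toBlocks₁₁⁻¹ * M.toBlocks₁₂).mulVec p ⬝ᵥ p
              ≤ ℏ} ∧
      (M.toBlocks₁₁ - M.toBlocks₁₂ * M.toBlocks₂₂⁻¹ * M.toBlocks₂₁).PosDef ∧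
      (M.toBlocks₂₂ - M.toBlocks₂₁ * M.toBlocks₁₁⁻¹ * M.toBlocks₁₂).PosDef := by
  exact ⟨More.proj₁ hM ℏ, More.proj₂ hM ℏ, More.schur_posdef₁ hM, More.schur_posdef₂ hM⟩
end
end

section
/- Let M be a real 2n×2n matrix which is symmetric, positive definite, and symplectic (MᵀJM = J), with n×n block form M = [[M_XX, M_XP],[M_PX, M_PP]]. Then the Schur complements satisfy M_XX − M_XP M_PP⁻¹ M_PX = M_PP⁻¹ and M_PP − M_PX M_XX⁻¹ M_XP = M_XX⁻¹. -/
open Matrix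

noncomputable section

lemma aux_posdef₁₁ {m l : Type*} [Fintype m] [Fintype l]
    (M : Matrix (m ⊕ l) (m ⊕ l) ℝ) (hM : M.PosDef) : M.toBlocks₁₁.PosDef := by
  constructor
  · ext i j
    simpa [Matrix.conjTranspose_apply, Matrix.toBlocks₁₁] using
      congrFun (congrFun hM.1 (Sum.inl i)) (Sum.inl j)
  · intro x hx
    exact (hM.submatrix Sum.inl_injective).2 hx

lemma aux_posdef₂₂ {m l : Type*} [Fintype m] [Fintype l]
    (M : Matrix (m ⊕ l) (m ⊕ l) ℝ) (hM : M.PosDef) : M.toBlocks₂₂.PosDef := by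
  constructor
  · ext i j
    simpa [Matrix.conjTranspose_apply, Matrix.toBlocks₂₂] using
      congrFun (congrFun hM.1 (Sum.inr i)) (Sum.inr j)
  · intro x hx
    exact (hM.submatrix Sum.inr_injective).2 hx

/-- For a symmetric, positive definite, symplectic matrix `M` in block form
`[[M_XX, M_XP],[M_PX, M_PP]]`, the Schur complements satisfy
`M_XX - M_XP M_PP⁻¹ M_PX = M_PP⁻¹` and `M_PP - M_PX M_XX⁻¹ M_XP = M_XX⁻¹`. -/
theorem statement13 (n : ℕ)
    (M : Matrix (Fin n ⊕ Fin n) (Fin n ⊕ Fin n) ℝ) (hM : M.PosDef)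
    (hMsymp : IsSymplectic M) :
    M.toBlocks₁₁ - M.toBlocks₁₂ * M.toBlocks₂₂⁻¹ * M.toBlocks₂₁ = M.toBlocks₂₂⁻¹ ∧
      M.toBlocks₂₂ - M.toBlocks₂₁ * M.toBlocks₁₁⁻¹ * M.toBlocks₁₂ = M.toBlocks₁₁⁻¹ := by
  set A := M.toBlocks₁₁ with hA
  set B := M.toBlocks₁₂ with hB
  set D := M.toBlocks₂₂ with hD
  have hsym : Mᵀ = M := hM.1
  have hAd : IsUnit A.det := (aux_posdef₁₁ M hM).det_pos.ne'.isUnit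
  have hDd : IsUnit D.det := (aux_posdef₂₂ M hM).det_pos.ne'.isUnit
  -- block symmetry facts
  have hCB : M.toBlocks₂₁ = Bᵀ := by
    ext i j
    simpa [hB, Matrix.toBlocks₂₁, Matrix.toBlocks₁₂] using
      (congrFun (congrFun hsym (Sum.inr i)) (Sum.inl j)).symm
  have hAs : Aᵀ = A := by
    ext i j
    simpa [hA, Matrix.toBlocks₁₁] using congrFun (congrFun hsym (Sum.inl i)) (Sum.inl j)
  have hDs : Dᵀ = D := by
    ext i j
    simpa [hD, Matrix.toBlocks₂₂] using congrFun (congrFun hsym (Sum.inr i)) (Sum.inr j)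
  -- the symplectic condition in blocks
  have hE : (Matrix.fromBlocks A B (Bᵀ) D)ᵀ * stdJ n * Matrix.fromBlocks A B (Bᵀ) D = stdJ n := by
    rw [← hCB, hA, hB, hD, Matrix.fromBlocks_toBlocks M]; exact hMsymp
  rw [stdJ] at hE
  simp only [Matrix.fromBlocks_transpose, Matrix.fromBlocks_multiply] at hE
  have e11 := congrArg Matrix.toBlocks₁₁ hE
  have e12 := congrArg Matrix.toBlocks₁₂ hE
  have e21 := congrArg Matrix.toBlocks₂₁ hE
  have e22 := congrArg Matrix.toBlocks₂₂ hE
  simp only [Matrix.toBlocks_fromBlocks₁₁, Matrix.toBlocks_fromBlocks₁₂,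
    Matrix.toBlocks_fromBlocks₂₁, Matrix.toBlocks_fromBlocks₂₂] at e11 e12 e21 e22
  rw [hCB]
  simp only [Matrix.mul_zero, Matrix.mul_one, Matrix.mul_neg, Matrix.neg_mul, zero_add,
    add_zero, Matrix.transpose_transpose, hAs, hDs] at e11 e12 e21 e22
  -- e11 : -(B*A) + A*Bᵀ = 0, e12 : -(B*B) + A*D = 1
  -- e21 : -(D*A) + Bᵀ*Bᵀ = -1, e22 : -(D*B) + Bᵀ*D = 0
  have hABt : A * Bᵀ = B * A := by
    rwa [add_comm, ← sub_eq_add_neg, sub_eq_zero] at e11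
  have hBtD : Bᵀ * D = D * B := by
    rwa [add_comm, ← sub_eq_add_neg, sub_eq_zero] at e22
  have hBB : B * B = A * D - 1 := by rw [← e12]; abel
  have hBtBt : Bᵀ * Bᵀ = D * A - 1 := by
    rw [sub_eq_add_neg, ← e21]; abel
  have h1 : B * D⁻¹ = D⁻¹ * Bᵀ := by
    have h := congrArg (fun X => D⁻¹ * X * D⁻¹) hBtD
    simp only [Matrix.mul_assoc, Matrix.mul_nonsing_inv _ hDd,
      Matrix.nonsing_inv_mul_cancel_left _ _ hDd, Matrix.mul_one] at h
    exact h.symm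
  have h2 : Bᵀ * A⁻¹ = A⁻¹ * B := by
    have h := congrArg (fun X => A⁻¹ * X * A⁻¹) hABt
    simp only [Matrix.mul_assoc, Matrix.mul_nonsing_inv _ hAd,
      Matrix.nonsing_inv_mul_cancel_left _ _ hAd, Matrix.mul_one] at h
    exact h
  constructor
  · have : B * D⁻¹ * Bᵀ = A - D⁻¹ := by
      rw [h1, Matrix.mul_assoc, hBtBt, Matrix.mul_sub, Matrix.mul_one,
        ← Matrix.mul_assoc, Matrix.nonsing_inv_mul _ hDd, Matrix.one_mul]
    rw [this]; abel
  · have : Bᵀ * A⁻¹ * B = D - A⁻¹ := by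
      rw [h2, Matrix.mul_assoc, hBB, Matrix.mul_sub, Matrix.mul_one,
        ← Matrix.mul_assoc, Matrix.nonsing_inv_mul _ hAd, Matrix.one_mul]
    rw [this]; abel
end
end

section
/- Let ħ > 0. The ball B^{2n}(√ħ) is contained in the product B_X^n(√ħ) × B_P^n(√ħ) ⊆ ℝ^{2n}, and it is the unique maximal-volume centered ellipsoid contained in this product: for every invertible linear map T : ℝ^{2n} → ℝ^{2n} with T(B^{2n}(1)) ⊆ B_X^n(√ħ) × B_P^n(√ħ), the Lebesgue volume of T(B^{2n}(1)) is at most that of B^{2n}(√ħ), with equality if and only if T(B^{2n}(1)) = B^{2n}(√ħ). (Equivalently, the John ellipsoid of B_X^n(√ħ) × B_P^n(√ħ) is B^{2n}(√ħ).) -/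
open Matrix MeasureTheory

open Pointwise

noncomputable section


lemma amgm_aux {ι : Type*} [Fintype ι] {c : ℝ} (hc : 0 < c) (lam : ι → ℝ)
    (hpos : ∀ i, 0 < lam i) (hsum : ∑ i, lam i ≤ (Fintype.card ι : ℝ) * c) :
    ∏ i, lam i ≤ c ^ Fintype.card ι ∧
      (∏ i, lam i = c ^ Fintype.card ι → ∀ i, lam i = c) := by
  have hdivpos : ∀ i, 0 < lam i / c := fun i => div_pos (hpos i) hc
  have hlog : ∀ i ∈ Finset.univ, Real.log (lam i / c) ≤ lam i / c - 1 :=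
    fun i _ => Real.log_le_sub_one_of_pos (hdivpos i)
  have hsum1 : ∑ i, (lam i / c - 1) ≤ 0 := by
    rw [Finset.sum_sub_distrib, ← Finset.sum_div]
    simp only [Finset.sum_const, Finset.card_univ, nsmul_eq_mul, mul_one]
    rw [sub_nonpos, div_le_iff₀ hc]
    exact hsum
  have hsumlog : ∑ i, Real.log (lam i / c) ≤ 0 :=
    le_trans (Finset.sum_le_sum hlog) hsum1
  have hprodpos : 0 < ∏ i, lam i / c := Finset.prod_pos fun i _ => hdivpos i
  have hlogprod : Real.log (∏ i, lam i / c) = ∑ i, Real.log (lam i / c) :=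
    Real.log_prod fun i _ => (hdivpos i).ne'
  have hprodeq : (∏ i, lam i / c) = (∏ i, lam i) / c ^ Fintype.card ι := by
    rw [Finset.prod_div_distrib, Finset.prod_const, Finset.card_univ]
  have hcpow : (0:ℝ) < c ^ Fintype.card ι := pow_pos hc _
  have hprodle : ∏ i, lam i / c ≤ 1 := by
    calc ∏ i, lam i / c = Real.exp (Real.log (∏ i, lam i / c)) := (Real.exp_log hprodpos).symm
      _ ≤ Real.exp 0 := Real.exp_le_exp.mpr (hlogprod ▸ hsumlog)
      _ = 1 := Real.exp_zero
  constructor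
  · rw [hprodeq, div_le_one hcpow] at hprodle; exact hprodle
  · intro heq i
    have h1 : ∏ j, lam j / c = 1 := by rw [hprodeq, heq, div_self hcpow.ne']
    have h0 : ∑ j, Real.log (lam j / c) = 0 := by rw [← hlogprod, h1, Real.log_one]
    have hsum2 : ∑ j, (lam j / c - 1) = 0 :=
      le_antisymm hsum1 (h0 ▸ Finset.sum_le_sum hlog)
    have heach := (Finset.sum_eq_sum_iff_of_le hlog).mp (by rw [h0, hsum2])
    by_contra hne
    have hne1 : lam i / c ≠ 1 := by
      intro h; exact hne (by field_simp at h; linarith)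
    have := Real.log_lt_sub_one_of_pos (hdivpos i) hne1
    have := heach i (Finset.mem_univ i)
    linarith

lemma trace_eq_sum_eig {ι : Type*} [Fintype ι] [DecidableEq ι] {S : Matrix ι ι ℝ}
    (hH : S.IsHermitian) : S.trace = ∑ i, hH.eigenvalues i := by
  conv_lhs => rw [hH.spectral_theorem, Unitary.conjStarAlgAut_apply]
  rw [Matrix.trace_mul_cycle]
  rw [show (star (hH.eigenvectorUnitary : Matrix ι ι ℝ)) * (hH.eigenvectorUnitary : Matrix ι ι ℝ) = 1 from
    Matrix.mem_unitaryGroup_iff'.mp (hH.eigenvectorUnitary).2]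
  rw [one_mul, Matrix.trace_diagonal]
  simp

lemma eig_const_imp {ι : Type*} [Fintype ι] [DecidableEq ι] {S : Matrix ι ι ℝ} {c : ℝ}
    (hH : S.IsHermitian) (h : ∀ i, hH.eigenvalues i = c) : S = c • 1 := by
  have hU : (hH.eigenvectorUnitary : Matrix ι ι ℝ) * star (hH.eigenvectorUnitary : Matrix ι ι ℝ) = 1 :=
    Matrix.mem_unitaryGroup_iff.mp (hH.eigenvectorUnitary).2
  rw [hH.spectral_theorem, Unitary.conjStarAlgAut_apply]
  have : (RCLike.ofReal ∘ hH.eigenvalues : ι → ℝ) = fun _ => c := by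
    funext i; simp [h i]
  rw [this, ← Matrix.smul_one_eq_diagonal]
  rw [Matrix.mul_smul, Matrix.smul_mul, mul_one, hU]

lemma key_det {ι : Type*} [Fintype ι] [DecidableEq ι] (T : Matrix ι ι ℝ) (hdet : T.det ≠ 0)
    {c : ℝ} (hc : 0 < c) (hrows : ∀ j, ∑ k, T j k ^ 2 ≤ c) :
    T.det ^ 2 ≤ c ^ Fintype.card ι ∧
      (T.det ^ 2 = c ^ Fintype.card ι → Tᵀ * T = c • 1) := by
  have hTH : Tᴴ = Tᵀ := by
    ext i j; simp [Matrix.conjTranspose_apply]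
  have hH : (Tᵀ * T).IsHermitian := by
    rw [← hTH]; exact Matrix.isHermitian_conjTranspose_mul_self T
  have hPSD : (Tᵀ * T).PosSemidef := by
    rw [← hTH]; exact Matrix.posSemidef_conjTranspose_mul_self T
  set lam := hH.eigenvalues with hlam
  have hdetS : (Tᵀ * T).det = T.det ^ 2 := by
    rw [Matrix.det_mul, Matrix.det_transpose, sq]
  have hdetprod : (Tᵀ * T).det = ∏ i, lam i := by
    have := hH.det_eq_prod_eigenvalues
    simpa using this
  have hprodpos : 0 < ∏ i, lam i := by
    rw [← hdetprod, hdetS]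
    positivity
  have hpos : ∀ i, 0 < lam i := by
    intro i
    rcases (hPSD.eigenvalues_nonneg i).lt_or_eq with h | h
    · exact h
    · exfalso
      have : ∏ j, lam j = 0 := Finset.prod_eq_zero (Finset.mem_univ i) h.symm
      rw [this] at hprodpos; exact lt_irrefl _ hprodpos
  have htrace : (Tᵀ * T).trace = ∑ j, ∑ k, T k j ^ 2 := by
    simp [Matrix.trace, Matrix.diag, Matrix.mul_apply, Matrix.transpose_apply, sq]
  have hsum : ∑ i, lam i ≤ (Fintype.card ι : ℝ) * c := by
    rw [← trace_eq_sum_eig hH, htrace, Finset.sum_comm]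
    calc ∑ k, ∑ j, T k j ^ 2 ≤ ∑ _k : ι, c := Finset.sum_le_sum fun k _ => hrows k
      _ = (Fintype.card ι : ℝ) * c := by simp [Finset.card_univ, mul_comm]
  obtain ⟨h1, h2⟩ := amgm_aux hc lam hpos hsum
  refine ⟨by rw [← hdetS, hdetprod]; exact h1, fun heq => ?_⟩
  exact eig_const_imp hH (h2 (by rw [← hdetprod, hdetS]; exact heq))


/-- The product `B_X^n(√ℏ) × B_P^n(√ℏ)` viewed inside phase space `ℝⁿ × ℝⁿ`. -/
def prodBalls (n : ℕ) (ℏ : ℝ) : Set ((Fin n ⊕ Fin n) → ℝ) :=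
  {z | ∑ i, z (Sum.inl i) ^ 2 ≤ Real.sqrt ℏ ^ 2 ∧ ∑ i, z (Sum.inr i) ^ 2 ≤ Real.sqrt ℏ ^ 2}

/-- The ball `B^{2n}(√ℏ)` is contained in `B_X^n(√ℏ) × B_P^n(√ℏ)` and is the unique
maximal-volume centered ellipsoid contained in it (its John ellipsoid): any invertible
linear image `T(B^{2n}(1))` contained in the product has volume at most that of
`B^{2n}(√ℏ)`, with equality iff `T(B^{2n}(1)) = B^{2n}(√ℏ)`. -/
theorem statement14 (n : ℕ) (ℏ : ℝ) (hℏ : 0 < ℏ) :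
    ballPhase n (Real.sqrt ℏ) ⊆ prodBalls n ℏ ∧
    ∀ T : Matrix (Fin n ⊕ Fin n) (Fin n ⊕ Fin n) ℝ, IsUnit T →
      T.mulVec '' ballPhase n 1 ⊆ prodBalls n ℏ →
      volume (T.mulVec '' ballPhase n 1) ≤ volume (ballPhase n (Real.sqrt ℏ)) ∧
      (volume (T.mulVec '' ballPhase n 1) = volume (ballPhase n (Real.sqrt ℏ)) ↔
        T.mulVec '' ballPhase n 1 = ballPhase n (Real.sqrt ℏ)) := by
  have hs : Real.sqrt ℏ ^ 2 = ℏ := Real.sq_sqrt hℏ.le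
  have hsnn : 0 ≤ Real.sqrt ℏ := Real.sqrt_nonneg ℏ
  set ι := (Fin n ⊕ Fin n)
  set N := Fintype.card ι with hN
  -- splitting of sums
  have hsplit : ∀ z : ι → ℝ, ∑ i, z i ^ 2 =
      (∑ i, z (Sum.inl i) ^ 2) + ∑ i, z (Sum.inr i) ^ 2 := fun z =>
    Fintype.sum_sum_type (fun i => z i ^ 2)
  constructor
  · intro z hz
    have hz' : ∑ i, z i ^ 2 ≤ Real.sqrt ℏ ^ 2 := hz
    have h1 : 0 ≤ ∑ i, z (Sum.inl i) ^ 2 := Finset.sum_nonneg fun _ _ => sq_nonneg _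
    have h2 : 0 ≤ ∑ i, z (Sum.inr i) ^ 2 := Finset.sum_nonneg fun _ _ => sq_nonneg _
    rw [hsplit z] at hz'
    exact ⟨by linarith, by linarith⟩
  intro T hT hsub
  have hdetu : IsUnit T.det := (Matrix.isUnit_iff_isUnit_det T).mp hT
  have hdet : T.det ≠ 0 := hdetu.ne_zero
  -- row norm bounds
  have hrows : ∀ j, ∑ k, T j k ^ 2 ≤ ℏ := by
    intro j
    set s := ∑ k, T j k ^ 2 with hsdef
    have hs0 : 0 ≤ s := Finset.sum_nonneg fun _ _ => sq_nonneg _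
    rcases hs0.lt_or_eq with h | h
    swap
    · rw [← h]; exact hℏ.le
    set r := Real.sqrt s with hrdef
    have hr : 0 < r := Real.sqrt_pos.mpr h
    have hr2 : r ^ 2 = s := Real.sq_sqrt hs0
    set z : ι → ℝ := fun k => T j k / r with hzdef
    have hz : z ∈ ballPhase n 1 := by
      show ∑ k, (T j k / r) ^ 2 ≤ 1 ^ 2
      have : ∑ k, (T j k / r) ^ 2 = s / r ^ 2 := by
        rw [hsdef, Finset.sum_div]
        exact Finset.sum_congr rfl fun k _ => div_pow _ _ _
      rw [this, hr2, div_self h.ne', one_pow]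
    have hmem : T.mulVec z ∈ prodBalls n ℏ := hsub ⟨z, hz, rfl⟩
    have hval : T.mulVec z j = r := by
      show ∑ k, T j k * z k = r
      have : ∑ k, T j k * z k = s / r := by
        rw [hsdef, Finset.sum_div]
        refine Finset.sum_congr rfl fun k _ => ?_
        simp only [hzdef]
        ring
      rw [this, ← hr2, sq, mul_div_assoc, div_self hr.ne', mul_one]
    have hbound : T.mulVec z j ^ 2 ≤ ℏ := by
      rcases j with i | i
      · calc T.mulVec z (Sum.inl i) ^ 2
            ≤ ∑ i', T.mulVec z (Sum.inl i') ^ 2 :=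
              Finset.single_le_sum (f := fun i' => T.mulVec z (Sum.inl i') ^ 2)
                (fun _ _ => sq_nonneg _) (Finset.mem_univ i)
          _ ≤ Real.sqrt ℏ ^ 2 := hmem.1
          _ = ℏ := hs
      · calc T.mulVec z (Sum.inr i) ^ 2
            ≤ ∑ i', T.mulVec z (Sum.inr i') ^ 2 :=
              Finset.single_le_sum (f := fun i' => T.mulVec z (Sum.inr i') ^ 2)
                (fun _ _ => sq_nonneg _) (Finset.mem_univ i)
          _ ≤ Real.sqrt ℏ ^ 2 := hmem.2
          _ = ℏ := hs
    rw [hval, hr2] at hbound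
    exact hbound
  obtain ⟨hdetle, hdeteq⟩ := key_det T hdet hℏ hrows
  -- volumes
  have hco : ⇑(Matrix.toLin' T) = T.mulVec := by
    funext v; exact Matrix.toLin'_apply T v
  have hvolimg : volume (T.mulVec '' ballPhase n 1)
      = ENNReal.ofReal |T.det| * volume (ballPhase n 1) := by
    have := MeasureTheory.Measure.addHaar_image_linearMap
      (volume : Measure (ι → ℝ)) (Matrix.toLin' T) (ballPhase n 1)
    rw [hco] at this
    rw [this, LinearMap.det_toLin']
  have hscale : ballPhase n (Real.sqrt ℏ) = Real.sqrt ℏ • ballPhase n 1 := by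
    have hsne : Real.sqrt ℏ ≠ 0 := (Real.sqrt_pos.mpr hℏ).ne'
    ext z
    rw [Set.mem_smul_set_iff_inv_smul_mem₀ hsne]
    show (∑ i, z i ^ 2 ≤ Real.sqrt ℏ ^ 2) ↔ ∑ i, ((Real.sqrt ℏ)⁻¹ • z) i ^ 2 ≤ 1 ^ 2
    have hrw : ∑ i, ((Real.sqrt ℏ)⁻¹ • z) i ^ 2 = ℏ⁻¹ * ∑ i, z i ^ 2 := by
      rw [Finset.mul_sum]
      apply Finset.sum_congr rfl
      intro i _
      simp only [Pi.smul_apply, smul_eq_mul, mul_pow, inv_pow, hs]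
    rw [hrw, one_pow, hs]
    rw [inv_mul_le_iff₀ hℏ, mul_one]
  have hfinrank : Module.finrank ℝ (ι → ℝ) = N := by
    simp [hN]
  have hvolball : volume (ballPhase n (Real.sqrt ℏ))
      = ENNReal.ofReal (Real.sqrt ℏ ^ N) * volume (ballPhase n 1) := by
    rw [hscale, Measure.addHaar_smul_of_nonneg _ hsnn, hfinrank]
  -- |det T| ≤ √ℏ ^ N
  have hpowsq : (Real.sqrt ℏ ^ N) ^ 2 = ℏ ^ N := by
    rw [← pow_mul, mul_comm N 2, pow_mul, hs]
  have habs : |T.det| ≤ Real.sqrt ℏ ^ N := by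
    have h1 : T.det ^ 2 ≤ (Real.sqrt ℏ ^ N) ^ 2 := by rw [hpowsq]; exact hdetle
    have := Real.sqrt_le_sqrt h1
    rw [Real.sqrt_sq_eq_abs, Real.sqrt_sq (pow_nonneg hsnn N)] at this
    exact this
  -- volume positivity and finiteness
  have hVfin : volume (ballPhase n 1) < ⊤ := by
    have hsubbox : ballPhase n 1 ⊆ Set.pi Set.univ (fun _ : ι => Set.Icc (-1 : ℝ) 1) := by
      intro z hz
      intro i _
      have hzi : z i ^ 2 ≤ 1 := by
        have : z i ^ 2 ≤ ∑ k, z k ^ 2 :=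
          Finset.single_le_sum (f := fun k => z k ^ 2)
            (fun _ _ => sq_nonneg _) (Finset.mem_univ i)
        have hz' : ∑ k, z k ^ 2 ≤ 1 ^ 2 := hz
        rw [one_pow] at hz'
        linarith
      have habs1 : |z i| ≤ 1 := (sq_le_one_iff_abs_le_one (z i)).mp hzi
      exact abs_le.mp habs1
    calc volume (ballPhase n 1)
        ≤ volume (Set.pi Set.univ (fun _ : ι => Set.Icc (-1 : ℝ) 1)) := measure_mono hsubbox
      _ = ∏ _i : ι, volume (Set.Icc (-1 : ℝ) 1) := volume_pi_pi _
      _ < ⊤ := by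
          simp only [Real.volume_Icc, Finset.prod_const]
          exact ENNReal.pow_lt_top ENNReal.ofReal_lt_top
  have hVpos : 0 < volume (ballPhase n 1) := by
    set a : ℝ := ((N : ℝ) + 1)⁻¹ with hadef
    have haN : (0:ℝ) < (N : ℝ) + 1 := by positivity
    have ha : 0 < a := by positivity
    have ha1 : ((N : ℝ) + 1) * a = 1 := mul_inv_cancel₀ haN.ne'
    have hbox : Set.pi Set.univ (fun _ : ι => Set.Icc (0 : ℝ) a) ⊆ ballPhase n 1 := by
      intro z hz
      show ∑ i, z i ^ 2 ≤ 1 ^ 2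
      have hterm : ∀ i : ι, z i ^ 2 ≤ a ^ 2 := by
        intro i
        have := hz i (Set.mem_univ i)
        have h0 : 0 ≤ z i := this.1
        have h1 : z i ≤ a := this.2
        nlinarith
      calc ∑ i, z i ^ 2 ≤ ∑ _i : ι, a ^ 2 := Finset.sum_le_sum fun i _ => hterm i
        _ = (N : ℝ) * a ^ 2 := by simp [hN, Finset.card_univ, mul_comm]
        _ ≤ 1 ^ 2 := by rw [one_pow]; nlinarith
    calc (0 : ENNReal) < ∏ _i : ι, volume (Set.Icc (0 : ℝ) a) := by
          simp only [Real.volume_Icc, Finset.prod_const, sub_zero]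
          exact ENNReal.pow_pos (ENNReal.ofReal_pos.mpr ha) _
      _ = volume (Set.pi Set.univ (fun _ : ι => Set.Icc (0 : ℝ) a)) := (volume_pi_pi _).symm
      _ ≤ volume (ballPhase n 1) := measure_mono hbox
  -- main conclusion
  have hineq : volume (T.mulVec '' ballPhase n 1) ≤ volume (ballPhase n (Real.sqrt ℏ)) := by
    rw [hvolimg, hvolball]
    exact mul_le_mul_left (ENNReal.ofReal_le_ofReal habs) _
  refine ⟨hineq, ?_, fun h => by rw [h]⟩
  intro heq
  rw [hvolimg, hvolball] at heq
  have hdetabs : |T.det| = Real.sqrt ℏ ^ N := by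
    have := (ENNReal.mul_left_inj hVpos.ne' hVfin.ne).mp heq
    exact (ENNReal.ofReal_eq_ofReal_iff (abs_nonneg _) (pow_nonneg hsnn N)).mp this
  have hdetsq : T.det ^ 2 = ℏ ^ N := by
    rw [← sq_abs, hdetabs, hpowsq]
  have hSeq : Tᵀ * T = ℏ • 1 := hdeteq hdetsq
  -- quadratic form identity
  have hq : ∀ z : ι → ℝ, (T.mulVec z) ⬝ᵥ (T.mulVec z) = ℏ * (z ⬝ᵥ z) := by
    intro z
    have h1 : z ⬝ᵥ ((Tᵀ * T) *ᵥ z) = (T *ᵥ z) ⬝ᵥ (T *ᵥ z) := by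
      rw [← Matrix.mulVec_mulVec, Matrix.dotProduct_mulVec, Matrix.vecMul_transpose]
    rw [← h1, hSeq]
    rw [Matrix.smul_mulVec, Matrix.one_mulVec]
    simp [dotProduct_smul, smul_eq_mul, Finset.mul_sum]
  have hdotsum : ∀ z : ι → ℝ, z ⬝ᵥ z = ∑ i, z i ^ 2 := by
    intro z
    simp [dotProduct, sq]
  ext w
  constructor
  · rintro ⟨z, hz, rfl⟩
    show ∑ i, T.mulVec z i ^ 2 ≤ Real.sqrt ℏ ^ 2
    have hz' : ∑ i, z i ^ 2 ≤ 1 ^ 2 := hz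
    rw [one_pow] at hz'
    have := hq z
    rw [hdotsum, hdotsum] at this
    rw [this, hs]
    nlinarith
  · intro hw
    have hw' : ∑ i, w i ^ 2 ≤ ℏ := by
      have : ∑ i, w i ^ 2 ≤ Real.sqrt ℏ ^ 2 := hw
      rwa [hs] at this
    refine ⟨T⁻¹ *ᵥ w, ?_, ?_⟩
    · show ∑ i, (T⁻¹ *ᵥ w) i ^ 2 ≤ 1 ^ 2
      have hTw : T *ᵥ (T⁻¹ *ᵥ w) = w := by
        rw [Matrix.mulVec_mulVec, Matrix.mul_nonsing_inv T hdetu, Matrix.one_mulVec]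
      have := hq (T⁻¹ *ᵥ w)
      rw [hTw, hdotsum, hdotsum] at this
      rw [one_pow]
      have hle : ℏ * (∑ i, (T⁻¹ *ᵥ w) i ^ 2) ≤ ℏ * 1 := by
        rw [← this, mul_one]; exact hw'
      exact le_of_mul_le_mul_left hle hℏ
    · rw [Matrix.mulVec_mulVec, Matrix.mul_nonsing_inv T hdetu, Matrix.one_mulVec]
end
end

section
/- Let ħ > 0 and let A be a real symmetric positive definite n×n matrix. Set X = {x ∈ ℝⁿ : Ax·x ≤ ħ}, so X^ħ = {p ∈ ℝⁿ : A⁻¹p·p ≤ ħ}. Then the ellipsoid Ω = {(x,p) ∈ ℝ^{2n} : Ax·x + A⁻¹p·p ≤ ħ} equals D(B^{2n}(√ħ)) for the symplectic matrix D = [[A^{−1/2}, 0],[0, A^{1/2}]], hence is a quantum blob; it is contained in X × X^ħ with Π_X Ω = X and Π_P Ω = X^ħ; and it is the unique quantum blob contained in X × X^ħ: if S ∈ Sp(2n,ℝ) satisfies S(B^{2n}(√ħ)) ⊆ X × X^ħ, then S(B^{2n}(√ħ)) = Ω. -/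
open Matrix

noncomputable section

section Helpers
variable {m : Type*} [Fintype m]

lemma hdot_self_nonneg (u : m → ℝ) : 0 ≤ u ⬝ᵥ u :=
  Finset.sum_nonneg fun _ _ => mul_self_nonneg _

lemma hsymm_swap {P : Matrix m m ℝ} (hP : Pᵀ = P) (x y : m → ℝ) :
    P *ᵥ x ⬝ᵥ y = P *ᵥ y ⬝ᵥ x := by
  rw [dotProduct_comm (P *ᵥ x) y, Matrix.dotProduct_mulVec, ← Matrix.vecMul_transpose, hP]

lemma hdot_shift (B : Matrix m m ℝ) (u v : m → ℝ) : u ⬝ᵥ Bᵀ *ᵥ v = B *ᵥ u ⬝ᵥ v := by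
  rw [Matrix.dotProduct_mulVec, Matrix.vecMul_transpose]

lemma hsq_form (B : Matrix m m ℝ) (u : m → ℝ) :
    (B *ᵥ u) ⬝ᵥ (B *ᵥ u) = (Bᵀ * B) *ᵥ u ⬝ᵥ u := by
  rw [Matrix.dotProduct_mulVec, Matrix.vecMul_mulVec, ← Matrix.vecMul_transpose,
    Matrix.transpose_mul, Matrix.transpose_transpose]

lemma hcs {P : Matrix m m ℝ} (hP : Pᵀ = P) (hpos : ∀ v, 0 ≤ P *ᵥ v ⬝ᵥ v) (x y : m → ℝ) :
    (P *ᵥ x ⬝ᵥ y) ^ 2 ≤ (P *ᵥ x ⬝ᵥ x) * (P *ᵥ y ⬝ᵥ y) := by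
  have e3 : P *ᵥ y ⬝ᵥ x = P *ᵥ x ⬝ᵥ y := hsymm_swap hP y x
  have key : ∀ t : ℝ, 0 ≤ (P *ᵥ x ⬝ᵥ x) * (t * t) + (2 * (P *ᵥ x ⬝ᵥ y)) * t
      + (P *ᵥ y ⬝ᵥ y) := by
    intro t
    have h := hpos (t • x + y)
    simp only [Matrix.mulVec_add, Matrix.mulVec_smul, add_dotProduct, dotProduct_add,
      smul_dotProduct, dotProduct_smul, smul_eq_mul, e3] at h
    nlinarith [h]
  have := discrim_le_zero key
  rw [discrim] at this
  nlinarith [this]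

lemma hker [DecidableEq m] {P : Matrix m m ℝ} (hP : Pᵀ = P) (hpos : ∀ v, 0 ≤ P *ᵥ v ⬝ᵥ v)
    {z : m → ℝ} (hz : P *ᵥ z ⬝ᵥ z = 0) : P *ᵥ z = 0 := by
  funext i
  have h := hcs hP hpos z (Pi.single i 1)
  rw [hz, zero_mul] at h
  have h2 : P *ᵥ z ⬝ᵥ Pi.single i 1 = (P *ᵥ z) i := by simp
  rw [h2] at h
  have h3 : ((P *ᵥ z) i) ^ 2 = 0 := le_antisymm h (sq_nonneg _)
  simpa using pow_eq_zero_iff (n := 2) (by norm_num) |>.mp h3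

lemma hrig {a b s : ℝ} (ha : 0 ≤ a) (hb : 0 ≤ b) (h1 : a ≤ s) (h2 : b ≤ s)
    (h3 : s ^ 2 ≤ a * b) : s = a := by
  nlinarith [sq_nonneg (s - a), sq_nonneg (s - b), mul_nonneg ha hb]

end Helpers

section Helpers2
variable {n : ℕ}

lemma hdot_split (v w : (Fin n ⊕ Fin n) → ℝ) :
    v ⬝ᵥ w = (v ∘ Sum.inl) ⬝ᵥ (w ∘ Sum.inl) + (v ∘ Sum.inr) ⬝ᵥ (w ∘ Sum.inr) := by
  simp [dotProduct, Fintype.sum_sum_type, Function.comp]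

lemma hsplit (v : (Fin n ⊕ Fin n) → ℝ) :
    v = Sum.elim (v ∘ Sum.inl) (0 : Fin n → ℝ) + Sum.elim (0 : Fin n → ℝ) (v ∘ Sum.inr) := by
  funext i; cases i <;> simp

lemma hJJt : stdJ n * (stdJ n)ᵀ = 1 := by
  simp [stdJ, Matrix.fromBlocks_transpose, Matrix.fromBlocks_multiply,
    Matrix.fromBlocks_one, Matrix.neg_mul, Matrix.mul_neg]

lemma hJtJ : (stdJ n)ᵀ * stdJ n = 1 := by
  simp [stdJ, Matrix.fromBlocks_transpose, Matrix.fromBlocks_multiply,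
    Matrix.fromBlocks_one, Matrix.neg_mul, Matrix.mul_neg]

lemma hJt_mulVec (z : (Fin n ⊕ Fin n) → ℝ) :
    (stdJ n)ᵀ *ᵥ z = Sum.elim (-(z ∘ Sum.inr)) (z ∘ Sum.inl) := by
  simp [stdJ, Matrix.fromBlocks_transpose, Matrix.fromBlocks_mulVec, Matrix.neg_mulVec]

lemma himage_ball {S T : Matrix (Fin n ⊕ Fin n) (Fin n ⊕ Fin n) ℝ}
    (h1 : T * S = 1) (h2 : S * T = 1) (r : ℝ) :
    S.mulVec '' ballPhase n r = {w | T *ᵥ w ⬝ᵥ T *ᵥ w ≤ r ^ 2} := by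
  have hsum : ∀ z : (Fin n ⊕ Fin n) → ℝ, z ⬝ᵥ z = ∑ i, z i ^ 2 := by
    intro z; simp [dotProduct, sq]
  ext w
  constructor
  · rintro ⟨z, hz, rfl⟩
    simp only [ballPhase, Set.mem_setOf_eq] at hz
    have h : T *ᵥ (S *ᵥ z) = z := by rw [Matrix.mulVec_mulVec, h1, Matrix.one_mulVec]
    simp only [Set.mem_setOf_eq, h, hsum]
    exact hz
  · intro hw
    exact ⟨T *ᵥ w, by simpa [ballPhase, Set.mem_setOf_eq, ← hsum] using hw,
      by rw [Matrix.mulVec_mulVec, h2, Matrix.one_mulVec]⟩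

end Helpers2

/-- For `A` symmetric positive definite, `X = {x : Ax·x ≤ ℏ}` has
`X^ℏ = {p : A⁻¹p·p ≤ ℏ}`; the ellipsoid `Ω = {(x,p) : Ax·x + A⁻¹p·p ≤ ℏ}` is
`D(B^{2n}(√ℏ))` for the symplectic matrix `D = [[A^{-1/2},0],[0,A^{1/2}]]` (hence a
quantum blob), is contained in `X × X^ℏ`, projects onto `X` and `X^ℏ`, and is the unique
quantum blob contained in `X × X^ℏ`. -/
theorem statement15 (n : ℕ) (ℏ : ℝ) (hℏ : 0 < ℏ)
    (A : Matrix (Fin n) (Fin n) ℝ) (hA : A.PosDef) :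
    polarDual ℏ {x : Fin n → ℝ | A.mulVec x ⬝ᵥ x ≤ ℏ}
        = {p : Fin n → ℝ | A⁻¹.mulVec p ⬝ᵥ p ≤ ℏ} ∧
    (∀ Asq : Matrix (Fin n) (Fin n) ℝ, Asq.PosDef → Asq * Asq = A →
      IsSymplectic (Matrix.fromBlocks Asq⁻¹ 0 0 Asq) ∧
      {z : (Fin n ⊕ Fin n) → ℝ |
          A.mulVec (z ∘ Sum.inl) ⬝ᵥ (z ∘ Sum.inl)
            + A⁻¹.mulVec (z ∘ Sum.inr) ⬝ᵥ (z ∘ Sum.inr) ≤ ℏ}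
        = (Matrix.fromBlocks Asq⁻¹ 0 0 Asq).mulVec '' ballPhase n (Real.sqrt ℏ)) ∧
    {z : (Fin n ⊕ Fin n) → ℝ |
        A.mulVec (z ∘ Sum.inl) ⬝ᵥ (z ∘ Sum.inl)
          + A⁻¹.mulVec (z ∘ Sum.inr) ⬝ᵥ (z ∘ Sum.inr) ≤ ℏ}
      ⊆ {z | A.mulVec (z ∘ Sum.inl) ⬝ᵥ (z ∘ Sum.inl) ≤ ℏ
              ∧ A⁻¹.mulVec (z ∘ Sum.inr) ⬝ᵥ (z ∘ Sum.inr) ≤ ℏ} ∧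
    (fun z : (Fin n ⊕ Fin n) → ℝ => z ∘ Sum.inl) ''
        {z : (Fin n ⊕ Fin n) → ℝ |
          A.mulVec (z ∘ Sum.inl) ⬝ᵥ (z ∘ Sum.inl)
            + A⁻¹.mulVec (z ∘ Sum.inr) ⬝ᵥ (z ∘ Sum.inr) ≤ ℏ}
      = {x : Fin n → ℝ | A.mulVec x ⬝ᵥ x ≤ ℏ} ∧
    (fun z : (Fin n ⊕ Fin n) → ℝ => z ∘ Sum.inr) ''
        {z : (Fin n ⊕ Fin n) → ℝ |
          A.mulVec (z ∘ Sum.inl) ⬝ᵥ (z ∘ Sum.inl)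
            + A⁻¹.mulVec (z ∘ Sum.inr) ⬝ᵥ (z ∘ Sum.inr) ≤ ℏ}
      = {p : Fin n → ℝ | A⁻¹.mulVec p ⬝ᵥ p ≤ ℏ} ∧
    (∀ S : Matrix (Fin n ⊕ Fin n) (Fin n ⊕ Fin n) ℝ, IsSymplectic S →
      S.mulVec '' ballPhase n (Real.sqrt ℏ)
          ⊆ {z | A.mulVec (z ∘ Sum.inl) ⬝ᵥ (z ∘ Sum.inl) ≤ ℏ
                  ∧ A⁻¹.mulVec (z ∘ Sum.inr) ⬝ᵥ (z ∘ Sum.inr) ≤ ℏ} →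
      S.mulVec '' ballPhase n (Real.sqrt ℏ)
        = {z : (Fin n ⊕ Fin n) → ℝ |
            A.mulVec (z ∘ Sum.inl) ⬝ᵥ (z ∘ Sum.inl)
              + A⁻¹.mulVec (z ∘ Sum.inr) ⬝ᵥ (z ∘ Sum.inr) ≤ ℏ}) := by
  have hAd : IsUnit A.det := hA.det_pos.ne'.isUnit
  have hAAinv : A * A⁻¹ = 1 := Matrix.mul_nonsing_inv A hAd
  have hAinvA : A⁻¹ * A = 1 := Matrix.nonsing_inv_mul A hAd
  have hAsym : Aᵀ = A := by
    rw [← Matrix.conjTranspose_eq_transpose_of_trivial]; exact hA.1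
  have hAinvsym : A⁻¹ᵀ = A⁻¹ := by rw [Matrix.transpose_nonsing_inv, hAsym]
  have hApos : ∀ v, 0 ≤ A *ᵥ v ⬝ᵥ v := by
    intro v
    have h := hA.posSemidef.dotProduct_mulVec_nonneg v
    rwa [star_trivial, dotProduct_comm] at h
  have hAinvpos : ∀ v, 0 ≤ A⁻¹ *ᵥ v ⬝ᵥ v := by
    intro v
    have h := (hA.inv).posSemidef.dotProduct_mulVec_nonneg v
    rwa [star_trivial, dotProduct_comm] at h
  have hAiA : ∀ v, A *ᵥ (A⁻¹ *ᵥ v) = v := fun v => by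
    rw [Matrix.mulVec_mulVec, hAAinv, Matrix.one_mulVec]
  have hAAi : ∀ v, A⁻¹ *ᵥ (A *ᵥ v) = v := fun v => by
    rw [Matrix.mulVec_mulVec, hAinvA, Matrix.one_mulVec]
  refine ⟨?_, ?_, ?_, ?_, ?_, ?_⟩
  -- Part 1 : polar dual
  · ext p
    simp only [polarDual, Set.mem_setOf_eq]
    constructor
    · intro hp
      by_cases ht : A⁻¹ *ᵥ p ⬝ᵥ p ≤ 0
      · linarith
      push_neg at ht
      set t := A⁻¹ *ᵥ p ⬝ᵥ p with htdef
      set c := Real.sqrt (ℏ / t) with hcdef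
      have hc0 : 0 ≤ c := Real.sqrt_nonneg _
      have hc2 : c ^ 2 * t = ℏ := by
        rw [hcdef, Real.sq_sqrt (by positivity), div_mul_cancel₀ _ ht.ne']
      have hx : A *ᵥ (c • (A⁻¹ *ᵥ p)) ⬝ᵥ (c • (A⁻¹ *ᵥ p)) ≤ ℏ := by
        rw [Matrix.mulVec_smul, hAiA, smul_dotProduct, dotProduct_smul, smul_eq_mul,
          smul_eq_mul, dotProduct_comm p (A⁻¹ *ᵥ p)]
        nlinarith [hc2]
      have hple := hp _ hx
      rw [dotProduct_smul, smul_eq_mul, dotProduct_comm p (A⁻¹ *ᵥ p)] at hple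
      nlinarith [mul_self_le_mul_self (mul_nonneg hc0 ht.le) hple, hc2, hℏ, ht]
    · intro hp x hx
      have hc := hcs hAsym hApos (A⁻¹ *ᵥ p) x
      rw [hAiA, dotProduct_comm p (A⁻¹ *ᵥ p)] at hc
      nlinarith [hc, mul_le_mul hp hx (hApos x) hℏ.le]
  -- Part 2 : quantum blob via square root
  · intro Asq hsq hsqA
    have hsd : IsUnit Asq.det := hsq.det_pos.ne'.isUnit
    have hs1 : Asq⁻¹ * Asq = 1 := Matrix.nonsing_inv_mul _ hsd
    have hs2 : Asq * Asq⁻¹ = 1 := Matrix.mul_nonsing_inv _ hsd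
    have hssym : Asqᵀ = Asq := by
      rw [← Matrix.conjTranspose_eq_transpose_of_trivial]; exact hsq.1
    have hsinvsym : Asq⁻¹ᵀ = Asq⁻¹ := by rw [Matrix.transpose_nonsing_inv, hssym]
    constructor
    · show (Matrix.fromBlocks Asq⁻¹ 0 0 Asq)ᵀ * stdJ n * Matrix.fromBlocks Asq⁻¹ 0 0 Asq
        = stdJ n
      simp [stdJ, Matrix.fromBlocks_transpose, Matrix.fromBlocks_multiply, hsinvsym, hssym,
        hs1, hs2, Matrix.mul_neg, Matrix.neg_mul]
    · have himg := himage_ball (S := Matrix.fromBlocks Asq⁻¹ 0 0 Asq)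
        (T := Matrix.fromBlocks Asq 0 0 Asq⁻¹)
        (by simp [Matrix.fromBlocks_multiply, hs1, hs2, Matrix.fromBlocks_one])
        (by simp [Matrix.fromBlocks_multiply, hs1, hs2, Matrix.fromBlocks_one])
        (Real.sqrt ℏ)
      rw [himg]
      ext z
      simp only [Set.mem_setOf_eq]
      rw [Real.sq_sqrt hℏ.le]
      have hT : (Matrix.fromBlocks Asq 0 0 Asq⁻¹) *ᵥ z
          = Sum.elim (Asq *ᵥ (z ∘ Sum.inl)) (Asq⁻¹ *ᵥ (z ∘ Sum.inr)) := by
        simp [Matrix.fromBlocks_mulVec]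
      rw [hT, hdot_split]
      simp only [Sum.elim_comp_inl, Sum.elim_comp_inr]
      rw [hsq_form Asq, hsq_form Asq⁻¹, hssym, hsinvsym, ← Matrix.mul_inv_rev, hsqA]
  -- Part 3 : contained in the product
  · intro z hz
    simp only [Set.mem_setOf_eq] at hz ⊢
    exact ⟨by linarith [hAinvpos (z ∘ Sum.inr)], by linarith [hApos (z ∘ Sum.inl)]⟩
  -- Part 4 : projection onto X
  · ext x
    simp only [Set.mem_image, Set.mem_setOf_eq]
    constructor
    · rintro ⟨z, hz, rfl⟩
      have := hAinvpos (z ∘ Sum.inr); linarith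
    · intro hx
      refine ⟨Sum.elim x (0 : Fin n → ℝ), ?_, by simp⟩
      simpa using hx
  -- Part 5 : projection onto the dual
  · ext p
    simp only [Set.mem_image, Set.mem_setOf_eq]
    constructor
    · rintro ⟨z, hz, rfl⟩
      have := hApos (z ∘ Sum.inl); linarith
    · intro hp
      refine ⟨Sum.elim (0 : Fin n → ℝ) p, ?_, by simp⟩
      simpa using hp
  -- Part 6 : uniqueness
  · intro S hS hsub
    have hS' : Sᵀ * stdJ n * S = stdJ n := hS
    have hdJ : (stdJ n).det ≠ 0 := by
      have h := congrArg Matrix.det (hJJt (n := n))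
      rw [Matrix.det_mul, Matrix.det_one] at h
      intro h0; rw [h0, zero_mul] at h; exact zero_ne_one h
    have hSS : S.det * S.det = 1 := by
      have h := congrArg Matrix.det hS'
      rw [Matrix.det_mul, Matrix.det_mul, Matrix.det_transpose] at h
      apply mul_right_cancel₀ hdJ
      rw [one_mul]; linear_combination h
    have hdet : IsUnit S.det := IsUnit.of_mul_eq_one _ hSS
    have hS1 : S⁻¹ * S = 1 := Matrix.nonsing_inv_mul S hdet
    have hS2 : S * S⁻¹ = 1 := Matrix.mul_nonsing_inv S hdet
    have hSinv : S⁻¹ = (stdJ n)ᵀ * Sᵀ * stdJ n := by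
      apply Matrix.inv_eq_left_inv
      calc ((stdJ n)ᵀ * Sᵀ * stdJ n) * S = (stdJ n)ᵀ * (Sᵀ * stdJ n * S) := by
            simp only [Matrix.mul_assoc]
        _ = 1 := by rw [hS', hJtJ]
    have hSinvT : S⁻¹ᵀ = (stdJ n)ᵀ * S * stdJ n := by
      rw [hSinv]
      simp only [Matrix.transpose_mul, Matrix.transpose_transpose, Matrix.mul_assoc]
    set M := S⁻¹ᵀ * S⁻¹ with hMdef
    set N := S * Sᵀ with hNdef
    have hMN : M * N = 1 := by
      rw [hMdef, hNdef]
      calc S⁻¹ᵀ * S⁻¹ * (S * Sᵀ) = S⁻¹ᵀ * (S⁻¹ * S) * Sᵀ := by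
            simp only [Matrix.mul_assoc]
        _ = 1 := by
            rw [hS1, Matrix.mul_one, ← Matrix.transpose_mul, hS2, Matrix.transpose_one]
    have hcan : ∀ X : Matrix (Fin n ⊕ Fin n) (Fin n ⊕ Fin n) ℝ,
        stdJ n * ((stdJ n)ᵀ * X) = X := by
      intro X; rw [← Matrix.mul_assoc, hJJt, Matrix.one_mul]
    have hNJMJ : stdJ n * M * (stdJ n)ᵀ = N := by
      rw [hMdef, hNdef, hSinvT, hSinv]
      simp only [Matrix.mul_assoc, hJJt, Matrix.mul_one, hcan]
    have qform : ∀ w, S⁻¹ *ᵥ w ⬝ᵥ (S⁻¹ *ᵥ w) = M *ᵥ w ⬝ᵥ w := fun w => by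
      rw [hsq_form S⁻¹ w, ← hMdef]
    have hE : S.mulVec '' ballPhase n (Real.sqrt ℏ) = {w | M *ᵥ w ⬝ᵥ w ≤ ℏ} := by
      rw [himage_ball hS1 hS2]
      ext w
      simp only [Set.mem_setOf_eq]
      rw [qform, Real.sq_sqrt hℏ.le]
    have hMpos : ∀ v, 0 ≤ M *ᵥ v ⬝ᵥ v := fun v => by
      rw [← qform]; exact hdot_self_nonneg _
    have hNsym : Nᵀ = N := by
      rw [hNdef, Matrix.transpose_mul, Matrix.transpose_transpose]
    have keyb : ∀ w, A *ᵥ (w ∘ Sum.inl) ⬝ᵥ (w ∘ Sum.inl) ≤ M *ᵥ w ⬝ᵥ w ∧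
        A⁻¹ *ᵥ (w ∘ Sum.inr) ⬝ᵥ (w ∘ Sum.inr) ≤ M *ᵥ w ⬝ᵥ w := by
      intro w
      rcases eq_or_lt_of_le (hMpos w) with h0 | hpos
      · have hw0 : w = 0 := by
          have h1 : S⁻¹ *ᵥ w ⬝ᵥ (S⁻¹ *ᵥ w) = 0 := by rw [qform, ← h0]
          have h2 : S⁻¹ *ᵥ w = 0 := dotProduct_self_eq_zero.mp h1
          have h3 := congrArg (S *ᵥ ·) h2
          simpa [Matrix.mulVec_mulVec, hS2] using h3
        subst hw0
        constructor <;>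
          simp [show ((0 : (Fin n ⊕ Fin n) → ℝ) ∘ Sum.inl) = 0 from rfl,
            show ((0 : (Fin n ⊕ Fin n) → ℝ) ∘ Sum.inr) = 0 from rfl]
      · set c := Real.sqrt (ℏ / (M *ᵥ w ⬝ᵥ w)) with hcdef
        have hcpos : 0 < c := Real.sqrt_pos.mpr (by positivity)
        have hc2 : c ^ 2 * (M *ᵥ w ⬝ᵥ w) = ℏ := by
          rw [hcdef, Real.sq_sqrt (by positivity), div_mul_cancel₀ _ hpos.ne']
        have hmem : c • w ∈ S.mulVec '' ballPhase n (Real.sqrt ℏ) := by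
          rw [hE]
          show M *ᵥ (c • w) ⬝ᵥ (c • w) ≤ ℏ
          rw [Matrix.mulVec_smul, smul_dotProduct, dotProduct_smul, smul_eq_mul, smul_eq_mul]
          nlinarith [hc2]
        obtain ⟨hb1, hb2⟩ := hsub hmem
        have hcompl : (c • w) ∘ Sum.inl = c • (w ∘ Sum.inl) := rfl
        have hcompr : (c • w) ∘ Sum.inr = c • (w ∘ Sum.inr) := rfl
        rw [hcompl, Matrix.mulVec_smul, smul_dotProduct, dotProduct_smul, smul_eq_mul,
          smul_eq_mul] at hb1
        rw [hcompr, Matrix.mulVec_smul, smul_dotProduct, dotProduct_smul, smul_eq_mul,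
          smul_eq_mul] at hb2
        constructor
        · nlinarith [hb1, hc2, mul_pos hcpos hcpos]
        · nlinarith [hb2, hc2, mul_pos hcpos hcpos]
    have hNz : ∀ z, N *ᵥ z ⬝ᵥ z = M *ᵥ ((stdJ n)ᵀ *ᵥ z) ⬝ᵥ ((stdJ n)ᵀ *ᵥ z) := by
      intro z
      rw [← hNJMJ, ← Matrix.mulVec_mulVec, ← Matrix.mulVec_mulVec, ← hdot_shift]
    have hNlow1 : ∀ z : (Fin n ⊕ Fin n) → ℝ,
        A⁻¹ *ᵥ (z ∘ Sum.inl) ⬝ᵥ (z ∘ Sum.inl) ≤ N *ᵥ z ⬝ᵥ z := by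
      intro z
      rw [hNz, hJt_mulVec]
      have h := (keyb (Sum.elim (-(z ∘ Sum.inr)) (z ∘ Sum.inl))).2
      simpa using h
    have hNlow2 : ∀ z : (Fin n ⊕ Fin n) → ℝ,
        A *ᵥ (z ∘ Sum.inr) ⬝ᵥ (z ∘ Sum.inr) ≤ N *ᵥ z ⬝ᵥ z := by
      intro z
      rw [hNz, hJt_mulVec]
      have h := (keyb (Sum.elim (-(z ∘ Sum.inr)) (z ∘ Sum.inl))).1
      simpa [Matrix.mulVec_neg] using h
    -- rigidity on the x block
    have hNx : ∀ x : Fin n → ℝ, N *ᵥ (Sum.elim x (0 : Fin n → ℝ))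
        = Sum.elim (A⁻¹ *ᵥ x) (0 : Fin n → ℝ) := by
      intro x
      set z := Sum.elim x (0 : Fin n → ℝ) with hzdef
      have hzl : z ∘ Sum.inl = x := Sum.elim_comp_inl _ _
      have hzr : z ∘ Sum.inr = 0 := Sum.elim_comp_inr _ _
      have hMw : M *ᵥ (N *ᵥ z) = z := by
        rw [Matrix.mulVec_mulVec, hMN, Matrix.one_mulVec]
      have ha : A⁻¹ *ᵥ x ⬝ᵥ x ≤ N *ᵥ z ⬝ᵥ z := by
        have h := hNlow1 z; rwa [hzl] at h
      have hb : A *ᵥ ((N *ᵥ z) ∘ Sum.inl) ⬝ᵥ ((N *ᵥ z) ∘ Sum.inl) ≤ N *ᵥ z ⬝ᵥ z := by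
        have h := (keyb (N *ᵥ z)).1
        rwa [hMw, dotProduct_comm z (N *ᵥ z)] at h
      have hs2' : N *ᵥ z ⬝ᵥ z = ((N *ᵥ z) ∘ Sum.inl) ⬝ᵥ x := by
        calc N *ᵥ z ⬝ᵥ z
            = ((N *ᵥ z) ∘ Sum.inl) ⬝ᵥ (z ∘ Sum.inl)
              + ((N *ᵥ z) ∘ Sum.inr) ⬝ᵥ (z ∘ Sum.inr) := hdot_split _ _
          _ = ((N *ᵥ z) ∘ Sum.inl) ⬝ᵥ x := by rw [hzl, hzr]; simp
      have hc := hcs hAsym hApos (A⁻¹ *ᵥ x) ((N *ᵥ z) ∘ Sum.inl)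
      rw [hAiA, dotProduct_comm x (A⁻¹ *ᵥ x),
        dotProduct_comm x ((N *ᵥ z) ∘ Sum.inl)] at hc
      have hseq : N *ᵥ z ⬝ᵥ z = A⁻¹ *ᵥ x ⬝ᵥ x := by
        apply hrig (hAinvpos x) (hApos _) ha hb
        rw [hs2']; exact hc
      set E1 := Matrix.fromBlocks A⁻¹ 0 0 (0 : Matrix (Fin n) (Fin n) ℝ) with hE1def
      have hE1v : ∀ v : (Fin n ⊕ Fin n) → ℝ,
          E1 *ᵥ v = Sum.elim (A⁻¹ *ᵥ (v ∘ Sum.inl)) (0 : Fin n → ℝ) := by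
        intro v; rw [hE1def]; simp [Matrix.fromBlocks_mulVec]
      have hE1q : ∀ v, E1 *ᵥ v ⬝ᵥ v = A⁻¹ *ᵥ (v ∘ Sum.inl) ⬝ᵥ (v ∘ Sum.inl) := by
        intro v; rw [hE1v, hdot_split]; simp
      have hGsym : (N - E1)ᵀ = N - E1 := by
        rw [Matrix.transpose_sub, hNsym, hE1def]
        congr 1
        simp [Matrix.fromBlocks_transpose, hAinvsym]
      have hGpos : ∀ v, 0 ≤ (N - E1) *ᵥ v ⬝ᵥ v := by
        intro v; rw [Matrix.sub_mulVec, sub_dotProduct, hE1q]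
        have := hNlow1 v; linarith
      have hGz : (N - E1) *ᵥ z ⬝ᵥ z = 0 := by
        rw [Matrix.sub_mulVec, sub_dotProduct, hE1q, hzl]
        linarith [hseq]
      have hker' := hker hGsym hGpos hGz
      rw [Matrix.sub_mulVec] at hker'
      have hfin : N *ᵥ z = E1 *ᵥ z := sub_eq_zero.mp hker'
      rw [hfin, hE1v, hzl]
    -- rigidity on the p block
    have hNp : ∀ p : Fin n → ℝ, N *ᵥ (Sum.elim (0 : Fin n → ℝ) p)
        = Sum.elim (0 : Fin n → ℝ) (A *ᵥ p) := by
      intro p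
      set z := Sum.elim (0 : Fin n → ℝ) p with hzdef
      have hzl : z ∘ Sum.inl = 0 := Sum.elim_comp_inl _ _
      have hzr : z ∘ Sum.inr = p := Sum.elim_comp_inr _ _
      have hMw : M *ᵥ (N *ᵥ z) = z := by
        rw [Matrix.mulVec_mulVec, hMN, Matrix.one_mulVec]
      have ha : A *ᵥ p ⬝ᵥ p ≤ N *ᵥ z ⬝ᵥ z := by
        have h := hNlow2 z; rwa [hzr] at h
      have hb : A⁻¹ *ᵥ ((N *ᵥ z) ∘ Sum.inr) ⬝ᵥ ((N *ᵥ z) ∘ Sum.inr) ≤ N *ᵥ z ⬝ᵥ z := by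
        have h := (keyb (N *ᵥ z)).2
        rwa [hMw, dotProduct_comm z (N *ᵥ z)] at h
      have hs2' : N *ᵥ z ⬝ᵥ z = ((N *ᵥ z) ∘ Sum.inr) ⬝ᵥ p := by
        calc N *ᵥ z ⬝ᵥ z
            = ((N *ᵥ z) ∘ Sum.inl) ⬝ᵥ (z ∘ Sum.inl)
              + ((N *ᵥ z) ∘ Sum.inr) ⬝ᵥ (z ∘ Sum.inr) := hdot_split _ _
          _ = ((N *ᵥ z) ∘ Sum.inr) ⬝ᵥ p := by rw [hzl, hzr]; simp
      have hc := hcs hAinvsym hAinvpos (A *ᵥ p) ((N *ᵥ z) ∘ Sum.inr)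
      rw [hAAi, dotProduct_comm p (A *ᵥ p),
        dotProduct_comm p ((N *ᵥ z) ∘ Sum.inr)] at hc
      have hseq : N *ᵥ z ⬝ᵥ z = A *ᵥ p ⬝ᵥ p := by
        apply hrig (hApos p) (hAinvpos _) ha hb
        rw [hs2']; exact hc
      set E2 := Matrix.fromBlocks (0 : Matrix (Fin n) (Fin n) ℝ) 0 0 A with hE2def
      have hE2v : ∀ v : (Fin n ⊕ Fin n) → ℝ,
          E2 *ᵥ v = Sum.elim (0 : Fin n → ℝ) (A *ᵥ (v ∘ Sum.inr)) := by
        intro v; rw [hE2def]; simp [Matrix.fromBlocks_mulVec]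
      have hE2q : ∀ v, E2 *ᵥ v ⬝ᵥ v = A *ᵥ (v ∘ Sum.inr) ⬝ᵥ (v ∘ Sum.inr) := by
        intro v; rw [hE2v, hdot_split]; simp
      have hGsym : (N - E2)ᵀ = N - E2 := by
        rw [Matrix.transpose_sub, hNsym, hE2def]
        congr 1
        simp [Matrix.fromBlocks_transpose, hAsym]
      have hGpos : ∀ v, 0 ≤ (N - E2) *ᵥ v ⬝ᵥ v := by
        intro v; rw [Matrix.sub_mulVec, sub_dotProduct, hE2q]
        have := hNlow2 v; linarith
      have hGz : (N - E2) *ᵥ z ⬝ᵥ z = 0 := by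
        rw [Matrix.sub_mulVec, sub_dotProduct, hE2q, hzr]
        linarith [hseq]
      have hker' := hker hGsym hGpos hGz
      rw [Matrix.sub_mulVec] at hker'
      have hfin : N *ᵥ z = E2 *ᵥ z := sub_eq_zero.mp hker'
      rw [hfin, hE2v, hzr]
    have hNall : ∀ v, N *ᵥ v = (Matrix.fromBlocks A⁻¹ 0 0 A) *ᵥ v := by
      intro v
      conv_lhs => rw [hsplit v]
      rw [Matrix.mulVec_add, hNx (v ∘ Sum.inl), hNp (v ∘ Sum.inr), Matrix.fromBlocks_mulVec]
      funext i
      cases i <;> simp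
    have hEM0 : Matrix.fromBlocks A⁻¹ 0 0 A * Matrix.fromBlocks A 0 0 A⁻¹ = 1 := by
      simp [Matrix.fromBlocks_multiply, hAinvA, hAAinv, Matrix.fromBlocks_one]
    have hMM0 : ∀ w, M *ᵥ w = (Matrix.fromBlocks A 0 0 A⁻¹) *ᵥ w := by
      intro w
      have hww : (Matrix.fromBlocks A⁻¹ 0 0 A) *ᵥ ((Matrix.fromBlocks A 0 0 A⁻¹) *ᵥ w) = w := by
        rw [Matrix.mulVec_mulVec, hEM0, Matrix.one_mulVec]
      calc M *ᵥ w
          = M *ᵥ ((Matrix.fromBlocks A⁻¹ 0 0 A) *ᵥ ((Matrix.fromBlocks A 0 0 A⁻¹) *ᵥ w)) := by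
            rw [hww]
        _ = M *ᵥ (N *ᵥ ((Matrix.fromBlocks A 0 0 A⁻¹) *ᵥ w)) := by rw [← hNall]
        _ = (Matrix.fromBlocks A 0 0 A⁻¹) *ᵥ w := by
            rw [Matrix.mulVec_mulVec, hMN, Matrix.one_mulVec]
    rw [hE]
    ext w
    simp only [Set.mem_setOf_eq]
    rw [hMM0 w, Matrix.fromBlocks_mulVec, hdot_split]
    simp
end
end
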